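/- arXiv:2405.03687 — 12 statements merged into one kernel-verified Lean document; each statement's English description precedes it below -/
import Mathlib

section
/- Let n ≥ 2 and let k be an integer with 1 ≤ k ≤ n−1. Let p, p' ∈ [0,1)^n be residue vectors each summing to k, and let T₁, T₂ ⊆ {1,…,n} be (possibly overlapping) sets of size k such that p'_i ≥ p_i for all i ∈ T₁ and p'_i ≤ p_i for all i ∈ T₂. Then at least one of the following holds: the probability that Sampford rounding selects T₁ under p' is at least its probability under p, or the probability that Sampford rounding selects T₂ under p' is at most its probability under p. That is, f_{p'}(T₁)/∑_{|A|=k} f_{p'}(A) ≥ f_p(T₁)/∑_{|A|=k} f_p(A), or f_{p'}(T₂)/∑_{|A|=k} f_{p'}(A) ≤ f_p(T₂)/∑_{|A|=k} f_p(A). -/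
open Finset

/-- Sampford's (unnormalized) probability mass:
`f_p(A) = (∑_{i∈A}(1−p_i)) · ∏_{j∈A} p_j · ∏_{j∉A}(1−p_j)`. -/
noncomputable def sampf {n : ℕ} (p : Fin n → ℝ) (A : Finset (Fin n)) : ℝ :=
  (∑ i ∈ A, (1 - p i)) * (∏ j ∈ A, p j) * ∏ j ∈ Aᶜ, (1 - p j)

lemma prod_if_mem {n : ℕ} (T : Finset (Fin n)) (f g : Fin n → ℝ) :
    (∏ u, (if u ∈ T then f u else g u)) = (∏ u ∈ T, f u) * ∏ u ∈ Tᶜ, g u := by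
  rw [← Finset.prod_mul_prod_compl T (fun u => if u ∈ T then f u else g u)]
  congr 1
  · exact Finset.prod_congr rfl fun u hu => if_pos hu
  · exact Finset.prod_congr rfl fun u hu => if_neg (Finset.mem_compl.mp hu)

lemma prod_if_eq {n : ℕ} [NeZero n] (i : Fin n) (c : ℝ) :
    (∏ u, (if u = i then c else 1)) = c := by
  simp [Finset.prod_ite_eq' Finset.univ i (fun _ => c)]

lemma sampf_nonneg {n : ℕ} (p : Fin n → ℝ) (hp : ∀ i, 0 ≤ p i ∧ p i < 1)
    (A : Finset (Fin n)) : 0 ≤ sampf p A := by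
  unfold sampf
  have h1 : 0 ≤ ∑ i ∈ A, (1 - p i) :=
    Finset.sum_nonneg fun i _ => by linarith [(hp i).2]
  have h2 : 0 ≤ ∏ j ∈ A, p j := Finset.prod_nonneg fun j _ => (hp j).1
  have h3 : 0 ≤ ∏ j ∈ Aᶜ, (1 - p j) :=
    Finset.prod_nonneg fun j _ => by linarith [(hp j).2]
  positivity

lemma Z_pos {n k : ℕ} (hk1 : 1 ≤ k) (hkn : k ≤ n - 1) (p : Fin n → ℝ)
    (hp : ∀ i, 0 ≤ p i ∧ p i < 1) (hsum : ∑ i, p i = (k : ℝ)) :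
    0 < ∑ A ∈ powersetCard k (univ : Finset (Fin n)), sampf p A := by
  -- there are at least k indices with positive residue
  classical
  set S : Finset (Fin n) := Finset.univ.filter (fun i => 0 < p i) with hS
  have hcard : k ≤ S.card := by
    by_contra h
    push_neg at h
    have hzero : ∀ i ∈ Sᶜ, p i = 0 := by
      intro i hi
      have : ¬ 0 < p i := by
        simp only [hS, Finset.mem_compl, Finset.mem_filter, Finset.mem_univ, true_and] at hi
        exact hi
      linarith [(hp i).1]
    have hsplit : ∑ i, p i = ∑ i ∈ S, p i := by
      rw [← Finset.sum_add_sum_compl S p, Finset.sum_eq_zero hzero, add_zero]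
    have hSne : S.Nonempty := by
      rcases Finset.eq_empty_or_nonempty S with he | hne
      · rw [hsplit, he, Finset.sum_empty] at hsum
        have : (1:ℝ) ≤ (k:ℝ) := by exact_mod_cast hk1
        linarith
      · exact hne
    have hlt : ∑ i ∈ S, p i < S.card := by
      have := Finset.sum_lt_sum_of_nonempty hSne (f := p) (g := fun _ => (1:ℝ))
        (fun i _ => (hp i).2)
      simpa using this
    have hltr : (k:ℝ) < S.card := by rw [hsplit] at hsum; linarith
    have : k < S.card := by exact_mod_cast hltr
    omega
  obtain ⟨A, hAS, hAcard⟩ := Finset.exists_subset_card_eq hcard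
  have hApos : 0 < sampf p A := by
    have hAne : A.Nonempty := Finset.card_pos.mp (by omega)
    unfold sampf
    have h1 : 0 < ∑ i ∈ A, (1 - p i) :=
      Finset.sum_pos (fun i _ => by linarith [(hp i).2]) hAne
    have h2 : 0 < ∏ j ∈ A, p j := by
      apply Finset.prod_pos
      intro j hj
      have := hAS hj
      simp only [hS, Finset.mem_filter] at this
      exact this.2
    have h3 : 0 < ∏ j ∈ Aᶜ, (1 - p j) :=
      Finset.prod_pos fun j _ => by linarith [(hp j).2]
    positivity
  have hAmem : A ∈ powersetCard k (univ : Finset (Fin n)) := by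
    rw [Finset.mem_powersetCard]
    exact ⟨Finset.subset_univ A, hAcard⟩
  calc 0 < sampf p A := hApos
    _ ≤ ∑ A ∈ powersetCard k (univ : Finset (Fin n)), sampf p A :=
      Finset.single_le_sum (fun B _ => sampf_nonneg p hp B) hAmem

lemma sampf_key {n : ℕ} [NeZero n] (p p' : Fin n → ℝ)
    (hp : ∀ i, 0 ≤ p i ∧ p i < 1) (hp' : ∀ i, 0 ≤ p' i ∧ p' i < 1)
    (T₁ T₂ : Finset (Fin n))
    (hup : ∀ i ∈ T₁, p i ≤ p' i) (hdown : ∀ i ∈ T₂, p' i ≤ p i) :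
    sampf p T₁ * sampf p' T₂ ≤ sampf p' T₁ * sampf p T₂ := by
  classical
  set C : ℝ := ((∏ j ∈ T₁, p j) * ∏ j ∈ T₁ᶜ, (1 - p j)) *
      ((∏ j ∈ T₂, p' j) * ∏ j ∈ T₂ᶜ, (1 - p' j)) with hC
  set C' : ℝ := ((∏ j ∈ T₁, p' j) * ∏ j ∈ T₁ᶜ, (1 - p' j)) *
      ((∏ j ∈ T₂, p j) * ∏ j ∈ T₂ᶜ, (1 - p j)) with hC'
  have expand : ∀ (q q' : Fin n → ℝ),
      sampf q T₁ * sampf q' T₂ = ∑ i ∈ T₁, ∑ j ∈ T₂, (1 - q i) * (1 - q' j) *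
        (((∏ u ∈ T₁, q u) * ∏ u ∈ T₁ᶜ, (1 - q u)) *
         ((∏ u ∈ T₂, q' u) * ∏ u ∈ T₂ᶜ, (1 - q' u))) := by
    intro q q'
    unfold sampf
    rw [show ((∑ i ∈ T₁, (1 - q i)) * (∏ j ∈ T₁, q j) * ∏ j ∈ T₁ᶜ, (1 - q j)) *
        ((∑ i ∈ T₂, (1 - q' i)) * (∏ j ∈ T₂, q' j) * ∏ j ∈ T₂ᶜ, (1 - q' j)) =
        ((∑ i ∈ T₁, (1 - q i)) * (∑ i ∈ T₂, (1 - q' i))) *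
        (((∏ u ∈ T₁, q u) * ∏ u ∈ T₁ᶜ, (1 - q u)) *
         ((∏ u ∈ T₂, q' u) * ∏ u ∈ T₂ᶜ, (1 - q' u))) from by ring]
    rw [Finset.sum_mul_sum, Finset.sum_mul]
    exact Finset.sum_congr rfl fun i _ => by rw [Finset.sum_mul]
  rw [expand p p', expand p' p]
  apply Finset.sum_le_sum
  intro i hi
  apply Finset.sum_le_sum
  intro j hj
  -- termwise inequality via factorwise product comparison
  set F : Fin n → ℝ := fun u =>
    (if u ∈ T₁ then p u else (1 - p u)) * (if u ∈ T₂ then p' u else (1 - p' u)) *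
    (if u = i then (1 - p i) else 1) * (if u = j then (1 - p' j) else 1) with hF
  set G : Fin n → ℝ := fun u =>
    (if u ∈ T₁ then p' u else (1 - p' u)) * (if u ∈ T₂ then p u else (1 - p u)) *
    (if u = i then (1 - p' i) else 1) * (if u = j then (1 - p j) else 1) with hG
  have hFprod : (∏ u, F u) = (1 - p i) * (1 - p' j) * C := by
    simp only [hF, Finset.prod_mul_distrib, prod_if_mem, prod_if_eq, hC]
    ring
  have hGprod : (∏ u, G u) = (1 - p' i) * (1 - p j) * C' := by
    simp only [hG, Finset.prod_mul_distrib, prod_if_mem, prod_if_eq, hC']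
    ring
  rw [← hFprod, ← hGprod]
  apply Finset.prod_le_prod
  · intro u _
    obtain ⟨ha0, ha1⟩ := hp u
    obtain ⟨hb0, hb1⟩ := hp' u
    obtain ⟨hc0, hc1⟩ := hp i
    obtain ⟨hd0, hd1⟩ := hp' j
    simp only [hF]
    have h1 : 0 ≤ (if u ∈ T₁ then p u else 1 - p u) := by
      split_ifs; exacts [ha0, by linarith]
    have h2 : 0 ≤ (if u ∈ T₂ then p' u else 1 - p' u) := by
      split_ifs; exacts [hb0, by linarith]
    have h3 : 0 ≤ (if u = i then 1 - p i else 1) := by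
      split_ifs; exacts [by linarith, zero_le_one]
    have h4 : 0 ≤ (if u = j then 1 - p' j else 1) := by
      split_ifs; exacts [by linarith, zero_le_one]
    exact mul_nonneg (mul_nonneg (mul_nonneg h1 h2) h3) h4
  · intro u _
    obtain ⟨ha0, ha1⟩ := hp u
    obtain ⟨hb0, hb1⟩ := hp' u
    simp only [hF, hG]
    by_cases h1 : u ∈ T₁ <;> by_cases h2 : u ∈ T₂
    · -- u ∈ T₁ ∩ T₂ : p u = p' u
      have heq : p u = p' u := le_antisymm (hup u h1) (hdown u h2)
      have heqi : u = i → p i = p' i := fun h => h ▸ heq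
      have heqj : u = j → p j = p' j := fun h => h ▸ heq
      simp only [if_pos h1, if_pos h2]
      split_ifs with hui huj huj
      · rw [heq, heqi hui, heqj huj]
      · rw [heq, heqi hui]
      · rw [heq, heqj huj]
      · rw [heq]
    · -- u ∈ T₁ \ T₂ : p u ≤ p' u, u ≠ j
      have hle : p u ≤ p' u := hup u h1
      have huj : u ≠ j := fun h => h2 (h ▸ hj)
      simp only [if_pos h1, if_neg h2, if_neg huj, mul_one]
      split_ifs with hui
      · subst hui
        nlinarith [mul_nonneg (mul_nonneg (sub_nonneg.2 hle)
          (by linarith : (0:ℝ) ≤ 1 - p u)) (by linarith : (0:ℝ) ≤ 1 - p' u)]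
      · nlinarith
    · -- u ∈ T₂ \ T₁ : p' u ≤ p u, u ≠ i
      have hle : p' u ≤ p u := hdown u h2
      have hui : u ≠ i := fun h => h1 (h ▸ hi)
      simp only [if_neg h1, if_pos h2, if_neg hui, mul_one]
      split_ifs with huj
      · subst huj
        nlinarith [mul_nonneg (mul_nonneg (sub_nonneg.2 hle)
          (by linarith : (0:ℝ) ≤ 1 - p u)) (by linarith : (0:ℝ) ≤ 1 - p' u)]
      · nlinarith
    · -- u outside both
      have hui : u ≠ i := fun h => h1 (h ▸ hi)
      have huj : u ≠ j := fun h => h2 (h ▸ hj)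
      simp only [if_neg h1, if_neg h2, if_neg hui, if_neg huj, mul_one]
      ring_nf
      exact le_refl _

/-- Sampford rounding satisfies pairwise selection monotonicity. -/
theorem sampford_pairwise_selection_monotone {n k : ℕ} (hn : 2 ≤ n) (hk1 : 1 ≤ k)
    (hkn : k ≤ n - 1) (p p' : Fin n → ℝ)
    (hp : ∀ i, 0 ≤ p i ∧ p i < 1) (hp' : ∀ i, 0 ≤ p' i ∧ p' i < 1)
    (hsum : ∑ i, p i = (k : ℝ)) (hsum' : ∑ i, p' i = (k : ℝ))
    (T₁ T₂ : Finset (Fin n)) (hT₁ : T₁.card = k) (hT₂ : T₂.card = k)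
    (hup : ∀ i ∈ T₁, p i ≤ p' i) (hdown : ∀ i ∈ T₂, p' i ≤ p i) :
    sampf p T₁ / ∑ A ∈ powersetCard k (univ : Finset (Fin n)), sampf p A ≤
        sampf p' T₁ / ∑ A ∈ powersetCard k (univ : Finset (Fin n)), sampf p' A ∨
      sampf p' T₂ / ∑ A ∈ powersetCard k (univ : Finset (Fin n)), sampf p' A ≤
        sampf p T₂ / ∑ A ∈ powersetCard k (univ : Finset (Fin n)), sampf p A := by
  have : NeZero n := ⟨by omega⟩
  set Z := ∑ A ∈ powersetCard k (univ : Finset (Fin n)), sampf p A with hZdef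
  set Z' := ∑ A ∈ powersetCard k (univ : Finset (Fin n)), sampf p' A with hZ'def
  have hZ : 0 < Z := Z_pos hk1 hkn p hp hsum
  have hZ' : 0 < Z' := Z_pos hk1 hkn p' hp' hsum'
  have hkey : sampf p T₁ * sampf p' T₂ ≤ sampf p' T₁ * sampf p T₂ :=
    sampf_key p p' hp hp' T₁ T₂ hup hdown
  rcases le_or_gt (sampf p T₁ / Z) (sampf p' T₁ / Z') with h | h
  · exact Or.inl h
  · right
    rw [div_lt_div_iff₀ hZ' hZ] at h
    rw [div_le_div_iff₀ hZ' hZ]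
    -- sampf p T₁ > 0 since sampf p T₁ / Z > sampf p' T₁ / Z' ≥ 0
    have hn1' : 0 ≤ sampf p' T₁ := sampf_nonneg p' hp' T₁
    have hn2 : 0 ≤ sampf p T₂ := sampf_nonneg p hp T₂
    have hn2' : 0 ≤ sampf p' T₂ := sampf_nonneg p' hp' T₂
    have hpos : 0 < sampf p T₁ := by nlinarith
    -- (sampf p' T₂ * Z) * sampf p T₁ ≤ (sampf p T₂ * Z') * sampf p T₁
    have step : (sampf p' T₂ * Z) * sampf p T₁ ≤ (sampf p T₂ * Z') * sampf p T₁ := by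
      calc (sampf p' T₂ * Z) * sampf p T₁ = (sampf p T₁ * sampf p' T₂) * Z := by ring
        _ ≤ (sampf p' T₁ * sampf p T₂) * Z := by
            exact mul_le_mul_of_nonneg_right hkey hZ.le
        _ = (sampf p' T₁ * Z) * sampf p T₂ := by ring
        _ ≤ (sampf p T₁ * Z') * sampf p T₂ := mul_le_mul_of_nonneg_right h.le hn2
        _ = (sampf p T₂ * Z') * sampf p T₁ := by ring
    exact le_of_mul_le_mul_right step hpos
end

section
/- Let p ∈ [0,1)^n sum to an integer k, and let ℓ be an integer with 0 ≤ ℓ ≤ n−1. Then ∑_{A⊆{1,…,n}, |A|=ℓ+1} f_p(A) − ∑_{A⊆{1,…,n}, |A|=ℓ} f_p(A) = (k − ℓ) · ∑_{A⊆{1,…,n}, |A|=ℓ} ∏_{j∈A} p_j ∏_{j∉A} (1−p_j). -/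
open Finset

/-- Lemma 3.6 (auxiliary lemma): for `0 ≤ ℓ ≤ n−1`,
`∑_{|A|=ℓ+1} f(A) − ∑_{|A|=ℓ} f(A) = (k−ℓ) ∑_{|A|=ℓ} ∏_{j∈A} p_j ∏_{j∉A}(1−p_j)`. -/
theorem sampford_magic_sub {n k ℓ : ℕ} (p : Fin n → ℝ)
    (hp : ∀ i, 0 ≤ p i ∧ p i < 1) (hsum : ∑ i, p i = (k : ℝ)) (hl : ℓ ≤ n - 1) :
    (∑ A ∈ powersetCard (ℓ + 1) (univ : Finset (Fin n)), sampf p A) -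
        ∑ A ∈ powersetCard ℓ (univ : Finset (Fin n)), sampf p A =
      ((k : ℝ) - ℓ) *
        ∑ A ∈ powersetCard ℓ (univ : Finset (Fin n)),
          (∏ j ∈ A, p j) * ∏ j ∈ Aᶜ, (1 - p j) := by
  set g : Finset (Fin n) → ℝ := fun A => (∏ j ∈ A, p j) * ∏ j ∈ Aᶜ, (1 - p j) with hg
  -- key pointwise identity
  have herase : ∀ (A : Finset (Fin n)) (i : Fin n), i ∈ A →
      (1 - p i) * g A = p i * g (A.erase i) := by
    intro A i hi
    have h1 : ∏ j ∈ A, p j = p i * ∏ j ∈ A.erase i, p j :=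
      (Finset.mul_prod_erase A p hi).symm
    have h2 : ∏ j ∈ (A.erase i)ᶜ, (1 - p j) = (1 - p i) * ∏ j ∈ Aᶜ, (1 - p j) := by
      have : (A.erase i)ᶜ = insert i Aᶜ := Finset.compl_erase
      rw [this, Finset.prod_insert (by simp [hi])]
    simp only [hg, h1, h2]; ring
  -- first sum
  have hA : ∑ A ∈ powersetCard (ℓ + 1) (univ : Finset (Fin n)), sampf p A
      = ∑ B ∈ powersetCard ℓ (univ : Finset (Fin n)), ((k : ℝ) - ∑ i ∈ B, p i) * g B := by
    have step1 : ∀ A ∈ powersetCard (ℓ + 1) (univ : Finset (Fin n)),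
        sampf p A = ∑ i ∈ A, p i * g (A.erase i) := by
      intro A _
      unfold sampf
      rw [mul_assoc, Finset.sum_mul]
      exact Finset.sum_congr rfl fun i hi => herase A i hi
    rw [Finset.sum_congr rfl step1]
    rw [Finset.sum_sigma']
    have step2 : ∑ B ∈ powersetCard ℓ (univ : Finset (Fin n)), ((k : ℝ) - ∑ i ∈ B, p i) * g B
        = ∑ B ∈ powersetCard ℓ (univ : Finset (Fin n)), ∑ i ∈ Bᶜ, p i * g B := by
      refine Finset.sum_congr rfl fun B _ => ?_
      rw [← Finset.sum_mul]
      congr 1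
      have := Finset.sum_add_sum_compl B p
      rw [hsum] at this
      linarith
    rw [step2, Finset.sum_sigma']
    refine Finset.sum_nbij' (fun x => ⟨x.1.erase x.2, x.2⟩) (fun x => ⟨insert x.2 x.1, x.2⟩)
      ?_ ?_ ?_ ?_ ?_
    · rintro ⟨A, i⟩ hx
      simp only [Finset.mem_sigma, Finset.mem_powersetCard] at hx ⊢
      obtain ⟨⟨-, hcard⟩, hi⟩ := hx
      refine ⟨⟨Finset.subset_univ _, ?_⟩, ?_⟩
      · rw [Finset.card_erase_of_mem hi, hcard]; rfl
      · simp
    · rintro ⟨B, i⟩ hx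
      simp only [Finset.mem_sigma, Finset.mem_powersetCard, Finset.mem_compl] at hx ⊢
      obtain ⟨⟨-, hcard⟩, hi⟩ := hx
      exact ⟨⟨Finset.subset_univ _, by rw [Finset.card_insert_of_notMem hi, hcard]⟩,
        Finset.mem_insert_self _ _⟩
    · rintro ⟨A, i⟩ hx
      simp only [Finset.mem_sigma] at hx
      simp [Finset.insert_erase hx.2]
    · rintro ⟨B, i⟩ hx
      simp only [Finset.mem_sigma, Finset.mem_compl] at hx
      simp [Finset.erase_insert hx.2]
    · rintro ⟨A, i⟩ _; rfl
  rw [hA]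
  have hB : ∑ A ∈ powersetCard ℓ (univ : Finset (Fin n)), sampf p A
      = ∑ B ∈ powersetCard ℓ (univ : Finset (Fin n)), ((ℓ : ℝ) - ∑ i ∈ B, p i) * g B := by
    refine Finset.sum_congr rfl fun B hB => ?_
    simp only [Finset.mem_powersetCard] at hB
    unfold sampf
    rw [mul_assoc]
    congr 1
    rw [Finset.sum_sub_distrib, Finset.sum_const, hB.2]
    simp
  rw [hB, ← Finset.sum_sub_distrib, Finset.mul_sum]
  exact Finset.sum_congr rfl fun B _ => by ring
end

section
/- Let p ∈ [0,1)^n sum to an integer k ≥ 0. Then ∑_{A⊆{1,…,n}, |A|=k} f_p(A) = ∑_{A⊆{1,…,n}, |A|<k} (k − |A|) · ∏_{i∈A} p_i ∏_{i∉A} (1−p_i). (In probabilistic terms: the Sampford normalizing constant equals E[1{|B| < k}·(k − |B|)] for the Poisson trial B with success probabilities p.) -/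
open Finset

/-- The Poisson-trial weight of a subset. -/
noncomputable def sampw {n : ℕ} (p : Fin n → ℝ) (A : Finset (Fin n)) : ℝ :=
  (∏ j ∈ A, p j) * ∏ j ∈ Aᶜ, (1 - p j)

lemma sampw_key {n : ℕ} (p : Fin n → ℝ) {A : Finset (Fin n)} {i : Fin n} (hi : i ∈ A) :
    (1 - p i) * sampw p A = p i * sampw p (A.erase i) := by
  unfold sampw
  have hcompl : (A.erase i)ᶜ = insert i Aᶜ := by
    ext j
    simp [Finset.mem_erase, or_iff_not_imp_left]
  rw [← Finset.prod_erase_mul A p hi, hcompl,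
    Finset.prod_insert (by simp [hi])]
  ring

lemma sampw_swap {n : ℕ} (p : Fin n → ℝ) (m : ℕ) :
    ∑ A ∈ powersetCard (m+1) (univ : Finset (Fin n)), ∑ i ∈ A, (1 - p i) * sampw p A
      = ∑ B ∈ powersetCard m (univ : Finset (Fin n)), ∑ i ∈ Bᶜ, p i * sampw p B := by
  rw [Finset.sum_sigma', Finset.sum_sigma']
  apply Finset.sum_nbij' (fun x => (⟨x.1.erase x.2, x.2⟩ : Σ B : Finset (Fin n), Fin n))
    (fun x => (⟨insert x.2 x.1, x.2⟩ : Σ A : Finset (Fin n), Fin n))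
  · rintro ⟨A, i⟩ hAi
    simp only [Finset.mem_sigma, Finset.mem_powersetCard_univ] at hAi ⊢
    exact ⟨by rw [Finset.card_erase_of_mem hAi.2, hAi.1]; rfl,
      by simp⟩
  · rintro ⟨B, i⟩ hBi
    simp only [Finset.mem_sigma, Finset.mem_powersetCard_univ, Finset.mem_compl] at hBi ⊢
    exact ⟨by rw [Finset.card_insert_of_notMem hBi.2, hBi.1], Finset.mem_insert_self _ _⟩
  · rintro ⟨A, i⟩ hAi
    simp only [Finset.mem_sigma, Finset.mem_powersetCard_univ] at hAi
    simp [Finset.insert_erase hAi.2]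
  · rintro ⟨B, i⟩ hBi
    simp only [Finset.mem_sigma, Finset.mem_powersetCard_univ, Finset.mem_compl] at hBi
    simp [Finset.erase_insert hBi.2]
  · rintro ⟨A, i⟩ hAi
    simp only [Finset.mem_sigma, Finset.mem_powersetCard_univ] at hAi
    exact sampw_key p hAi.2

lemma sampw_main {n : ℕ} (p : Fin n → ℝ) (m : ℕ) :
    ∑ B ∈ powersetCard m (univ : Finset (Fin n)), ∑ i ∈ Bᶜ, p i * sampw p B
      = ∑ A ∈ (univ : Finset (Finset (Fin n))).filter (fun A => A.card ≤ m),
          ((∑ i, p i) - A.card) * sampw p A := by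
  induction m with
  | zero =>
    have h1 : (univ : Finset (Finset (Fin n))).filter (fun A => A.card ≤ 0) = {∅} := by
      ext A; simp [Finset.card_eq_zero]
    rw [h1]
    simp [Finset.sum_mul]
  | succ m ih =>
    have hsplit : (univ : Finset (Finset (Fin n))).filter (fun A => A.card ≤ m + 1)
        = (univ : Finset (Finset (Fin n))).filter (fun A => A.card ≤ m)
          ∪ (univ : Finset (Finset (Fin n))).filter (fun A => A.card = m + 1) := by
      rw [← Finset.filter_or]
      apply Finset.filter_congr
      intro A _
      omega
    have hdisj : Disjoint
        ((univ : Finset (Finset (Fin n))).filter (fun A => A.card ≤ m))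
        ((univ : Finset (Finset (Fin n))).filter (fun A => A.card = m + 1)) := by
      rw [Finset.disjoint_left]
      intro A h1 h2
      simp only [Finset.mem_filter] at h1 h2
      omega
    have hpc : (univ : Finset (Finset (Fin n))).filter (fun A => A.card = m + 1)
        = powersetCard (m+1) (univ : Finset (Fin n)) := by
      rw [Finset.powersetCard_eq_filter, Finset.powerset_univ]
    have hstep : ∀ B ∈ powersetCard (m+1) (univ : Finset (Fin n)),
        ∑ i ∈ Bᶜ, p i * sampw p B
          = ((∑ i, p i) - ((m:ℝ)+1)) * sampw p B + ∑ i ∈ B, (1 - p i) * sampw p B := by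
      intro B hB
      rw [← Finset.sum_mul]
      have hBcard : B.card = m + 1 := (Finset.mem_powersetCard_univ.mp hB)
      have h1 : ∑ i ∈ Bᶜ, p i = (∑ i, p i) - ∑ i ∈ B, p i := by
        rw [eq_sub_iff_add_eq, Finset.sum_compl_add_sum]
      have h2 : ∑ i ∈ B, (1 - p i) * sampw p B
          = (((m:ℝ)+1) - ∑ i ∈ B, p i) * sampw p B := by
        rw [← Finset.sum_mul, Finset.sum_sub_distrib, Finset.sum_const, hBcard]
        push_cast
        ring_nf
      rw [h1, h2]
      ring
    rw [Finset.sum_congr rfl hstep, Finset.sum_add_distrib, sampw_swap p m, ih,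
      hsplit, Finset.sum_union hdisj, hpc]
    rw [add_comm]
    congr 1
    apply Finset.sum_congr rfl
    intro B hB
    have hBcard : B.card = m + 1 := (Finset.mem_powersetCard_univ.mp hB)
    rw [hBcard]
    push_cast
    ring

/-- The Sampford normalizing constant equals `E[1{|B| < k}·(k − |B|)]` for the
Poisson trial `B` with success probabilities `p`. -/
theorem sampford_denominator_eq {n k : ℕ} (p : Fin n → ℝ)
    (hp : ∀ i, 0 ≤ p i ∧ p i < 1) (hsum : ∑ i, p i = (k : ℝ)) :
    ∑ A ∈ powersetCard k (univ : Finset (Fin n)), sampf p A =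
      ∑ A ∈ (univ : Finset (Finset (Fin n))).filter (fun A => A.card < k),
        ((k : ℝ) - A.card) * ((∏ i ∈ A, p i) * ∏ i ∈ Aᶜ, (1 - p i)) := by
  have hsampf : ∀ A : Finset (Fin n), sampf p A = ∑ i ∈ A, (1 - p i) * sampw p A := by
    intro A
    unfold sampf sampw
    rw [mul_assoc, Finset.sum_mul]
  cases k with
  | zero => simp [hsampf]
  | succ m =>
    have hfil : (univ : Finset (Finset (Fin n))).filter (fun A => A.card < m + 1)
        = (univ : Finset (Finset (Fin n))).filter (fun A => A.card ≤ m) := by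
      apply Finset.filter_congr
      intro A _
      simp [Nat.lt_succ_iff]
    simp only [hsampf]
    rw [sampw_swap p m, sampw_main p m, hfil]
    apply Finset.sum_congr rfl
    intro A _
    rw [hsum]
    rfl
end

section
/- Let p ∈ [0,1)^n sum to an integer k with 1 ≤ k ≤ n−1, and let s := ∑_{i=1}^{k} (1 − p_i). Then ∑_{A⊆{1,…,n}} | |A| − k | · ∏_{i∈A} p_i ∏_{i∉A} (1−p_i) ≤ 2s. (In probabilistic terms: E[ | |B| − k | ] ≤ 2s for the Poisson trial B with success probabilities p.) -/
open Finset

lemma sum_prod_compl {n : ℕ} (f g : Fin n → ℝ) :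
    ∑ A : Finset (Fin n), (∏ i ∈ A, f i) * ∏ i ∈ Aᶜ, g i = ∏ i, (f i + g i) := by
  rw [Finset.prod_add, Finset.powerset_univ]
  apply Finset.sum_congr rfl
  intro A _
  rw [Finset.compl_eq_univ_sdiff]

/-- `E[||B| − k|] ≤ 2s` for the Poisson trial `B` with success probabilities `p`,
where `s := ∑_{i=1}^{k} (1 − p_i)`. -/
theorem poisson_trial_abs_bound {n k : ℕ} (hk1 : 1 ≤ k) (hkn : k ≤ n - 1)
    (p : Fin n → ℝ) (hp : ∀ i, 0 ≤ p i ∧ p i < 1) (hsum : ∑ i, p i = (k : ℝ)) :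
    ∑ A : Finset (Fin n),
        |(A.card : ℝ) - k| * ((∏ i ∈ A, p i) * ∏ i ∈ Aᶜ, (1 - p i)) ≤
      2 * ∑ i ∈ univ.filter (fun i : Fin n => i.val < k), (1 - p i) := by
  set w : Finset (Fin n) → ℝ := fun A => (∏ i ∈ A, p i) * ∏ i ∈ Aᶜ, (1 - p i) with hw
  have hw0 : ∀ A, 0 ≤ w A := by
    intro A
    apply mul_nonneg
    · exact Finset.prod_nonneg fun i _ => (hp i).1
    · exact Finset.prod_nonneg fun i _ => by linarith [(hp i).2]
  have hmass : ∑ A : Finset (Fin n), w A = 1 := by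
    rw [hw, sum_prod_compl]
    simp
  -- probability that i ∉ A
  have hind : ∀ i : Fin n,
      ∑ A : Finset (Fin n), (if i ∈ A then (0:ℝ) else 1) * w A = 1 - p i := by
    intro i
    have h1 : ∀ A : Finset (Fin n), (if i ∈ A then (0:ℝ) else 1) * w A =
        (∏ j ∈ A, (if j = i then 0 else p j)) * ∏ j ∈ Aᶜ, (1 - p j) := by
      intro A
      by_cases h : i ∈ A
      · simp only [h, if_true, zero_mul]
        rw [Finset.prod_eq_zero h (by simp), zero_mul]
      · simp only [h, if_false, one_mul, hw]
        congr 1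
        apply Finset.prod_congr rfl
        intro j hj
        have : j ≠ i := fun e => h (e ▸ hj)
        simp [this]
    rw [Finset.sum_congr rfl fun A _ => h1 A, sum_prod_compl]
    rw [Finset.prod_eq_single i (fun j _ hj => by simp [hj]) (by simp)]
    simp
  -- probability that i ∈ A
  have hindm : ∀ i : Fin n,
      ∑ A : Finset (Fin n), (if i ∈ A then (1:ℝ) else 0) * w A = p i := by
    intro i
    have h1 : ∀ A : Finset (Fin n), (if i ∈ A then (1:ℝ) else 0) * w A =
        (∏ j ∈ A, p j) * ∏ j ∈ Aᶜ, (if j = i then 0 else 1 - p j) := by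
      intro A
      by_cases h : i ∈ A
      · simp only [h, if_true, one_mul, hw]
        congr 1
        apply Finset.prod_congr rfl
        intro j hj
        have : j ≠ i := fun e => (Finset.mem_compl.mp hj) (e ▸ h)
        simp [this]
      · simp only [h, if_false, zero_mul]
        rw [Finset.prod_eq_zero (Finset.mem_compl.mpr h) (by simp), mul_zero]
    rw [Finset.sum_congr rfl fun A _ => h1 A, sum_prod_compl]
    rw [Finset.prod_eq_single i (fun j _ hj => by simp [hj]) (by simp)]
    simp
  -- expectation of |A|
  have hcard : ∑ A : Finset (Fin n), (A.card : ℝ) * w A = k := by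
    have h1 : ∀ A : Finset (Fin n), (A.card : ℝ) =
        ∑ i : Fin n, (if i ∈ A then (1:ℝ) else 0) := by
      intro A
      rw [Finset.sum_ite_mem, Finset.univ_inter]
      simp
    calc ∑ A : Finset (Fin n), (A.card : ℝ) * w A
        = ∑ A : Finset (Fin n), ∑ i : Fin n, (if i ∈ A then (1:ℝ) else 0) * w A := by
          apply Finset.sum_congr rfl; intro A _; rw [h1 A, Finset.sum_mul]
      _ = ∑ i : Fin n, ∑ A : Finset (Fin n), (if i ∈ A then (1:ℝ) else 0) * w A :=
          Finset.sum_comm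
      _ = ∑ i : Fin n, p i := Finset.sum_congr rfl fun i _ => hindm i
      _ = k := hsum
  set S : Finset (Fin n) := univ.filter (fun i : Fin n => i.val < k) with hSdef
  have hkn' : k ≤ n := le_trans hkn (Nat.sub_le n 1)
  have hScard : S.card = k := by
    rw [hSdef, Finset.card_filter, Fin.sum_univ_eq_sum_range (fun i => if i < k then 1 else 0)]
    rw [← Finset.card_filter]
    have : (Finset.range n).filter (fun i => i < k) = Finset.range k := by
      ext x; simp only [Finset.mem_filter, Finset.mem_range]; omega
    rw [this, Finset.card_range]
  -- expectation of |S \ A| equals s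
  have hexpS : ∑ A : Finset (Fin n), ((S \ A).card : ℝ) * w A = ∑ i ∈ S, (1 - p i) := by
    have h1 : ∀ A : Finset (Fin n), ((S \ A).card : ℝ) =
        ∑ i ∈ S, (if i ∈ A then (0:ℝ) else 1) := by
      intro A
      have : S \ A = S.filter (fun i => ¬ i ∈ A) := by
        ext x; simp [Finset.mem_sdiff]
      rw [this, Finset.card_filter]
      push_cast
      apply Finset.sum_congr rfl
      intro i _
      by_cases h : i ∈ A <;> simp [h]
    calc ∑ A : Finset (Fin n), ((S \ A).card : ℝ) * w A
        = ∑ A : Finset (Fin n), ∑ i ∈ S, (if i ∈ A then (0:ℝ) else 1) * w A := by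
          apply Finset.sum_congr rfl; intro A _; rw [h1 A, Finset.sum_mul]
      _ = ∑ i ∈ S, ∑ A : Finset (Fin n), (if i ∈ A then (0:ℝ) else 1) * w A :=
          Finset.sum_comm
      _ = ∑ i ∈ S, (1 - p i) := Finset.sum_congr rfl fun i _ => hind i
  -- |c - k| = (c - k) + 2 * max (k - c) 0
  have habs : ∀ A : Finset (Fin n), |(A.card : ℝ) - k| =
      ((A.card : ℝ) - k) + 2 * max ((k : ℝ) - A.card) 0 := by
    intro A
    rcases le_or_gt (k : ℝ) (A.card : ℝ) with h | h
    · rw [abs_of_nonneg (by linarith), max_eq_right (by linarith)]; ring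
    · rw [abs_of_neg (by linarith), max_eq_left (by linarith)]; ring
  have hsplit : ∑ A : Finset (Fin n), |(A.card : ℝ) - k| * w A =
      2 * ∑ A : Finset (Fin n), max ((k : ℝ) - A.card) 0 * w A := by
    calc ∑ A : Finset (Fin n), |(A.card : ℝ) - k| * w A
        = ∑ A : Finset (Fin n),
            (((A.card : ℝ) * w A - (k : ℝ) * w A) + 2 * (max ((k : ℝ) - A.card) 0 * w A)) := by
          apply Finset.sum_congr rfl; intro A _; rw [habs A]; ring
      _ = (∑ A : Finset (Fin n), (A.card : ℝ) * w A - (k : ℝ) * ∑ A : Finset (Fin n), w A)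
            + 2 * ∑ A : Finset (Fin n), max ((k : ℝ) - A.card) 0 * w A := by
          rw [Finset.sum_add_distrib, Finset.sum_sub_distrib, ← Finset.mul_sum,
            ← Finset.mul_sum]
      _ = 2 * ∑ A : Finset (Fin n), max ((k : ℝ) - A.card) 0 * w A := by
          rw [hcard, hmass]; ring
  have hbound : ∀ A : Finset (Fin n), max ((k : ℝ) - A.card) 0 ≤ ((S \ A).card : ℝ) := by
    intro A
    apply max_le _ (by positivity)
    have h1 : S.card ≤ (S \ A).card + A.card := by
      calc S.card = (S \ A).card + (S ∩ A).card := (Finset.card_sdiff_add_card_inter S A).symm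
        _ ≤ (S \ A).card + A.card := by
            exact Nat.add_le_add_left (Finset.card_le_card (Finset.inter_subset_right)) _
    rw [← hScard]
    have := Nat.cast_le (α := ℝ) |>.mpr h1
    push_cast at this ⊢
    linarith
  calc ∑ A : Finset (Fin n), |(A.card : ℝ) - k| * w A
      = 2 * ∑ A : Finset (Fin n), max ((k : ℝ) - A.card) 0 * w A := hsplit
    _ ≤ 2 * ∑ A : Finset (Fin n), ((S \ A).card : ℝ) * w A := by
        apply mul_le_mul_of_nonneg_left _ (by norm_num)
        apply Finset.sum_le_sum
        intro A _
        exact mul_le_mul_of_nonneg_right (hbound A) (hw0 A)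
    _ = 2 * ∑ i ∈ S, (1 - p i) := by rw [hexpS]
end

section
/- Let n ≥ 2 and let p ∈ [0,1)^n sum to an integer k with 1 ≤ k ≤ n−1. For real t near 0, let p(t) ∈ ℝ^n be obtained from p by replacing p_1 with p_1 + t and p_n with p_n − t. Then the function t ↦ ∑_{A⊆{1,…,n}, |A|<k} (k − |A|) · ∏_{i∈A} p(t)_i ∏_{i∉A} (1−p(t)_i) is differentiable at t = 0 with derivative equal to (p_n − p_1) · ∑_{A⊆{2,…,n−1}, |A|=k−1} ∏_{i∈A} p_i ∏_{i∈{2,…,n−1}∖A} (1−p_i). (In probabilistic terms: (∂/∂p_1 − ∂/∂p_n) E[1{|B| < k}·(k − |B|)] = (p_n − p_1)·P[|B̂| = k−1], where B̂ is the Poisson trial on {2,…,n−1}.) -/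
open Finset

/-- The perturbation `p(t)`: add `t` to the first coordinate and subtract `t`
from the last coordinate. -/
noncomputable def perturb {n : ℕ} (p : Fin n → ℝ) (t : ℝ) : Fin n → ℝ :=
  fun i => if i.val = 0 then p i + t else if i.val = n - 1 then p i - t else p i

lemma gcalc (k m : ℕ) (hk : 1 ≤ k) :
    (if m + 2 < k then (k:ℝ) - ((m + 2 : ℕ) : ℝ) else 0)
      - 2*(if m + 1 < k then (k:ℝ) - ((m + 1 : ℕ) : ℝ) else 0)
      + (if m < k then (k:ℝ) - (m : ℝ) else 0) = if m = k - 1 then 1 else 0 := by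
  split_ifs <;>
    first
      | (exfalso; omega)
      | (push_cast; ring1)
      | (have h' : k = m + 2 := (by omega); subst h'; push_cast; ring1)
      | (have h' : k = m + 1 := (by omega); subst h'; push_cast; ring1)

/-- `(∂/∂p_1 − ∂/∂p_n) E[1{|B| < k}·(k − |B|)] = (p_n − p_1)·P[|B̂| = k−1]`,
where `B̂` is the Poisson trial on `{2,…,n−1}`. -/
theorem poisson_trial_derivative {n k : ℕ} (hn : 2 ≤ n) (hk1 : 1 ≤ k) (hkn : k ≤ n - 1)
    (p : Fin n → ℝ) (hp : ∀ i, 0 ≤ p i ∧ p i < 1) (hsum : ∑ i, p i = (k : ℝ)) :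
    HasDerivAt
      (fun t : ℝ =>
        ∑ A ∈ (univ : Finset (Finset (Fin n))).filter (fun A => A.card < k),
          ((k : ℝ) - A.card) *
            ((∏ i ∈ A, perturb p t i) * ∏ i ∈ Aᶜ, (1 - perturb p t i)))
      ((p ⟨n - 1, by omega⟩ - p ⟨0, by omega⟩) *
        ∑ A ∈ powersetCard (k - 1)
            (univ.filter fun i : Fin n => 0 < i.val ∧ i.val < n - 1),
          (∏ i ∈ A, p i) *
            ∏ i ∈ (univ.filter fun i : Fin n => 0 < i.val ∧ i.val < n - 1) \ A, (1 - p i))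
      0 := by
  classical
  -- basic objects
  set e0 : Fin n := ⟨0, by omega⟩ with he0
  set e1 : Fin n := ⟨n - 1, by omega⟩ with he1
  set S : Finset (Fin n) := univ.filter (fun i : Fin n => 0 < i.val ∧ i.val < n - 1) with hSdef
  set g : ℕ → ℝ := fun m => if m < k then (k : ℝ) - m else 0 with hg
  set v : Fin n → ℝ := fun i => if i.val = 0 then 1 else if i.val = n - 1 then -1 else 0 with hv
  have hp0 : ∀ j, perturb p 0 j = p j := by
    intro j; unfold perturb; split_ifs <;> ring
  have hder : ∀ (i : Fin n) (t0 : ℝ), HasDerivAt (fun t => perturb p t i) (v i) t0 := by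
    intro i t0
    unfold perturb
    simp only [hv]
    split_ifs with h1 h2
    · exact (hasDerivAt_id t0).const_add (p i)
    · simpa using (hasDerivAt_id t0).const_sub (p i)
    · exact hasDerivAt_const t0 (p i)
  -- rewrite the function as a sum over all subsets with weight g
  have hfun : (fun t : ℝ =>
        ∑ A ∈ (univ : Finset (Finset (Fin n))).filter (fun A => A.card < k),
          ((k : ℝ) - A.card) *
            ((∏ i ∈ A, perturb p t i) * ∏ i ∈ Aᶜ, (1 - perturb p t i)))
      = (fun t : ℝ =>
        ∑ A : Finset (Fin n),
          g A.card * ((∏ i ∈ A, perturb p t i) * ∏ i ∈ Aᶜ, (1 - perturb p t i))) := by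
    funext t
    rw [Finset.sum_filter]
    refine Finset.sum_congr rfl fun A _ => ?_
    simp only [hg, ite_mul, zero_mul]
  rw [hfun]
  -- the derivative of each summand
  have key : HasDerivAt
      (fun t : ℝ =>
        ∑ A : Finset (Fin n),
          g A.card * ((∏ i ∈ A, perturb p t i) * ∏ i ∈ Aᶜ, (1 - perturb p t i)))
      (∑ A : Finset (Fin n),
        g A.card *
          ((∑ i ∈ A, (∏ j ∈ A.erase i, p j) * v i) * (∏ i ∈ Aᶜ, (1 - p i)) +
            (∏ i ∈ A, p i) * (∑ i ∈ Aᶜ, (∏ j ∈ Aᶜ.erase i, (1 - p j)) * (-v i)))) 0 := by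
    apply HasDerivAt.fun_sum
    intro A _
    have hP : HasDerivAt (fun t => ∏ i ∈ A, perturb p t i)
        (∑ i ∈ A, (∏ j ∈ A.erase i, p j) * v i) 0 := by
      have := HasDerivAt.fun_finsetProd (u := A) (f := fun i t => perturb p t i)
        (f' := v) (x := 0) (fun i _ => hder i 0)
      simpa only [hp0, smul_eq_mul] using this
    have hQ : HasDerivAt (fun t => ∏ i ∈ Aᶜ, (1 - perturb p t i))
        (∑ i ∈ Aᶜ, (∏ j ∈ Aᶜ.erase i, (1 - p j)) * (-v i)) 0 := by
      have := HasDerivAt.fun_finsetProd (u := Aᶜ) (f := fun i t => 1 - perturb p t i)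
        (f' := fun i => -v i) (x := 0) (fun i _ => (hder i 0).const_sub 1)
      simpa only [hp0, smul_eq_mul] using this
    simpa only [hp0] using (hP.fun_mul hQ).const_mul (g A.card)
  -- it remains to identify the derivative value
  have hD : (∑ A : Finset (Fin n),
        g A.card *
          ((∑ i ∈ A, (∏ j ∈ A.erase i, p j) * v i) * (∏ i ∈ Aᶜ, (1 - p i)) +
            (∏ i ∈ A, p i) * (∑ i ∈ Aᶜ, (∏ j ∈ Aᶜ.erase i, (1 - p j)) * (-v i))))
      = (p e1 - p e0) *
        ∑ A ∈ powersetCard (k - 1) S,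
          (∏ i ∈ A, p i) * ∏ i ∈ S \ A, (1 - p i) := by
    -- decompose v
    have he01 : e0 ≠ e1 := by simp only [he0, he1, ne_eq, Fin.mk.injEq]; omega
    have he0S : e0 ∉ S := by simp [hSdef, he0]
    have he1S : e1 ∉ S := by simp [hSdef, he1]
    have hvdecomp : ∀ i : Fin n, v i = (if i = e0 then (1:ℝ) else 0) - (if i = e1 then 1 else 0) := by
      intro i
      have hi := i.isLt
      simp only [hv, he0, he1, Fin.ext_iff]
      split_ifs <;> first | omega | norm_num
    have hsum_v : ∀ (h : Fin n → ℝ) (X : Finset (Fin n)),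
        ∑ i ∈ X, h i * v i = (if e0 ∈ X then h e0 else 0) - (if e1 ∈ X then h e1 else 0) := by
      intro h X
      simp only [hvdecomp, mul_sub, mul_ite, mul_one, mul_zero, Finset.sum_sub_distrib,
        Finset.sum_ite_eq']
    have hsum_v' : ∀ (h : Fin n → ℝ) (X : Finset (Fin n)),
        ∑ i ∈ X, h i * (-v i) = (if e1 ∈ X then h e1 else 0) - (if e0 ∈ X then h e0 else 0) := by
      intro h X
      have : ∑ i ∈ X, h i * (-v i) = -∑ i ∈ X, h i * v i := by
        rw [← Finset.sum_neg_distrib]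
        exact Finset.sum_congr rfl fun i _ => by ring
      rw [this, hsum_v]
      ring
    simp_rw [hsum_v, hsum_v']
    have huniv : (univ : Finset (Fin n)) = insert e0 (insert e1 S) := by
      ext i
      have hi := i.isLt
      simp only [mem_insert, mem_univ, true_iff, hSdef, mem_filter, true_and, he0, he1,
        Fin.ext_iff]
      omega
    have he0' : e0 ∉ insert e1 S := by simp [mem_insert, he01, he0S]
    rw [← Finset.powerset_univ, huniv, Finset.sum_powerset_insert he0',
      Finset.sum_powerset_insert he1S, Finset.sum_powerset_insert he1S]
    rw [← Finset.sum_add_distrib, ← Finset.sum_add_distrib, ← Finset.sum_add_distrib,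
      Finset.powersetCard_eq_filter, Finset.sum_filter, Finset.mul_sum]
    refine Finset.sum_congr rfl fun M hMp => ?_
    have hM : M ⊆ S := Finset.mem_powerset.mp hMp
    have he0M : e0 ∉ M := fun h => he0S (hM h)
    have he1M : e1 ∉ M := fun h => he1S (hM h)
    have he10 : e1 ≠ e0 := he01.symm
    have he1SM : e1 ∉ S \ M := fun h => he1S (Finset.mem_sdiff.mp h).1
    have he0SM : e0 ∉ S \ M := fun h => he0S (Finset.mem_sdiff.mp h).1
    have he0iM : e0 ∉ insert e1 M := by simp [Finset.mem_insert, he01, he0M]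
    have he0iSM : e0 ∉ insert e1 (S \ M) := by simp [Finset.mem_insert, he01, he0SM]
    have hM' : ∀ j ∈ M, 0 < j.val ∧ j.val < n - 1 := fun j hj => by
      have h := hM hj; rw [hSdef, Finset.mem_filter] at h; exact h.2
    have hc00 : Mᶜ = insert e0 (insert e1 (S \ M)) := by
      ext i; have hi := i.isLt
      by_cases hiM : i ∈ M
      · have h2 := hM' i hiM
        simp [hSdef, he0, he1, Fin.ext_iff, hiM] <;> omega
      · simp [hSdef, he0, he1, Fin.ext_iff, hiM] <;> omega
    have hc10 : (insert e1 M)ᶜ = insert e0 (S \ M) := by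
      ext i; have hi := i.isLt
      by_cases hiM : i ∈ M
      · have h2 := hM' i hiM
        simp [hSdef, he0, he1, Fin.ext_iff, hiM] <;> omega
      · simp [hSdef, he0, he1, Fin.ext_iff, hiM] <;> omega
    have hc01 : (insert e0 M)ᶜ = insert e1 (S \ M) := by
      ext i; have hi := i.isLt
      by_cases hiM : i ∈ M
      · have h2 := hM' i hiM
        simp [hSdef, he0, he1, Fin.ext_iff, hiM] <;> omega
      · simp [hSdef, he0, he1, Fin.ext_iff, hiM] <;> omega
    have hc11 : (insert e0 (insert e1 M))ᶜ = S \ M := by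
      ext i; have hi := i.isLt
      by_cases hiM : i ∈ M
      · have h2 := hM' i hiM
        simp [hSdef, he0, he1, Fin.ext_iff, hiM] <;> omega
      · simp [hSdef, he0, he1, Fin.ext_iff, hiM] <;> omega
    rw [hc00, hc10, hc01, hc11]
    simp only [Finset.mem_insert, Finset.mem_sdiff, he0M, he1M, he01, he10, he0SM, he1SM,
      he0iM, he0iSM, Finset.mem_insert_self, or_false, false_or, if_true, if_false,
      Finset.erase_insert he1M, Finset.erase_insert he0M, Finset.erase_insert he0iM,
      Finset.erase_insert he1SM, Finset.erase_insert he0SM, Finset.erase_insert he0iSM,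
      Finset.erase_insert_of_ne he01,
      Finset.prod_insert he1M, Finset.prod_insert he0M, Finset.prod_insert he0iM,
      Finset.prod_insert he1SM, Finset.prod_insert he0SM, Finset.prod_insert he0iSM,
      Finset.card_insert_of_notMem he1M, Finset.card_insert_of_notMem he0M,
      Finset.card_insert_of_notMem he0iM, ite_true, ite_false, not_false_iff]
    simp only [hg]
    rw [show #M + 1 + 1 = #M + 2 by omega]
    rw [show (if #M = k - 1 then (∏ j ∈ M, p j) * ∏ i ∈ S \ M, (1 - p i) else 0)
        = (if #M = k - 1 then (1:ℝ) else 0) * ((∏ j ∈ M, p j) * ∏ i ∈ S \ M, (1 - p i)) from by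
      split_ifs <;> ring]
    rw [← gcalc k #M hk1]
    ring


  exact hD ▸ key
end

section
/- Let r be a rounding rule for n parties that satisfies selection monotonicity. Then r is Lipschitz continuous with constant 1 in the ℓ₁ norm: for any integer k, any two residue vectors p, p' ∈ [0,1)^n each summing to k, and any k-element subset T of {1,…,n}, it holds that |P[r(p') = T] − P[r(p) = T]| ≤ ‖p − p'‖₁. -/
open Finset

/-- A rounding rule for `n` parties: for every residue vector `p ∈ [0,1)^n`
summing to an integer `k`, `r p` is a probability distribution over subsets of
`{1,…,n}` supported on `k`-element subsets whose marginals are the `p i`. -/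
def IsRoundingRule (n : ℕ) (r : (Fin n → ℝ) → Finset (Fin n) → ℝ) : Prop :=
  ∀ (p : Fin n → ℝ) (k : ℕ), (∀ i, 0 ≤ p i ∧ p i < 1) → (∑ i, p i = (k : ℝ)) →
    (∀ A : Finset (Fin n), 0 ≤ r p A) ∧
    (∑ A : Finset (Fin n), r p A = 1) ∧
    (∀ A : Finset (Fin n), r p A ≠ 0 → A.card = k) ∧
    (∀ i : Fin n,
      ∑ A ∈ (univ : Finset (Finset (Fin n))).filter (fun A => i ∈ A), r p A = p i)

/-- Selection monotonicity of a rounding rule. -/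
def SelectionMonotone (n : ℕ) (r : (Fin n → ℝ) → Finset (Fin n) → ℝ) : Prop :=
  ∀ (k : ℕ) (p p' : Fin n → ℝ),
    (∀ i, 0 ≤ p i ∧ p i < 1) → (∀ i, 0 ≤ p' i ∧ p' i < 1) →
    (∑ i, p i = (k : ℝ)) → (∑ i, p' i = (k : ℝ)) →
    ∀ T : Finset (Fin n), T.card = k →
      (∀ i ∈ T, p i ≤ p' i) → (∀ i ∉ T, p' i ≤ p i) →
      r p T ≤ r p' T

namespace SMAux

variable {n : ℕ}

/-- Move mass `m` from coordinate `b` to coordinate `a`. -/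
noncomputable def transfer (q : Fin n → ℝ) (a b : Fin n) (m : ℝ) : Fin n → ℝ :=
  fun x => if x = a then q x + m else if x = b then q x - m else q x

lemma transfer_fst (q : Fin n → ℝ) (a b : Fin n) (m : ℝ) :
    transfer q a b m a = q a + m := by simp [transfer]

lemma transfer_snd (q : Fin n → ℝ) {a b : Fin n} (m : ℝ) (hab : a ≠ b) :
    transfer q a b m b = q b - m := by simp [transfer, hab.symm]

lemma transfer_other (q : Fin n → ℝ) {a b x : Fin n} (m : ℝ)
    (hx : x ≠ a) (hx' : x ≠ b) : transfer q a b m x = q x := by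
  simp [transfer, hx, hx']

lemma transfer_zero (q : Fin n → ℝ) (a b : Fin n) :
    transfer q a b 0 = q := by
  funext x; simp [transfer]

lemma transfer_sum (q : Fin n → ℝ) {a b : Fin n} (m : ℝ) (hab : a ≠ b) :
    ∑ x, transfer q a b m x = ∑ x, q x := by
  have h : ∀ x : Fin n, transfer q a b m x
      = q x + ((if x = a then m else 0) + (if x = b then -m else 0)) := by
    intro x
    by_cases h1 : x = a
    · subst h1; simp [transfer, hab]
    · by_cases h2 : x = b
      · subst h2; simp [transfer, h1, sub_eq_add_neg]
      · simp [transfer, h1, h2]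
  rw [Finset.sum_congr rfl fun x _ => h x]
  simp [Finset.sum_add_distrib, sub_eq_add_neg]

lemma transfer_valid {q : Fin n → ℝ} (hq : ∀ i, 0 ≤ q i ∧ q i < 1)
    {a b : Fin n} {m : ℝ} (hm : 0 ≤ m) (ha : q a + m < 1) (hb : m ≤ q b)
    (hab : a ≠ b) : ∀ i, 0 ≤ transfer q a b m i ∧ transfer q a b m i < 1 := by
  intro i
  by_cases h1 : i = a
  · rw [h1, transfer_fst]
    exact ⟨by linarith [(hq a).1], ha⟩
  · by_cases h2 : i = b
    · rw [h2, transfer_snd _ _ hab]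
      exact ⟨by linarith, by linarith [(hq b).2]⟩
    · rw [transfer_other _ _ h1 h2]; exact hq i


variable {r : (Fin n → ℝ) → Finset (Fin n) → ℝ}

lemma supp_zero (hr : IsRoundingRule n r) {k : ℕ} {q : Fin n → ℝ}
    (hq : ∀ i, 0 ≤ q i ∧ q i < 1) (hs : ∑ i, q i = (k : ℝ))
    {A : Finset (Fin n)} (hA : A.card ≠ k) : r q A = 0 := by
  by_contra h
  exact hA ((hr q k hq hs).2.2.1 A h)

lemma marg_le (hr : IsRoundingRule n r) {k : ℕ} {q : Fin n → ℝ}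
    (hq : ∀ i, 0 ≤ q i ∧ q i < 1) (hs : ∑ i, q i = (k : ℝ))
    {T : Finset (Fin n)} {l : Fin n} (hl : l ∈ T) : r q T ≤ q l := by
  obtain ⟨hpos, -, -, hmarg⟩ := hr q k hq hs
  have := hmarg l
  rw [← this]
  exact Finset.single_le_sum (fun A _ => hpos A) (by simp [hl])

/-- Core lemma: a single transfer (up at `a ∈ T`, down at `b ∉ T`) changes
`r · T` by an amount in `[0, 2m]`. -/
lemma core (hr : IsRoundingRule n r) (hmono : SelectionMonotone n r) {k : ℕ}
    {q : Fin n → ℝ} (hq : ∀ i, 0 ≤ q i ∧ q i < 1) (hs : ∑ i, q i = (k : ℝ))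
    {a b : Fin n} (hab : a ≠ b) {m : ℝ} (hm : 0 ≤ m)
    (ha : q a + m < 1) (hb : m ≤ q b)
    {T : Finset (Fin n)} (hT : T.card = k) (haT : a ∈ T) (hbT : b ∉ T) :
    0 ≤ r (transfer q a b m) T - r q T ∧ r (transfer q a b m) T - r q T ≤ 2 * m := by
  set q' := transfer q a b m with hq'def
  have hq' : ∀ i, 0 ≤ q' i ∧ q' i < 1 := transfer_valid hq hm ha hb hab
  have hs' : ∑ i, q' i = (k : ℝ) := by rw [hq'def, transfer_sum q m hab, hs]
  -- pointwise comparisons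
  have hup : ∀ x, x ≠ b → q x ≤ q' x := by
    intro x hxb
    by_cases hxa : x = a
    · rw [hxa, hq'def, transfer_fst]; linarith
    · rw [hq'def, transfer_other _ _ hxa hxb]
  have hdown : ∀ x, x ≠ a → q' x ≤ q x := by
    intro x hxa
    by_cases hxb : x = b
    · rw [hxb, hq'def, transfer_snd _ _ hab]; linarith
    · rw [hq'def, transfer_other _ _ hxa hxb]
  set D : Finset (Fin n) → ℝ := fun A => r q' A - r q A with hDdef
  have hDpos : ∀ A ∈ univ.filter (fun A => a ∈ A ∧ b ∉ A), 0 ≤ D A := by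
    intro A hA
    simp only [Finset.mem_filter, Finset.mem_univ, true_and] at hA
    by_cases hc : A.card = k
    · exact sub_nonneg.2 (hmono k q q' hq hq' hs hs' A hc
        (fun x _ => hup x (fun h => hA.2 (h ▸ ‹x ∈ A›)))
        (fun x hx => hdown x (fun h => hx (h ▸ hA.1))))
    · simp [hDdef, supp_zero hr hq hs hc, supp_zero hr hq' hs' hc]
  have hDneg' : ∀ A ∈ univ.filter (fun A => b ∈ A ∧ a ∉ A), D A ≤ 0 := by
    intro A hA
    simp only [Finset.mem_filter, Finset.mem_univ, true_and] at hA
    by_cases hc : A.card = k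
    · exact sub_nonpos.2 (hmono k q' q hq' hq hs' hs A hc
        (fun x hx => hdown x (fun h => hA.2 (h ▸ hx)))
        (fun x hx => hup x (fun h => hx (h ▸ hA.1))))
    · simp [hDdef, supp_zero hr hq hs hc, supp_zero hr hq' hs' hc]
  -- marginal sums
  have hSa : ∑ A ∈ univ.filter (fun A => a ∈ A), D A = m := by
    have h1 := ((hr q' k hq' hs').2.2.2) a
    have h2 := ((hr q k hq hs).2.2.2) a
    have h3 : q' a = q a + m := transfer_fst q a b m
    simp only [hDdef, Finset.sum_sub_distrib, h1, h2, h3]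
    ring
  have hSb : ∑ A ∈ univ.filter (fun A => b ∈ A), D A = -m := by
    have h1 := ((hr q' k hq' hs').2.2.2) b
    have h2 := ((hr q k hq hs).2.2.2) b
    have h3 : q' b = q b - m := transfer_snd q m hab
    simp only [hDdef, Finset.sum_sub_distrib, h1, h2, h3]
    ring
  -- splits
  have splitA : ∑ A ∈ univ.filter (fun A => a ∈ A ∧ b ∈ A), D A
      + ∑ A ∈ univ.filter (fun A => a ∈ A ∧ b ∉ A), D A = m := by
    rw [← hSa]
    rw [← Finset.sum_filter_add_sum_filter_not (univ.filter (fun A => a ∈ A)) (fun A => b ∈ A) D]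
    rw [Finset.filter_filter, Finset.filter_filter]
  have splitB : ∑ A ∈ univ.filter (fun A => a ∈ A ∧ b ∈ A), D A
      + ∑ A ∈ univ.filter (fun A => b ∈ A ∧ a ∉ A), D A = -m := by
    rw [← hSb]
    rw [← Finset.sum_filter_add_sum_filter_not (univ.filter (fun A => b ∈ A)) (fun A => a ∈ A) D]
    rw [Finset.filter_filter, Finset.filter_filter]
    congr 1
    apply Finset.sum_congr _ (fun _ _ => rfl)
    apply Finset.filter_congr
    intro A _
    simp [and_comm]
  have hTmem : T ∈ univ.filter (fun A => a ∈ A ∧ b ∉ A) := by simp [haT, hbT]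
  have h10 : D T ≤ ∑ A ∈ univ.filter (fun A => a ∈ A ∧ b ∉ A), D A :=
    Finset.single_le_sum hDpos hTmem
  have h01 : ∑ A ∈ univ.filter (fun A => b ∈ A ∧ a ∉ A), D A ≤ 0 :=
    Finset.sum_nonpos hDneg'
  have hDT0 : 0 ≤ D T := hDpos T hTmem
  constructor
  · exact hDT0
  · have : D T ≤ 2 * m := by linarith
    exact this


/-- Routing lemma for `i, j ∈ T`: route through `l ∉ T`. -/
lemma route_in (hr : IsRoundingRule n r) (hmono : SelectionMonotone n r) {k : ℕ}
    {T : Finset (Fin n)} (hT : T.card = k)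
    {i j l : Fin n} (hij : i ≠ j) (hiT : i ∈ T) (hjT : j ∈ T) (hlT : l ∉ T)
    {c : ℝ} :
    ∀ N : ℕ, ∀ q : Fin n → ℝ, (∀ x, 0 ≤ q x ∧ q x < 1) → (∑ x, q x = (k : ℝ)) →
      ∀ δ : ℝ, 0 ≤ δ → δ ≤ N * c → q i + δ < 1 → δ ≤ q j → q l + c < 1 →
      |r (transfer q i j δ) T - r q T| ≤ 2 * δ := by
  intro N
  induction N with
  | zero =>
    intro q hq hs δ hδ0 hδN hi hj hl
    have hδ : δ = 0 := le_antisymm (by simpa using hδN) hδ0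
    subst hδ
    simp [transfer_zero]
  | succ N ih =>
    intro q hq hs δ hδ0 hδN hi hj hl
    rcases eq_or_lt_of_le hδ0 with h0 | hpos
    · rw [← h0]; simp [transfer_zero]
    · have hδN' : δ ≤ ((N : ℝ) + 1) * c := by push_cast at hδN; linarith
      have hc : 0 < c := by
        by_contra hcn
        push_neg at hcn
        have h1 : ((N : ℝ) + 1) * c ≤ 0 :=
          mul_nonpos_iff.2 (Or.inl ⟨by positivity, hcn⟩)
        linarith
      have hm'pos : 0 < min δ c := lt_min hpos hc
      have hm'δ : min δ c ≤ δ := min_le_left _ _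
      have hm'c : min δ c ≤ c := min_le_right _ _
      have hil : i ≠ l := fun h => hlT (h ▸ hiT)
      have hjl : j ≠ l := fun h => hlT (h ▸ hjT)
      have hlj : l ≠ j := hjl.symm
      have hli : l ≠ i := hil.symm
      have hji : j ≠ i := hij.symm
      -- step 1 : up l, down j
      have hq1 : ∀ x, 0 ≤ transfer q l j (min δ c) x ∧ transfer q l j (min δ c) x < 1 :=
        transfer_valid hq hm'pos.le (by linarith) (by linarith [hj]) hlj
      have hs1 : ∑ x, transfer q l j (min δ c) x = (k : ℝ) := by
        rw [transfer_sum q (min δ c) hlj]; exact hs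
      have hv1l : transfer q l j (min δ c) l = q l + min δ c := transfer_fst q l j (min δ c)
      have hv1j : transfer q l j (min δ c) j = q j - min δ c := transfer_snd q (min δ c) hlj
      have hv1i : transfer q l j (min δ c) i = q i := transfer_other q (min δ c) hil hij
      have heq1 : q = transfer (transfer q l j (min δ c)) j l (min δ c) := by
        funext x
        by_cases hxj : x = j
        · rw [hxj, transfer_fst, hv1j]; ring
        · by_cases hxl : x = l
          · rw [hxl, transfer_snd _ _ hjl, hv1l]; ring
          · rw [transfer_other _ _ hxj hxl, transfer_other q (min δ c) hxl hxj]
      obtain ⟨h1a, h1b⟩ := core hr hmono hq1 hs1 hjl hm'pos.le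
        (by rw [hv1j]; linarith [(hq j).2]) (by rw [hv1l]; linarith [(hq l).1]) hT hjT hlT
      rw [← heq1] at h1a h1b
      -- step 2 : up i, down l
      obtain ⟨h2a, h2b⟩ := core hr hmono hq1 hs1 hil hm'pos.le
        (by rw [hv1i]; linarith) (by rw [hv1l]; linarith [(hq l).1]) hT hiT hlT
      -- the vector after both steps
      have hq2 : ∀ x, 0 ≤ transfer (transfer q l j (min δ c)) i l (min δ c) x ∧
          transfer (transfer q l j (min δ c)) i l (min δ c) x < 1 :=
        transfer_valid hq1 hm'pos.le (by rw [hv1i]; linarith)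
          (by rw [hv1l]; linarith [(hq l).1]) hil
      have hs2 : ∑ x, transfer (transfer q l j (min δ c)) i l (min δ c) x = (k : ℝ) := by
        rw [transfer_sum _ (min δ c) hil]; exact hs1
      have hv2i : transfer (transfer q l j (min δ c)) i l (min δ c) i = q i + min δ c := by
        rw [transfer_fst, hv1i]
      have hv2l : transfer (transfer q l j (min δ c)) i l (min δ c) l = q l := by
        rw [transfer_snd _ _ hil, hv1l]; ring
      have hv2j : transfer (transfer q l j (min δ c)) i l (min δ c) j = q j - min δ c := by
        rw [transfer_other _ _ hji hjl, hv1j]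
      -- recursion
      have hNc : δ - min δ c ≤ (N : ℝ) * c := by
        rcases le_total δ c with h | h
        · rw [min_eq_left h]; simp; positivity
        · rw [min_eq_right h]; linarith
      have hrec := ih (transfer (transfer q l j (min δ c)) i l (min δ c)) hq2 hs2
        (δ - min δ c) (by linarith) hNc
        (by rw [hv2i]; linarith) (by rw [hv2j]; linarith) (by rw [hv2l]; exact hl)
      have heq2 : transfer (transfer (transfer q l j (min δ c)) i l (min δ c)) i j (δ - min δ c)
          = transfer q i j δ := by
        funext x
        by_cases hxi : x = i
        · rw [hxi, transfer_fst, hv2i, transfer_fst]; ring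
        · by_cases hxj : x = j
          · rw [hxj, transfer_snd _ _ hij, hv2j, transfer_snd _ _ hij]; ring
          · rw [transfer_other _ _ hxi hxj, transfer_other _ _ hxi hxj]
            by_cases hxl : x = l
            · rw [hxl, hv2l]
            · rw [transfer_other _ _ hxi hxl, transfer_other _ _ hxl hxj]
      rw [heq2] at hrec
      rw [abs_le] at hrec ⊢
      obtain ⟨hrec1, hrec2⟩ := hrec
      constructor <;> linarith

/-- Routing lemma for `i, j ∉ T`: route through `l ∈ T`. -/
lemma route_out (hr : IsRoundingRule n r) (hmono : SelectionMonotone n r) {k : ℕ}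
    {T : Finset (Fin n)} (hT : T.card = k)
    {i j l : Fin n} (hij : i ≠ j) (hiT : i ∉ T) (hjT : j ∉ T) (hlT : l ∈ T)
    {c : ℝ} :
    ∀ N : ℕ, ∀ q : Fin n → ℝ, (∀ x, 0 ≤ q x ∧ q x < 1) → (∑ x, q x = (k : ℝ)) →
      ∀ δ : ℝ, 0 ≤ δ → δ ≤ N * c → q i + δ < 1 → δ ≤ q j → c ≤ q l →
      |r (transfer q i j δ) T - r q T| ≤ 2 * δ := by
  intro N
  induction N with
  | zero =>
    intro q hq hs δ hδ0 hδN hi hj hl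
    have hδ : δ = 0 := le_antisymm (by simpa using hδN) hδ0
    subst hδ
    simp [transfer_zero]
  | succ N ih =>
    intro q hq hs δ hδ0 hδN hi hj hl
    rcases eq_or_lt_of_le hδ0 with h0 | hpos
    · rw [← h0]; simp [transfer_zero]
    · have hδN' : δ ≤ ((N : ℝ) + 1) * c := by push_cast at hδN; linarith
      have hc : 0 < c := by
        by_contra hcn
        push_neg at hcn
        have h1 : ((N : ℝ) + 1) * c ≤ 0 :=
          mul_nonpos_iff.2 (Or.inl ⟨by positivity, hcn⟩)
        linarith
      have hm'pos : 0 < min δ c := lt_min hpos hc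
      have hm'δ : min δ c ≤ δ := min_le_left _ _
      have hm'c : min δ c ≤ c := min_le_right _ _
      have hil : i ≠ l := fun h => hiT (h ▸ hlT)
      have hjl : j ≠ l := fun h => hjT (h ▸ hlT)
      have hlj : l ≠ j := hjl.symm
      have hli : l ≠ i := hil.symm
      have hji : j ≠ i := hij.symm
      -- step 1 : up i, down l
      have hq1 : ∀ x, 0 ≤ transfer q i l (min δ c) x ∧ transfer q i l (min δ c) x < 1 :=
        transfer_valid hq hm'pos.le (by linarith) (by linarith) hil
      have hs1 : ∑ x, transfer q i l (min δ c) x = (k : ℝ) := by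
        rw [transfer_sum q (min δ c) hil]; exact hs
      have hv1i : transfer q i l (min δ c) i = q i + min δ c := transfer_fst q i l (min δ c)
      have hv1l : transfer q i l (min δ c) l = q l - min δ c := transfer_snd q (min δ c) hil
      have hv1j : transfer q i l (min δ c) j = q j := transfer_other q (min δ c) hji hjl
      have heq1 : q = transfer (transfer q i l (min δ c)) l i (min δ c) := by
        funext x
        by_cases hxl : x = l
        · rw [hxl, transfer_fst, hv1l]; ring
        · by_cases hxi : x = i
          · rw [hxi, transfer_snd _ _ hli, hv1i]; ring
          · rw [transfer_other _ _ hxl hxi, transfer_other q (min δ c) hxi hxl]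
      obtain ⟨h1a, h1b⟩ := core hr hmono hq1 hs1 hli hm'pos.le
        (by rw [hv1l]; linarith [(hq l).2]) (by rw [hv1i]; linarith [(hq i).1]) hT hlT hiT
      rw [← heq1] at h1a h1b
      -- step 2 : up l, down j
      obtain ⟨h2a, h2b⟩ := core hr hmono hq1 hs1 hlj hm'pos.le
        (by rw [hv1l]; linarith [(hq l).2]) (by rw [hv1j]; linarith) hT hlT hjT
      -- the vector after both steps
      have hq2 : ∀ x, 0 ≤ transfer (transfer q i l (min δ c)) l j (min δ c) x ∧
          transfer (transfer q i l (min δ c)) l j (min δ c) x < 1 :=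
        transfer_valid hq1 hm'pos.le (by rw [hv1l]; linarith [(hq l).2])
          (by rw [hv1j]; linarith) hlj
      have hs2 : ∑ x, transfer (transfer q i l (min δ c)) l j (min δ c) x = (k : ℝ) := by
        rw [transfer_sum _ (min δ c) hlj]; exact hs1
      have hv2l : transfer (transfer q i l (min δ c)) l j (min δ c) l = q l := by
        rw [transfer_fst, hv1l]; ring
      have hv2j : transfer (transfer q i l (min δ c)) l j (min δ c) j = q j - min δ c := by
        rw [transfer_snd _ _ hlj, hv1j]
      have hv2i : transfer (transfer q i l (min δ c)) l j (min δ c) i = q i + min δ c := by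
        rw [transfer_other _ _ hil hij, hv1i]
      -- recursion
      have hNc : δ - min δ c ≤ (N : ℝ) * c := by
        rcases le_total δ c with h | h
        · rw [min_eq_left h]; simp; positivity
        · rw [min_eq_right h]; linarith
      have hrec := ih (transfer (transfer q i l (min δ c)) l j (min δ c)) hq2 hs2
        (δ - min δ c) (by linarith) hNc
        (by rw [hv2i]; linarith) (by rw [hv2j]; linarith) (by rw [hv2l]; exact hl)
      have heq2 : transfer (transfer (transfer q i l (min δ c)) l j (min δ c)) i j (δ - min δ c)
          = transfer q i j δ := by
        funext x
        by_cases hxi : x = i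
        · rw [hxi, transfer_fst, hv2i, transfer_fst]; ring
        · by_cases hxj : x = j
          · rw [hxj, transfer_snd _ _ hij, hv2j, transfer_snd _ _ hij]; ring
          · rw [transfer_other _ _ hxi hxj, transfer_other _ _ hxi hxj]
            by_cases hxl : x = l
            · rw [hxl, hv2l]
            · rw [transfer_other _ _ hxl hxj, transfer_other _ _ hxi hxl]
      rw [heq2] at hrec
      rw [abs_le] at hrec ⊢
      obtain ⟨hrec1, hrec2⟩ := hrec
      constructor <;> linarith


/-- A single mass transfer changes `r · T` by at most `2δ`. -/
lemma move (hr : IsRoundingRule n r) (hmono : SelectionMonotone n r) {k : ℕ}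
    {q : Fin n → ℝ} (hq : ∀ x, 0 ≤ q x ∧ q x < 1) (hs : ∑ x, q x = (k : ℝ))
    {i j : Fin n} (hij : i ≠ j) {δ : ℝ} (hδ : 0 ≤ δ)
    (hi : q i + δ < 1) (hj : δ ≤ q j)
    {T : Finset (Fin n)} (hT : T.card = k) :
    |r (transfer q i j δ) T - r q T| ≤ 2 * δ := by
  have hq' : ∀ x, 0 ≤ transfer q i j δ x ∧ transfer q i j δ x < 1 :=
    transfer_valid hq hδ hi hj hij
  have hs' : ∑ x, transfer q i j δ x = (k : ℝ) := by
    rw [transfer_sum q δ hij]; exact hs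
  by_cases hiT : i ∈ T <;> by_cases hjT : j ∈ T
  · -- both in T : route through some l ∉ T
    have hn : 0 < n := i.pos
    have hlt : (k : ℝ) < n := by
      rw [← hs]
      calc ∑ x, q x < ∑ _x : Fin n, (1 : ℝ) :=
            Finset.sum_lt_sum_of_nonempty (by simp [Finset.univ_nonempty_iff, ← Fin.pos_iff_nonempty, hn])
              (fun x _ => (hq x).2)
        _ = n := by simp
    have hkn : k < n := by exact_mod_cast hlt
    have hTne : T ≠ Finset.univ := by
      intro h
      rw [h, Finset.card_univ, Fintype.card_fin] at hT
      omega
    obtain ⟨l, -, hlT⟩ := Finset.exists_of_ssubset (Finset.ssubset_univ_iff.2 hTne)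
    have hc : 0 < (1 - q l) / 2 := by linarith [(hq l).2]
    have hl : q l + (1 - q l) / 2 < 1 := by linarith [(hq l).2]
    obtain ⟨N, hN⟩ := exists_nat_ge (δ / ((1 - q l) / 2))
    have hδN : δ ≤ (N : ℝ) * ((1 - q l) / 2) := by
      rw [div_le_iff₀ hc] at hN; linarith
    exact route_in hr hmono hT hij hiT hjT hlT N q hq hs δ hδ hδN hi hj hl
  · -- i ∈ T, j ∉ T : direct
    obtain ⟨h1, h2⟩ := core hr hmono hq hs hij hδ hi hj hT hiT hjT
    rw [abs_le]; constructor <;> linarith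
  · -- i ∉ T, j ∈ T : direct, reversed
    have heq : q = transfer (transfer q i j δ) j i δ := by
      funext x
      by_cases hxj : x = j
      · rw [hxj, transfer_fst, transfer_snd q δ hij]; ring
      · by_cases hxi : x = i
        · rw [hxi, transfer_snd _ _ (Ne.symm hij), transfer_fst]; ring
        · rw [transfer_other _ _ hxj hxi, transfer_other q δ hxi hxj]
    obtain ⟨h1, h2⟩ := core hr hmono hq' hs' (Ne.symm hij) hδ
      (by rw [transfer_snd q δ hij]; linarith [(hq j).2])
      (by rw [transfer_fst]; linarith [(hq i).1]) hT hjT hiT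
    rw [← heq] at h1 h2
    rw [abs_le]; constructor <;> linarith
  · -- both outside T : route through some l ∈ T, or degenerate
    by_cases hex : ∃ l ∈ T, 0 < q l
    · obtain ⟨l, hlT, hql⟩ := hex
      obtain ⟨N, hN⟩ := exists_nat_ge (δ / q l)
      have hδN : δ ≤ (N : ℝ) * q l := by
        rw [div_le_iff₀ hql] at hN; linarith
      exact route_out hr hmono hT hij hiT hjT hlT N q hq hs δ hδ hδN hi hj le_rfl
    · push_neg at hex
      rcases Finset.eq_empty_or_nonempty T with hTe | ⟨l, hlT⟩
      · -- T = ∅, so k = 0 and q = 0, δ = 0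
        have hk0 : k = 0 := by rw [hTe] at hT; simpa using hT.symm
        have hq0 : ∀ x ∈ Finset.univ, q x = 0 := by
          rw [← Finset.sum_eq_zero_iff_of_nonneg (fun x _ => (hq x).1)]
          rw [hs, hk0]; simp
        have hδ0 : δ = 0 := le_antisymm (by rw [← hq0 j (Finset.mem_univ j)]; exact hj) hδ
        subst hδ0
        simp [transfer_zero]
      · have hql : q l = 0 := le_antisymm (hex l hlT) (hq l).1
        have h1 : r q T = 0 := le_antisymm (hql ▸ marg_le hr hq hs hlT)
          ((hr q k hq hs).1 T)
        have hli : l ≠ i := fun h => hiT (h ▸ hlT)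
        have hlj : l ≠ j := fun h => hjT (h ▸ hlT)
        have hql' : transfer q i j δ l = 0 := by rw [transfer_other q δ hli hlj]; exact hql
        have h2 : r (transfer q i j δ) T = 0 := le_antisymm
          (hql' ▸ marg_le hr hq' hs' hlT) ((hr (transfer q i j δ) k hq' hs').1 T)
        rw [h1, h2]
        simp; linarith


lemma main_aux (hr : IsRoundingRule n r) (hmono : SelectionMonotone n r) (k : ℕ)
    (T : Finset (Fin n)) (hT : T.card = k) :
    ∀ N : ℕ, ∀ p p' : Fin n → ℝ,
      (∀ x, 0 ≤ p x ∧ p x < 1) → (∀ x, 0 ≤ p' x ∧ p' x < 1) →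
      (∑ x, p x = (k : ℝ)) → (∑ x, p' x = (k : ℝ)) →
      (Finset.univ.filter (fun l => p l ≠ p' l)).card ≤ N →
      |r p' T - r p T| ≤ ∑ x, |p x - p' x| := by
  intro N
  induction N with
  | zero =>
    intro p p' hp hp' hs hs' hcard
    have he : (Finset.univ.filter (fun l => p l ≠ p' l)) = ∅ :=
      Finset.card_eq_zero.1 (le_antisymm hcard (Nat.zero_le _))
    have hpp : p = p' := by
      funext x
      by_contra hx
      have : x ∈ Finset.univ.filter (fun l => p l ≠ p' l) := by simp [hx]
      rw [he] at this
      exact absurd this (Finset.notMem_empty x)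
    rw [hpp]
    simp
  | succ N ih =>
    intro p p' hp hp' hs hs' hcard
    by_cases hpp : p = p'
    · rw [hpp]
      simp
    · -- find an index where they differ
      have hne : ∃ x, p x ≠ p' x := by
        by_contra h
        push_neg at h
        exact hpp (funext h)
      obtain ⟨x₀, hx₀⟩ := hne
      -- find i with p i < p' i and j with p' j < p j
      have hi : ∃ i, p i < p' i := by
        by_contra h
        push_neg at h
        have : ∑ x, p' x < ∑ x, p x :=
          Finset.sum_lt_sum (fun x _ => h x)
            ⟨x₀, Finset.mem_univ x₀, lt_of_le_of_ne (h x₀) (Ne.symm hx₀)⟩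
        rw [hs, hs'] at this
        exact lt_irrefl _ this
      have hj : ∃ j, p' j < p j := by
        by_contra h
        push_neg at h
        have : ∑ x, p x < ∑ x, p' x :=
          Finset.sum_lt_sum (fun x _ => h x)
            ⟨x₀, Finset.mem_univ x₀, lt_of_le_of_ne (h x₀) hx₀⟩
        rw [hs, hs'] at this
        exact lt_irrefl _ this
      obtain ⟨i, hilt⟩ := hi
      obtain ⟨j, hjlt⟩ := hj
      have hij : i ≠ j := by
        intro h
        rw [h] at hilt
        exact absurd hilt (not_lt.2 hjlt.le)
      set δ := min (p' i - p i) (p j - p' j) with hδdef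
      have hδpos : 0 < δ := lt_min (by linarith) (by linarith)
      have hδ1 : δ ≤ p' i - p i := min_le_left _ _
      have hδ2 : δ ≤ p j - p' j := min_le_right _ _
      have hmv := move hr hmono hp hs hij hδpos.le
        (by linarith [(hp' i).2]) (by linarith [(hp' j).1]) hT
      have hq : ∀ y, 0 ≤ transfer p i j δ y ∧ transfer p i j δ y < 1 :=
        transfer_valid hp hδpos.le (by linarith [(hp' i).2]) (by linarith [(hp' j).1]) hij
      have hqs : ∑ y, transfer p i j δ y = (k : ℝ) := by
        rw [transfer_sum p δ hij]; exact hs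
      -- the difference set shrinks
      have himem : i ∈ Finset.univ.filter (fun l => p l ≠ p' l) := by
        simp [ne_of_lt hilt]
      have hjmem : j ∈ Finset.univ.filter (fun l => p l ≠ p' l) := by
        simp [(ne_of_lt hjlt).symm]
      have hsubcard : (Finset.univ.filter (fun l => transfer p i j δ l ≠ p' l)).card ≤ N := by
        rcases min_cases (p' i - p i) (p j - p' j) with ⟨hmin, -⟩ | ⟨hmin, -⟩
        · -- δ = p' i - p i, so transfer agrees with p' at i
          have hqi : transfer p i j δ i = p' i := by
            rw [transfer_fst, hδdef, hmin]; ring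
          have hsub : Finset.univ.filter (fun l => transfer p i j δ l ≠ p' l) ⊆
              (Finset.univ.filter (fun l => p l ≠ p' l)).erase i := by
            intro y hy
            simp only [Finset.mem_filter, Finset.mem_univ, true_and] at hy
            rw [Finset.mem_erase]
            constructor
            · intro h; rw [h, hqi] at hy; exact hy rfl
            · simp only [Finset.mem_filter, Finset.mem_univ, true_and]
              by_cases hyi : y = i
              · rw [hyi, hqi] at hy; exact absurd rfl hy
              · by_cases hyj : y = j
                · rw [hyj]; exact ne_of_gt hjlt
                · rw [← transfer_other p δ hyi hyj]; exact hy
          calc (Finset.univ.filter (fun l => transfer p i j δ l ≠ p' l)).card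
              ≤ ((Finset.univ.filter (fun l => p l ≠ p' l)).erase i).card :=
                Finset.card_le_card hsub
            _ = (Finset.univ.filter (fun l => p l ≠ p' l)).card - 1 :=
                Finset.card_erase_of_mem himem
            _ ≤ N := by omega
        · -- δ = p j - p' j, so transfer agrees with p' at j
          have hqj : transfer p i j δ j = p' j := by
            rw [transfer_snd p δ hij, hδdef, hmin]; ring
          have hsub : Finset.univ.filter (fun l => transfer p i j δ l ≠ p' l) ⊆
              (Finset.univ.filter (fun l => p l ≠ p' l)).erase j := by
            intro y hy
            simp only [Finset.mem_filter, Finset.mem_univ, true_and] at hy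
            rw [Finset.mem_erase]
            constructor
            · intro h; rw [h, hqj] at hy; exact hy rfl
            · simp only [Finset.mem_filter, Finset.mem_univ, true_and]
              by_cases hyj : y = j
              · rw [hyj, hqj] at hy; exact absurd rfl hy
              · by_cases hyi : y = i
                · rw [hyi]; exact ne_of_lt hilt
                · rw [← transfer_other p δ hyi hyj]; exact hy
          calc (Finset.univ.filter (fun l => transfer p i j δ l ≠ p' l)).card
              ≤ ((Finset.univ.filter (fun l => p l ≠ p' l)).erase j).card :=
                Finset.card_le_card hsub
            _ = (Finset.univ.filter (fun l => p l ≠ p' l)).card - 1 :=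
                Finset.card_erase_of_mem hjmem
            _ ≤ N := by omega
      have hih := ih (transfer p i j δ) p' hq hp' hqs hs' hsubcard
      -- the ℓ₁ norm identity
      have hl1 : ∑ x, |transfer p i j δ x - p' x| = (∑ x, |p x - p' x|) - 2 * δ := by
        have hterm : ∀ x : Fin n, |p x - p' x| - |transfer p i j δ x - p' x|
            = (if x = i then δ else 0) + (if x = j then δ else 0) := by
          intro x
          by_cases hxi : x = i
          · rw [hxi, transfer_fst]
            rw [if_pos rfl, if_neg hij]
            rw [abs_of_nonpos (by linarith), abs_of_nonpos (by linarith)]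
            ring
          · by_cases hxj : x = j
            · rw [hxj, transfer_snd p δ hij]
              rw [if_neg (Ne.symm hij), if_pos rfl]
              rw [abs_of_nonneg (by linarith), abs_of_nonneg (by linarith)]
              ring
            · rw [transfer_other p δ hxi hxj, if_neg hxi, if_neg hxj]
              ring
        have hsum2 : ∑ x, (|p x - p' x| - |transfer p i j δ x - p' x|) = 2 * δ := by
          rw [Finset.sum_congr rfl fun x _ => hterm x]
          rw [Finset.sum_add_distrib]
          simp
          ring
        rw [Finset.sum_sub_distrib] at hsum2
        linarith
      calc |r p' T - r p T| ≤ |r p' T - r (transfer p i j δ) T|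
            + |r (transfer p i j δ) T - r p T| := abs_sub_le _ _ _
        _ ≤ ((∑ x, |p x - p' x|) - 2 * δ) + 2 * δ := by
            rw [← hl1]
            exact add_le_add hih hmv
        _ = ∑ x, |p x - p' x| := by ring

end SMAux

/-- Any selection monotone rounding rule is Lipschitz continuous with constant
`1` in the `ℓ₁` norm. -/
theorem selection_monotone_lipschitz {n : ℕ} (r : (Fin n → ℝ) → Finset (Fin n) → ℝ)
    (hr : IsRoundingRule n r) (hmono : SelectionMonotone n r)
    (k : ℕ) (p p' : Fin n → ℝ)
    (hp : ∀ i, 0 ≤ p i ∧ p i < 1) (hp' : ∀ i, 0 ≤ p' i ∧ p' i < 1)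
    (hsum : ∑ i, p i = (k : ℝ)) (hsum' : ∑ i, p' i = (k : ℝ))
    (T : Finset (Fin n)) (hT : T.card = k) :
    |r p' T - r p T| ≤ ∑ i, |p i - p' i| := by
  exact SMAux.main_aux hr hmono k T hT
    ((Finset.univ.filter (fun l => p l ≠ p' l)).card) p p' hp hp' hsum hsum' le_rfl
end

section
/- Let r be a rounding rule for n parties (n ≥ 2) that satisfies selection monotonicity, let p ∈ [0,1)^n sum to an integer k, and let δ be a real number with 0 < δ < min(p_2, 1 − p_1). Define p' ∈ [0,1)^n by p'_1 := p_1 + δ, p'_2 := p_2 − δ, and p'_i := p_i for all i ≥ 3. Then for every k-element subset T of {1,…,n}, it holds that |P[r(p') = T] − P[r(p) = T]| ≤ 2δ. -/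
open Finset

namespace SelMonoAux

variable {n : ℕ}

/-- Move `ε` of mass from coordinate `v` to coordinate `u`. -/
def mv (u v : Fin n) (ε : ℝ) (p : Fin n → ℝ) : Fin n → ℝ :=
  fun i => if i = u then p i + ε else if i = v then p i - ε else p i

lemma mv_apply_u (u v : Fin n) (ε : ℝ) (p : Fin n → ℝ) : mv u v ε p u = p u + ε := by
  simp [mv]

lemma mv_apply_v {u v : Fin n} (huv : u ≠ v) (ε : ℝ) (p : Fin n → ℝ) :
    mv u v ε p v = p v - ε := by
  simp [mv, huv.symm]

lemma mv_apply_other {u v i : Fin n} (hu : i ≠ u) (hv : i ≠ v) (ε : ℝ) (p : Fin n → ℝ) :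
    mv u v ε p i = p i := by
  simp [mv, hu, hv]

lemma mv_zero (u v : Fin n) (p : Fin n → ℝ) : mv u v 0 p = p := by
  funext i; simp [mv]

lemma mv_sum (u v : Fin n) (huv : u ≠ v) (ε : ℝ) (p : Fin n → ℝ) :
    ∑ i, mv u v ε p i = ∑ i, p i := by
  have h : ∀ i : Fin n, mv u v ε p i
      = p i + ((if i = u then ε else 0) - (if i = v then ε else 0)) := by
    intro i
    by_cases h1 : i = u
    · subst h1; simp [mv, huv]
    · by_cases h2 : i = v
      · subst h2; simp [mv, h1, sub_eq_add_neg]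
      · simp [mv, h1, h2]
  rw [Finset.sum_congr rfl fun i _ => h i, Finset.sum_add_distrib, Finset.sum_sub_distrib]
  simp

/-- The key lemma: for a two-coordinate move increasing `u ∈ T` and decreasing
`v ∉ T` by `ε`, the probability of `T` increases by an amount in `[0, 2ε]`. -/
lemma key {r : (Fin n → ℝ) → Finset (Fin n) → ℝ}
    (hr : IsRoundingRule n r) (hmono : SelectionMonotone n r)
    (k : ℕ) (p : Fin n → ℝ) (hp : ∀ i, 0 ≤ p i ∧ p i < 1) (hsum : ∑ i, p i = (k : ℝ))
    (u v : Fin n) (huv : u ≠ v) (ε : ℝ) (hε : 0 ≤ ε)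
    (h1 : p u + ε < 1) (h2 : ε ≤ p v)
    (T : Finset (Fin n)) (hT : T.card = k) (hu : u ∈ T) (hv : v ∉ T) :
    0 ≤ r (mv u v ε p) T - r p T ∧ r (mv u v ε p) T - r p T ≤ 2 * ε := by
  set q := mv u v ε p with hqdef
  have hqu : q u = p u + ε := mv_apply_u u v ε p
  have hqv : q v = p v - ε := mv_apply_v huv ε p
  have hq : ∀ i, 0 ≤ q i ∧ q i < 1 := by
    intro i
    by_cases hiu : i = u
    · subst hiu; rw [hqu]; exact ⟨by linarith [(hp i).1], h1⟩
    · by_cases hiv : i = v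
      · subst hiv; rw [hqv]; exact ⟨by linarith, by linarith [(hp i).2]⟩
      · rw [hqdef, mv_apply_other hiu hiv]; exact hp i
  have hqsum : ∑ i, q i = (k : ℝ) := by rw [hqdef, mv_sum u v huv ε p]; exact hsum
  obtain ⟨hpn, hps, hpsupp, hpm⟩ := hr p k hp hsum
  obtain ⟨hqn, hqs, hqsupp, hqm⟩ := hr q k hq hqsum
  -- termwise monotonicity on the two "aligned" classes
  have ha : ∀ A : Finset (Fin n), u ∈ A → v ∉ A → r p A ≤ r q A := by
    intro A hAu hAv
    by_cases hAk : A.card = k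
    · refine hmono k p q hp hq hsum hqsum A hAk ?_ ?_
      · intro i hi
        by_cases hiu : i = u
        · subst hiu; rw [hqu]; linarith
        · have hiv : i ≠ v := fun h => hAv (h ▸ hi)
          rw [hqdef, mv_apply_other hiu hiv]
      · intro i hi
        have hiu : i ≠ u := fun h => hi (h ▸ hAu)
        by_cases hiv : i = v
        · subst hiv; rw [hqv]; linarith
        · rw [hqdef, mv_apply_other hiu hiv]
    · have e1 : r p A = 0 := by by_contra h; exact hAk (hpsupp A h)
      have e2 : r q A = 0 := by by_contra h; exact hAk (hqsupp A h)
      rw [e1, e2]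
  have hc : ∀ A : Finset (Fin n), v ∈ A → u ∉ A → r q A ≤ r p A := by
    intro A hAv hAu
    by_cases hAk : A.card = k
    · refine hmono k q p hq hp hqsum hsum A hAk ?_ ?_
      · intro i hi
        have hiu : i ≠ u := fun h => hAu (h ▸ hi)
        by_cases hiv : i = v
        · subst hiv; rw [hqv]; linarith
        · rw [hqdef, mv_apply_other hiu hiv]
      · intro i hi
        have hiv : i ≠ v := fun h => hi (h ▸ hAv)
        by_cases hiu : i = u
        · subst hiu; rw [hqu]; linarith
        · rw [hqdef, mv_apply_other hiu hiv]
    · have e1 : r p A = 0 := by by_contra h; exact hAk (hpsupp A h)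
      have e2 : r q A = 0 := by by_contra h; exact hAk (hqsupp A h)
      rw [e1, e2]
  -- marginal sums of the difference
  set f : Finset (Fin n) → ℝ := fun A => r q A - r p A with hfdef
  have hU : ∑ A ∈ (univ : Finset (Finset (Fin n))).filter (fun A => u ∈ A), f A = ε := by
    rw [hfdef]
    rw [Finset.sum_sub_distrib, hqm u, hpm u, hqu]; ring
  have hV : ∑ A ∈ (univ : Finset (Finset (Fin n))).filter (fun A => v ∈ A), f A = -ε := by
    rw [hfdef]
    rw [Finset.sum_sub_distrib, hqm v, hpm v, hqv]; ring
  -- split according to membership of the other coordinate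
  have hUsplit :
      ∑ A ∈ (univ : Finset (Finset (Fin n))).filter (fun A => u ∈ A ∧ v ∈ A), f A
        + ∑ A ∈ (univ : Finset (Finset (Fin n))).filter (fun A => u ∈ A ∧ v ∉ A), f A = ε := by
    rw [← hU, ← Finset.sum_filter_add_sum_filter_not
      ((univ : Finset (Finset (Fin n))).filter (fun A => u ∈ A)) (fun A => v ∈ A) f]
    rw [Finset.filter_filter, Finset.filter_filter]
  have hVsplit :
      ∑ A ∈ (univ : Finset (Finset (Fin n))).filter (fun A => v ∈ A ∧ u ∈ A), f A
        + ∑ A ∈ (univ : Finset (Finset (Fin n))).filter (fun A => v ∈ A ∧ u ∉ A), f A = -ε := by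
    rw [← hV, ← Finset.sum_filter_add_sum_filter_not
      ((univ : Finset (Finset (Fin n))).filter (fun A => v ∈ A)) (fun A => u ∈ A) f]
    rw [Finset.filter_filter, Finset.filter_filter]
  have hBeq :
      ∑ A ∈ (univ : Finset (Finset (Fin n))).filter (fun A => v ∈ A ∧ u ∈ A), f A
        = ∑ A ∈ (univ : Finset (Finset (Fin n))).filter (fun A => u ∈ A ∧ v ∈ A), f A := by
    congr 1
    apply Finset.filter_congr
    intro A _; exact and_comm
  have hVcnonpos :
      ∑ A ∈ (univ : Finset (Finset (Fin n))).filter (fun A => v ∈ A ∧ u ∉ A), f A ≤ 0 := by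
    apply Finset.sum_nonpos
    intro A hA
    rw [Finset.mem_filter] at hA
    have := hc A hA.2.1 hA.2.2
    rw [hfdef]; simp only; linarith
  have hTmem : T ∈ (univ : Finset (Finset (Fin n))).filter (fun A => u ∈ A ∧ v ∉ A) :=
    Finset.mem_filter.mpr ⟨Finset.mem_univ T, hu, hv⟩
  have hUa_nonneg : ∀ A ∈ (univ : Finset (Finset (Fin n))).filter (fun A => u ∈ A ∧ v ∉ A),
      0 ≤ f A := by
    intro A hA
    rw [Finset.mem_filter] at hA
    have := ha A hA.2.1 hA.2.2
    rw [hfdef]; simp only; linarith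
  have hle : f T ≤ ∑ A ∈ (univ : Finset (Finset (Fin n))).filter (fun A => u ∈ A ∧ v ∉ A), f A :=
    Finset.single_le_sum hUa_nonneg hTmem
  have h0 : 0 ≤ f T := hUa_nonneg T hTmem
  constructor
  · exact h0
  · have : f T ≤ 2 * ε := by
      rw [hBeq] at hVsplit
      linarith
    exact this

/-- Chaining small moves. -/
lemma chain {r : (Fin n → ℝ) → Finset (Fin n) → ℝ} (T : Finset (Fin n))
    (p : Fin n → ℝ) (i0 i1 : Fin n) (δ ε : ℝ) (hε : 0 ≤ ε) (m : ℕ)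
    (hm : (m : ℝ) * ε = δ)
    (step : ∀ t : ℝ, 0 ≤ t → t + ε ≤ δ →
      |r (mv i0 i1 (t + ε) p) T - r (mv i0 i1 t p) T| ≤ 2 * ε) :
    |r (mv i0 i1 δ p) T - r p T| ≤ 2 * δ := by
  have aux : ∀ i : ℕ, i ≤ m → |r (mv i0 i1 (i * ε) p) T - r p T| ≤ 2 * (i * ε) := by
    intro i
    induction i with
    | zero => intro _; simp [mv_zero]
    | succ i ih =>
      intro hi
      have hi' : i ≤ m := Nat.le_of_succ_le hi
      have h1 := ih hi'
      have ht : (0:ℝ) ≤ (i : ℝ) * ε := by positivity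
      have him : ((i : ℝ) + 1) ≤ (m : ℝ) := by exact_mod_cast hi
      have hte : (i : ℝ) * ε + ε ≤ δ := by nlinarith
      have h2 := step ((i : ℝ) * ε) ht hte
      have hcast : ((i + 1 : ℕ) : ℝ) * ε = (i : ℝ) * ε + ε := by push_cast; ring
      rw [hcast]
      calc |r (mv i0 i1 ((i:ℝ)*ε + ε) p) T - r p T|
          ≤ |r (mv i0 i1 ((i:ℝ)*ε + ε) p) T - r (mv i0 i1 ((i:ℝ)*ε) p) T|
            + |r (mv i0 i1 ((i:ℝ)*ε) p) T - r p T| := abs_sub_le _ _ _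
        _ ≤ 2*ε + 2*((i:ℝ)*ε) := add_le_add h2 h1
        _ = 2*((i:ℝ)*ε + ε) := by ring
  have := aux m le_rfl
  rw [hm] at this
  exact this

/-- Validity of all intermediate shift vectors. -/
lemma shift_valid (p : Fin n → ℝ) (hp : ∀ i, 0 ≤ p i ∧ p i < 1)
    (i0 i1 : Fin n) (hne : i0 ≠ i1) (δ s : ℝ)
    (hδ1 : δ < 1 - p i0) (hδ2 : δ < p i1)
    (hs0 : 0 ≤ s) (hsδ : s ≤ δ) :
    ∀ i, 0 ≤ mv i0 i1 s p i ∧ mv i0 i1 s p i < 1 := by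
  intro i
  by_cases h0 : i = i0
  · subst h0; rw [mv_apply_u]; exact ⟨by linarith [(hp i).1], by linarith⟩
  · by_cases h1 : i = i1
    · subst h1; rw [mv_apply_v hne]; exact ⟨by linarith, by linarith [(hp i).2]⟩
    · rw [mv_apply_other h0 h1]; exact hp i

end SelMonoAux

open SelMonoAux

/-- Moving `δ` of residue from party `2` to party `1` changes the probability of
any `k`-element set by at most `2δ`, for any selection monotone rounding rule. -/
theorem selection_monotone_two_coordinate_lipschitz {n : ℕ} (hn : 2 ≤ n)
    (r : (Fin n → ℝ) → Finset (Fin n) → ℝ)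
    (hr : IsRoundingRule n r) (hmono : SelectionMonotone n r)
    (k : ℕ) (p : Fin n → ℝ) (hp : ∀ i, 0 ≤ p i ∧ p i < 1)
    (hsum : ∑ i, p i = (k : ℝ)) (δ : ℝ) (hδ0 : 0 < δ)
    (hδ2 : δ < p ⟨1, by omega⟩) (hδ1 : δ < 1 - p ⟨0, by omega⟩)
    (T : Finset (Fin n)) (hT : T.card = k) :
    |r (fun i => if i.val = 0 then p i + δ else if i.val = 1 then p i - δ else p i) T -
        r p T| ≤ 2 * δ := by
  set i0 : Fin n := ⟨0, by omega⟩ with hi0def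
  set i1 : Fin n := ⟨1, by omega⟩ with hi1def
  have hne : i0 ≠ i1 := by
    intro h
    have : (0 : ℕ) = 1 := congrArg Fin.val h
    exact absurd this (by norm_num)
  have hδ2' : δ < p i1 := hδ2
  have hδ1' : δ < 1 - p i0 := hδ1
  have hp'eq : (fun i : Fin n => if i.val = 0 then p i + δ else if i.val = 1 then p i - δ
      else p i) = mv i0 i1 δ p := by
    funext i
    simp only [mv, Fin.ext_iff, hi0def, hi1def]
  rw [hp'eq]
  by_cases h0T : i0 ∈ T <;> by_cases h1T : i1 ∈ T
  · -- Class b : both coordinates in T; chain through a pivot j ∉ T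
    -- first, find j ∉ T with 0 < p j
    have hTlt : ∑ i ∈ T, p i < (k : ℝ) := by
      have hlt : ∑ i ∈ T, p i < ∑ i ∈ T, (1:ℝ) :=
        Finset.sum_lt_sum_of_nonempty ⟨i0, h0T⟩ (fun i _ => (hp i).2)
      have : ∑ i ∈ T, (1:ℝ) = (k : ℝ) := by rw [Finset.sum_const, hT]; simp
      linarith
    have hsplit : ∑ i ∈ T, p i + ∑ i ∈ Tᶜ, p i = (k : ℝ) := by
      rw [Finset.sum_add_sum_compl]; exact hsum
    have hcomp : 0 < ∑ i ∈ Tᶜ, p i := by linarith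
    obtain ⟨j, hjmem, hjpos⟩ : ∃ j ∈ Tᶜ, 0 < p j := by
      by_contra h
      push_neg at h
      have : ∑ i ∈ Tᶜ, p i ≤ 0 := Finset.sum_nonpos fun i hi => h i hi
      linarith
    have hjT : j ∉ T := by simpa using hjmem
    have hj0 : j ≠ i0 := fun h => hjT (h ▸ h0T)
    have hj1 : j ≠ i1 := fun h => hjT (h ▸ h1T)
    set m : ℕ := ⌈δ / p j⌉₊ + 1 with hmdef
    have hmpos : (0:ℝ) < (m:ℝ) := by positivity
    set ε : ℝ := δ / m with hεdef
    have hεpos : 0 < ε := div_pos hδ0 hmpos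
    have hm : (m:ℝ) * ε = δ := by rw [hεdef]; field_simp [hmpos.ne']
    have hεj : ε ≤ p j := by
      have hceil : δ / p j ≤ (⌈δ / p j⌉₊ : ℝ) := Nat.le_ceil _
      have hlt : δ / p j < (m : ℝ) := by
        rw [hmdef]; push_cast; linarith
      have : δ < (m:ℝ) * p j := by
        rw [div_lt_iff₀ hjpos] at hlt; linarith
      rw [hεdef, div_le_iff₀ hmpos]; linarith
    apply chain T p i0 i1 δ ε hεpos.le m hm
    intro t ht hte
    -- shift vectors
    set a := mv i0 i1 t p with hadef
    set b := mv i0 i1 (t + ε) p with hbdef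
    have ha : ∀ i, 0 ≤ a i ∧ a i < 1 :=
      shift_valid p hp i0 i1 hne δ t hδ1' hδ2' ht (by linarith)
    have hb : ∀ i, 0 ≤ b i ∧ b i < 1 :=
      shift_valid p hp i0 i1 hne δ (t + ε) hδ1' hδ2' (by linarith) hte
    have hasum : ∑ i, a i = (k : ℝ) := by rw [hadef, mv_sum _ _ hne]; exact hsum
    have hbsum : ∑ i, b i = (k : ℝ) := by rw [hbdef, mv_sum _ _ hne]; exact hsum
    have haj : a j = p j := mv_apply_other hj0 hj1 _ _
    have hbj : b j = p j := mv_apply_other hj0 hj1 _ _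
    have hai0 : a i0 = p i0 + t := mv_apply_u _ _ _ _
    have hbi1 : b i1 = p i1 - (t + ε) := mv_apply_v hne _ _
    have key1 := key hr hmono k a ha hasum i0 j (Ne.symm hj0) ε hεpos.le
      (by rw [hai0]; linarith) (by rw [haj]; exact hεj) T hT h0T hjT
    have key2 := key hr hmono k b hb hbsum i1 j (Ne.symm hj1) ε hεpos.le
      (by rw [hbi1]; have := (hp i1).2; linarith) (by rw [hbj]; exact hεj) T hT h1T hjT
    have hqeq : mv i1 j ε b = mv i0 j ε a := by
      funext i
      by_cases hI0 : i = i0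
      · subst hI0
        rw [mv_apply_other hne hj0.symm, mv_apply_u, hbdef, hadef, mv_apply_u, mv_apply_u]
        ring
      · by_cases hI1 : i = i1
        · subst hI1
          rw [mv_apply_u, mv_apply_other (Ne.symm hne) hj1.symm, hbdef, hadef,
            mv_apply_v hne, mv_apply_v hne]
          ring
        · by_cases hIj : i = j
          · subst hIj
            rw [mv_apply_v (Ne.symm hj1), mv_apply_v (Ne.symm hj0), hbdef, hadef,
              mv_apply_other hI0 hI1, mv_apply_other hI0 hI1]
          · rw [mv_apply_other hI1 hIj, mv_apply_other hI0 hIj, hbdef, hadef,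
              mv_apply_other hI0 hI1, mv_apply_other hI0 hI1]
    rw [hqeq] at key2
    rw [abs_le]
    constructor <;> linarith [key1.1, key1.2, key2.1, key2.2]
  · -- Class a : i0 ∈ T, i1 ∉ T : direct application of key lemma
    have h := key hr hmono k p hp hsum i0 i1 hne δ hδ0.le (by linarith) (by linarith)
      T hT h0T h1T
    rw [abs_le]
    constructor <;> linarith [h.1, h.2]
  · -- Class c : i1 ∈ T, i0 ∉ T : reverse application of key lemma
    set p2 := mv i0 i1 δ p with hp2def
    have hp2 : ∀ i, 0 ≤ p2 i ∧ p2 i < 1 :=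
      shift_valid p hp i0 i1 hne δ δ hδ1' hδ2' hδ0.le le_rfl
    have hp2sum : ∑ i, p2 i = (k : ℝ) := by rw [hp2def, mv_sum _ _ hne]; exact hsum
    have hp2i0 : p2 i0 = p i0 + δ := mv_apply_u _ _ _ _
    have hp2i1 : p2 i1 = p i1 - δ := mv_apply_v hne _ _
    have hback : mv i1 i0 δ p2 = p := by
      funext i
      by_cases hI0 : i = i0
      · subst hI0
        rw [mv_apply_v (Ne.symm hne), hp2i0]; ring
      · by_cases hI1 : i = i1
        · subst hI1
          rw [mv_apply_u, hp2i1]; ring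
        · rw [mv_apply_other hI1 hI0, hp2def, mv_apply_other hI0 hI1]
    have h := key hr hmono k p2 hp2 hp2sum i1 i0 (Ne.symm hne) δ hδ0.le
      (by rw [hp2i1]; have := (hp i1).2; linarith)
      (by rw [hp2i0]; have := (hp i0).1; linarith) T hT h1T h0T
    rw [hback] at h
    rw [abs_le]
    constructor <;> linarith [h.1, h.2]
  · -- Class e : neither in T; chain through a pivot w ∈ T
    have hTne : T.Nonempty := by
      rcases Finset.eq_empty_or_nonempty T with h | h
      · exfalso
        have hk0 : k = 0 := by rw [← hT, h]; simp
        have : p i1 ≤ ∑ i, p i := Finset.single_le_sum (fun i _ => (hp i).1) (mem_univ i1)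
        rw [hsum, hk0] at this
        simp at this
        linarith
      · exact h
    obtain ⟨w, hwT⟩ := hTne
    have hw0 : w ≠ i0 := fun h => h0T (h ▸ hwT)
    have hw1 : w ≠ i1 := fun h => h1T (h ▸ hwT)
    have hwlt : p w < 1 := (hp w).2
    set m : ℕ := ⌈δ / (1 - p w)⌉₊ + 1 with hmdef
    have hmpos : (0:ℝ) < (m:ℝ) := by positivity
    set ε : ℝ := δ / m with hεdef
    have hεpos : 0 < ε := div_pos hδ0 hmpos
    have hm : (m:ℝ) * ε = δ := by rw [hεdef]; field_simp [hmpos.ne']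
    have hwpos : (0:ℝ) < 1 - p w := by linarith
    have hεw : ε < 1 - p w := by
      have hceil : δ / (1 - p w) ≤ (⌈δ / (1 - p w)⌉₊ : ℝ) := Nat.le_ceil _
      have hlt : δ / (1 - p w) < (m : ℝ) := by
        rw [hmdef]; push_cast; linarith
      have : δ < (m:ℝ) * (1 - p w) := by
        rw [div_lt_iff₀ hwpos] at hlt; linarith
      rw [hεdef, div_lt_iff₀ hmpos]; linarith
    apply chain T p i0 i1 δ ε hεpos.le m hm
    intro t ht hte
    set a := mv i0 i1 t p with hadef
    set b := mv i0 i1 (t + ε) p with hbdef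
    have ha : ∀ i, 0 ≤ a i ∧ a i < 1 :=
      shift_valid p hp i0 i1 hne δ t hδ1' hδ2' ht (by linarith)
    have hb : ∀ i, 0 ≤ b i ∧ b i < 1 :=
      shift_valid p hp i0 i1 hne δ (t + ε) hδ1' hδ2' (by linarith) hte
    have hasum : ∑ i, a i = (k : ℝ) := by rw [hadef, mv_sum _ _ hne]; exact hsum
    have hbsum : ∑ i, b i = (k : ℝ) := by rw [hbdef, mv_sum _ _ hne]; exact hsum
    have haw : a w = p w := mv_apply_other hw0 hw1 _ _
    have hbw : b w = p w := mv_apply_other hw0 hw1 _ _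
    have hai0 : a i0 = p i0 + t := mv_apply_u _ _ _ _
    have hai1 : a i1 = p i1 - t := mv_apply_v hne _ _
    have hbi0 : b i0 = p i0 + (t + ε) := mv_apply_u _ _ _ _
    have hbi1 : b i1 = p i1 - (t + ε) := mv_apply_v hne _ _
    -- common apex q1 = mv w i1 ε a = mv w i0 ε b
    have key1 := key hr hmono k a ha hasum w i1 hw1 ε hεpos.le
      (by rw [haw]; linarith) (by rw [hai1]; linarith) T hT hwT h1T
    have key2 := key hr hmono k b hb hbsum w i0 hw0 ε hεpos.le
      (by rw [hbw]; linarith) (by rw [hbi0]; have := (hp i0).1; linarith) T hT hwT h0T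
    have hqeq : mv w i0 ε b = mv w i1 ε a := by
      funext i
      by_cases hIw : i = w
      · subst hIw
        rw [mv_apply_u, mv_apply_u, hbw, haw]
      · by_cases hI0 : i = i0
        · subst hI0
          rw [mv_apply_v hw0, mv_apply_other (Ne.symm hw0) hne, hbi0, hai0]
          ring
        · by_cases hI1 : i = i1
          · subst hI1
            rw [mv_apply_other (Ne.symm hw1) (Ne.symm hne), mv_apply_v hw1, hbi1, hai1]
            ring
          · rw [mv_apply_other hIw hI0, mv_apply_other hIw hI1, hbdef, hadef,
              mv_apply_other hI0 hI1, mv_apply_other hI0 hI1]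
    rw [hqeq] at key2
    rw [abs_le]
    constructor <;> linarith [key1.1, key1.2, key2.1, key2.2]
end

section
/- Grimmett's method satisfies threshold monotonicity for coalitions of size at most 2: let q, q' ∈ ℝ_{≥0}^n be two quota vectors with ∑_i q_i = ∑_i q'_i = h for some h ∈ ℕ, and let T ⊆ {1,…,n} with |T| ≤ 2 be such that q'_i ≥ q_i for all i ∈ T and q'_i ≤ q_i for all i ∉ T. Then for every θ ∈ ℕ, the Lebesgue measure of {u ∈ [0,1) : ∑_{i∈T} N_i^{q'}(u) ≥ θ} is at least the Lebesgue measure of {u ∈ [0,1) : ∑_{i∈T} N_i^{q}(u) ≥ θ}. -/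
open Finset

/-- The number of seats party `i` receives under Grimmett's method with quotas
`q` and shift `u`: `⌊u + ∑_{j ≤ i} q_j⌋ − ⌊u + ∑_{j < i} q_j⌋`. -/
noncomputable def grimmettSeats {n : ℕ} (q : Fin n → ℝ) (u : ℝ) (i : Fin n) : ℤ :=
  ⌊u + ∑ j ∈ univ.filter (fun j : Fin n => j ≤ i), q j⌋ -
    ⌊u + ∑ j ∈ univ.filter (fun j : Fin n => j < i), q j⌋

/-- If a point of a finset of cardinality at most 2 containing `i ≠ j` must be `i` or `j`. -/
lemma grimmett_aux_mem_pair {α : Type*} [DecidableEq α] {T : Finset α} (hT : T.card ≤ 2)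
    {i j k : α} (hi : i ∈ T) (hj : j ∈ T) (hij : i ≠ j) (hk : k ∈ T) : k = i ∨ k = j := by
  by_contra hc
  push_neg at hc
  have hsub : ({k, i, j} : Finset α) ⊆ T := by
    intro x hx
    simp only [Finset.mem_insert, Finset.mem_singleton] at hx
    rcases hx with rfl | rfl | rfl <;> assumption
  have hcard := Finset.card_le_card hsub
  rw [Finset.card_insert_of_notMem (by simp [hc.1, hc.2]),
    Finset.card_insert_of_notMem (by simp [hij])] at hcard
  simp at hcard
  omega

/-- Splitting the `≤ i` prefix sum as the `< i` prefix sum plus the `i`-th term. -/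
lemma grimmett_aux_sum_le_split {n : ℕ} (r : Fin n → ℝ) (i : Fin n) :
    ∑ k ∈ univ.filter (fun k : Fin n => k ≤ i), r k
      = (∑ k ∈ univ.filter (fun k : Fin n => k < i), r k) + r i := by
  have hset : univ.filter (fun k : Fin n => k ≤ i)
      = insert i (univ.filter (fun k : Fin n => k < i)) := by
    ext k
    simp [Finset.mem_insert, le_iff_lt_or_eq, or_comm]
  rw [hset, Finset.sum_insert (by simp)]
  ring

/-- The key combinatorial inequality: for `i, j` in a coalition of size at most 2,
`Y_i + X'_j ≤ Y'_i + X_j` where `Y` denotes `≤`-prefix sums and `X` denotes `<`-prefix sums. -/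
lemma grimmett_aux_key {n : ℕ} (q q' : Fin n → ℝ) (h : ℕ)
    (hqs : ∑ i, q i = (h : ℝ)) (hq's : ∑ i, q' i = (h : ℝ))
    (T : Finset (Fin n)) (hT : T.card ≤ 2)
    (hup : ∀ i ∈ T, q i ≤ q' i) (hdown : ∀ i ∉ T, q' i ≤ q i)
    {i j : Fin n} (hi : i ∈ T) (hj : j ∈ T) :
    (∑ k ∈ univ.filter (fun k : Fin n => k ≤ i), q k)
        + (∑ k ∈ univ.filter (fun k : Fin n => k < j), q' k)
      ≤ (∑ k ∈ univ.filter (fun k : Fin n => k ≤ i), q' k)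
        + (∑ k ∈ univ.filter (fun k : Fin n => k < j), q k) := by
  rcases lt_trichotomy i j with hij | rfl | hij
  · -- i < j : the gap between Y_i and X_j consists of non-coalition parties
    have hsub : univ.filter (fun k : Fin n => k ≤ i) ⊆ univ.filter (fun k : Fin n => k < j) := by
      intro k hk
      simp only [Finset.mem_filter, Finset.mem_univ, true_and] at hk ⊢
      exact lt_of_le_of_lt hk hij
    have hq := Finset.sum_sdiff (f := q) hsub
    have hq' := Finset.sum_sdiff (f := q') hsub
    have hmono : ∑ k ∈ univ.filter (fun k : Fin n => k < j) \ univ.filter (fun k : Fin n => k ≤ i),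
        q' k ≤ ∑ k ∈ univ.filter (fun k : Fin n => k < j) \ univ.filter (fun k : Fin n => k ≤ i),
        q k := by
      apply Finset.sum_le_sum
      intro k hk
      simp only [Finset.mem_sdiff, Finset.mem_filter, Finset.mem_univ, true_and] at hk
      apply hdown
      intro hkT
      rcases grimmett_aux_mem_pair hT hi hj (ne_of_lt hij) hkT with rfl | rfl
      · exact hk.2 le_rfl
      · exact absurd hk.1 (lt_irrefl _)
    linarith
  · -- i = j
    have h1 := grimmett_aux_sum_le_split q i
    have h2 := grimmett_aux_sum_le_split q' i
    have := hup i hi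
    linarith
  · -- j < i : use the total-sum constraint for the complement
    have hsub : univ.filter (fun k : Fin n => k < j) ⊆ univ.filter (fun k : Fin n => k ≤ i) := by
      intro k hk
      simp only [Finset.mem_filter, Finset.mem_univ, true_and] at hk ⊢
      exact le_of_lt (lt_trans hk hij)
    have hq := Finset.sum_sdiff (f := q) hsub
    have hq' := Finset.sum_sdiff (f := q') hsub
    set D : Finset (Fin n) :=
      univ.filter (fun k : Fin n => k ≤ i) \ univ.filter (fun k : Fin n => k < j) with hD
    have hDu : D ⊆ univ := Finset.subset_univ _
    have hqu := Finset.sum_sdiff (f := q) hDu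
    have hq'u := Finset.sum_sdiff (f := q') hDu
    have hmono : ∑ k ∈ univ \ D, q' k ≤ ∑ k ∈ univ \ D, q k := by
      apply Finset.sum_le_sum
      intro k hk
      have hkD : k ∉ D := (Finset.mem_sdiff.mp hk).2
      apply hdown
      intro hkT
      rcases grimmett_aux_mem_pair hT hi hj (ne_of_gt hij) hkT with rfl | rfl
      · exact hkD (Finset.mem_sdiff.mpr
          ⟨Finset.mem_filter.mpr ⟨Finset.mem_univ _, le_rfl⟩,
            fun hc => absurd (Finset.mem_filter.mp hc).2 (lt_asymm hij)⟩)
      · exact hkD (Finset.mem_sdiff.mpr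
          ⟨Finset.mem_filter.mpr ⟨Finset.mem_univ _, le_of_lt hij⟩,
            fun hc => absurd (Finset.mem_filter.mp hc).2 (lt_irrefl _)⟩)
    rw [hqs] at hqu
    rw [hq's] at hq'u
    linarith

/-- Monotonicity of floor differences under interval inclusion (after a shift `t`). -/
lemma grimmett_aux_floor_mono {x y x' y' t u : ℝ} (hx : x' + t ≤ x) (hy : y ≤ y' + t) :
    (⌊u + y⌋ - ⌊u + x⌋ : ℤ) ≤ ⌊u + t + y'⌋ - ⌊u + t + x'⌋ := by
  have h1 : ⌊u + y⌋ ≤ ⌊u + t + y'⌋ := Int.floor_le_floor (by linarith)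
  have h2 : ⌊u + t + x'⌋ ≤ ⌊u + x⌋ := Int.floor_le_floor (by linarith)
  omega

/-- For a `1`-periodic set `B`, the measure of `[0,1) ∩ (B - t)` does not depend on `t`. -/
lemma grimmett_aux_shift_measure {B : Set ℝ} (hB : MeasurableSet B)
    (hper : ∀ x : ℝ, x + 1 ∈ B ↔ x ∈ B) (t : ℝ) :
    MeasureTheory.volume (Set.Ico (0 : ℝ) 1 ∩ (fun u => u + t) ⁻¹' B)
      = MeasureTheory.volume (Set.Ico (0 : ℝ) 1 ∩ B) := by
  have hperZ : ∀ (k : ℤ) (x : ℝ), x + (k : ℝ) ∈ B ↔ x ∈ B := by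
    intro k
    induction k using Int.induction_on with
    | zero => simp
    | succ m ih =>
        intro x
        have e : x + ((m : ℤ) + 1 : ℤ) = (x + (m : ℤ)) + 1 := by push_cast; ring
        rw [show ((((m : ℤ) + 1 : ℤ) : ℝ)) = ((m : ℤ) : ℝ) + 1 by push_cast; ring]
        rw [show x + (((m : ℤ) : ℝ) + 1) = (x + ((m : ℤ) : ℝ)) + 1 by ring]
        rw [hper, ih]
    | pred m ih =>
        intro x
        have := hper (x + ((-(m : ℤ) - 1 : ℤ) : ℝ))
        rw [show x + ((-(m : ℤ) - 1 : ℤ) : ℝ) + 1 = x + ((-(m : ℤ) : ℤ) : ℝ) by push_cast; ring]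
          at this
        rw [← this, ih]
  -- replace t by its fractional part
  have hpre : (fun u : ℝ => u + t) ⁻¹' B = (fun u : ℝ => u + Int.fract t) ⁻¹' B := by
    ext x
    simp only [Set.mem_preimage]
    have e : x + t = (x + Int.fract t) + (⌊t⌋ : ℝ) := by
      rw [Int.fract]; ring
    rw [e, hperZ]
  rw [hpre]
  set τ := Int.fract t with hτdef
  have h0τ : 0 ≤ τ := Int.fract_nonneg t
  have hτ1 : τ < 1 := Int.fract_lt_one t
  set C : Set ℝ := (fun u : ℝ => u + τ) ⁻¹' B with hC
  have hCmeas : MeasurableSet C := hB.preimage (measurable_add_const τ)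
  have hsplit : Set.Ico (0 : ℝ) 1 ∩ C
      = (Set.Ico (0 : ℝ) (1 - τ) ∩ C) ∪ (Set.Ico (1 - τ) 1 ∩ C) := by
    rw [← Set.union_inter_distrib_right, Set.Ico_union_Ico_eq_Ico (by linarith) (by linarith)]
  have hdisj : Disjoint (Set.Ico (0 : ℝ) (1 - τ) ∩ C) (Set.Ico (1 - τ) 1 ∩ C) :=
    (Set.Ico_disjoint_Ico_same).mono Set.inter_subset_left Set.inter_subset_left
  have hE1 : Set.Ico (0 : ℝ) (1 - τ) ∩ C = (fun u : ℝ => u + τ) ⁻¹' (Set.Ico τ 1 ∩ B) := by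
    ext x
    simp only [hC, Set.mem_inter_iff, Set.mem_Ico, Set.mem_preimage]
    constructor
    · rintro ⟨⟨a, b⟩, c⟩; exact ⟨⟨by linarith, by linarith⟩, c⟩
    · rintro ⟨⟨a, b⟩, c⟩; exact ⟨⟨by linarith, by linarith⟩, c⟩
  have hE2 : Set.Ico (1 - τ) 1 ∩ C = (fun u : ℝ => u + τ) ⁻¹' (Set.Ico 1 (1 + τ) ∩ B) := by
    ext x
    simp only [hC, Set.mem_inter_iff, Set.mem_Ico, Set.mem_preimage]
    constructor
    · rintro ⟨⟨a, b⟩, c⟩; exact ⟨⟨by linarith, by linarith⟩, c⟩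
    · rintro ⟨⟨a, b⟩, c⟩; exact ⟨⟨by linarith, by linarith⟩, c⟩
  have hE3 : Set.Ico (1 : ℝ) (1 + τ) ∩ B = (fun u : ℝ => u + (-1)) ⁻¹' (Set.Ico 0 τ ∩ B) := by
    ext y
    simp only [Set.mem_inter_iff, Set.mem_Ico, Set.mem_preimage]
    have hy : y + (-1) ∈ B ↔ y ∈ B := by
      have h1 := hper (y + (-1))
      rw [show y + (-1) + 1 = y by ring] at h1
      exact h1.symm
    constructor
    · rintro ⟨⟨a, b⟩, c⟩
      exact ⟨⟨by linarith, by linarith⟩, hy.mpr c⟩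
    · rintro ⟨⟨a, b⟩, c⟩
      exact ⟨⟨by linarith, by linarith⟩, hy.mp c⟩
  have hmeas2 : MeasurableSet (Set.Ico (1 - τ) 1 ∩ C) := measurableSet_Ico.inter hCmeas
  rw [hsplit, MeasureTheory.measure_union hdisj hmeas2, hE1, hE2,
    MeasureTheory.measure_preimage_add_right, MeasureTheory.measure_preimage_add_right, hE3,
    MeasureTheory.measure_preimage_add_right, add_comm,
    ← MeasureTheory.measure_union
      ((Set.Ico_disjoint_Ico_same (a := (0:ℝ)) (b := τ) (c := 1)).mono
        Set.inter_subset_left Set.inter_subset_left)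
      (measurableSet_Ico.inter hB),
    ← Set.union_inter_distrib_right,
    Set.Ico_union_Ico_eq_Ico (by linarith) (by linarith)]

/-- Grimmett's method satisfies threshold monotonicity for coalitions of size
at most 2. -/
theorem grimmett_threshold_monotone_two {n : ℕ} (q q' : Fin n → ℝ) (h : ℕ)
    (hq0 : ∀ i, 0 ≤ q i) (hq'0 : ∀ i, 0 ≤ q' i)
    (hqs : ∑ i, q i = (h : ℝ)) (hq's : ∑ i, q' i = (h : ℝ))
    (T : Finset (Fin n)) (hT : T.card ≤ 2)
    (hup : ∀ i ∈ T, q i ≤ q' i) (hdown : ∀ i ∉ T, q' i ≤ q i) (θ : ℕ) :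
    MeasureTheory.volume
        {u : ℝ | u ∈ Set.Ico (0 : ℝ) 1 ∧ (θ : ℤ) ≤ ∑ i ∈ T, grimmettSeats q u i} ≤
      MeasureTheory.volume
        {u : ℝ | u ∈ Set.Ico (0 : ℝ) 1 ∧ (θ : ℤ) ≤ ∑ i ∈ T, grimmettSeats q' u i} := by
  classical
  -- choose the shift `t`
  obtain ⟨t, ht⟩ : ∃ t : ℝ, ∀ i ∈ T,
      (∑ k ∈ univ.filter (fun k : Fin n => k ≤ i), q k)
        ≤ (∑ k ∈ univ.filter (fun k : Fin n => k ≤ i), q' k) + t ∧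
      (∑ k ∈ univ.filter (fun k : Fin n => k < i), q' k) + t
        ≤ ∑ k ∈ univ.filter (fun k : Fin n => k < i), q k := by
    rcases T.eq_empty_or_nonempty with rfl | hne
    · exact ⟨0, by simp⟩
    · refine ⟨T.sup' hne (fun i =>
        (∑ k ∈ univ.filter (fun k : Fin n => k ≤ i), q k)
          - ∑ k ∈ univ.filter (fun k : Fin n => k ≤ i), q' k), ?_⟩
      intro i hi
      constructor
      · have := Finset.le_sup' (fun i =>
          (∑ k ∈ univ.filter (fun k : Fin n => k ≤ i), q k)
            - ∑ k ∈ univ.filter (fun k : Fin n => k ≤ i), q' k) hi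
        linarith
      · have hle : T.sup' hne (fun i =>
            (∑ k ∈ univ.filter (fun k : Fin n => k ≤ i), q k)
              - ∑ k ∈ univ.filter (fun k : Fin n => k ≤ i), q' k)
            ≤ (∑ k ∈ univ.filter (fun k : Fin n => k < i), q k)
              - ∑ k ∈ univ.filter (fun k : Fin n => k < i), q' k := by
          apply Finset.sup'_le
          intro j hj
          have := grimmett_aux_key q q' h hqs hq's T hT hup hdown hj hi
          linarith
        linarith
  -- pointwise domination after the shift
  have hpoint : ∀ u : ℝ, ∑ i ∈ T, grimmettSeats q u i ≤ ∑ i ∈ T, grimmettSeats q' (u + t) i := by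
    intro u
    apply Finset.sum_le_sum
    intro i hi
    unfold grimmettSeats
    exact grimmett_aux_floor_mono (ht i hi).2 (ht i hi).1
  -- the target set and its properties
  set B : Set ℝ := {u : ℝ | (θ : ℤ) ≤ ∑ i ∈ T, grimmettSeats q' u i} with hBdef
  have hmeasf : Measurable fun u : ℝ => ∑ i ∈ T, grimmettSeats q' u i := by
    apply Finset.measurable_sum
    intro i _
    unfold grimmettSeats
    exact (Int.measurable_floor.comp (measurable_id.add_const _)).sub
      (Int.measurable_floor.comp (measurable_id.add_const _))
  have hBmeas : MeasurableSet B := by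
    have : B = (fun u : ℝ => ∑ i ∈ T, grimmettSeats q' u i) ⁻¹' Set.Ici (θ : ℤ) := rfl
    rw [this]
    exact hmeasf (MeasurableSet.of_discrete)
  have hBper : ∀ x : ℝ, x + 1 ∈ B ↔ x ∈ B := by
    intro x
    have : ∑ i ∈ T, grimmettSeats q' (x + 1) i = ∑ i ∈ T, grimmettSeats q' x i := by
      apply Finset.sum_congr rfl
      intro i _
      unfold grimmettSeats
      rw [show x + 1 + ∑ j ∈ univ.filter (fun j : Fin n => j ≤ i), q' j
          = (x + ∑ j ∈ univ.filter (fun j : Fin n => j ≤ i), q' j) + 1 by ring,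
        show x + 1 + ∑ j ∈ univ.filter (fun j : Fin n => j < i), q' j
          = (x + ∑ j ∈ univ.filter (fun j : Fin n => j < i), q' j) + 1 by ring,
        Int.floor_add_one, Int.floor_add_one]
      ring
    simp only [hBdef, Set.mem_setOf_eq, this]
  -- assemble
  have hfin : MeasureTheory.volume (Set.Ico (0 : ℝ) 1 ∩ B)
      = MeasureTheory.volume
        {u : ℝ | u ∈ Set.Ico (0 : ℝ) 1 ∧ (θ : ℤ) ≤ ∑ i ∈ T, grimmettSeats q' u i} := rfl
  rw [← hfin, ← grimmett_aux_shift_measure hBmeas hBper t]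
  apply MeasureTheory.measure_mono
  rintro u ⟨hu, hθ⟩
  exact ⟨hu, le_trans hθ (hpoint u)⟩
end

section
/- No apportionment method for n = 4 parties satisfying quota and ex-ante proportionality satisfies vote-count threshold monotonicity or pairwise vote-count threshold monotonicity. Concretely, for every such method a there exist vote vectors v, v' ∈ ℝ_{≥0}^{4} with positive totals, a house size h ∈ ℕ, disjoint coalitions T₁, T₂ ⊆ {1,2,3,4} with v'_i ≥ v_i for all i ∈ T₁ and v'_i ≤ v_i for all i ∉ T₁ (in particular for all i ∈ T₂), and thresholds θ₁, θ₂ ∈ ℕ such that P_{α∼a(v',h)}[∑_{i∈T₁} α_i ≥ θ₁] < P_{α∼a(v,h)}[∑_{i∈T₁} α_i ≥ θ₁] and P_{α∼a(v',h)}[∑_{i∈T₂} α_i ≥ θ₂] > P_{α∼a(v,h)}[∑_{i∈T₂} α_i ≥ θ₂]. -/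
open Finset

/-- Party `i`'s standard quota `q_i = h·v_i / ∑_j v_j`. -/
noncomputable def stdQuota {n : ℕ} (v : Fin n → ℝ) (h : ℕ) (i : Fin n) : ℝ :=
  (h : ℝ) * v i / ∑ j, v j

/-- An apportionment method: for every vote vector `v ∈ ℝ_{≥0}^n` with positive
total and house size `h`, `a v h` is a probability distribution over vectors
`α ∈ ℕ^n` summing to `h`. -/
def IsApportionment (n : ℕ) (a : (Fin n → ℝ) → ℕ → (Fin n → ℕ) → ℝ) : Prop :=
  ∀ (v : Fin n → ℝ) (h : ℕ), (∀ i, 0 ≤ v i) → 0 < ∑ j, v j →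
    (∀ α, 0 ≤ a v h α) ∧
    (∑' α : Fin n → ℕ, a v h α = 1) ∧
    (∀ α : Fin n → ℕ, a v h α ≠ 0 → ∑ i, α i = h)

/-- Quota: ex post, every party gets its lower or upper quota. -/
def SatisfiesQuota (n : ℕ) (a : (Fin n → ℝ) → ℕ → (Fin n → ℕ) → ℝ) : Prop :=
  ∀ (v : Fin n → ℝ) (h : ℕ), (∀ i, 0 ≤ v i) → 0 < ∑ j, v j →
    ∀ α : Fin n → ℕ, a v h α ≠ 0 →
      ∀ i, α i = ⌊stdQuota v h i⌋₊ ∨ α i = ⌈stdQuota v h i⌉₊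

/-- Ex-ante proportionality: each party's expected number of seats equals its
standard quota. -/
def ExAnteProportional (n : ℕ) (a : (Fin n → ℝ) → ℕ → (Fin n → ℕ) → ℝ) : Prop :=
  ∀ (v : Fin n → ℝ) (h : ℕ), (∀ i, 0 ≤ v i) → 0 < ∑ j, v j →
    ∀ i, ∑' α : Fin n → ℕ, a v h α * (α i : ℝ) = stdQuota v h i

/-- Full support: every apportionment vector satisfying quota receives positive
probability. -/
def FullSupport (n : ℕ) (a : (Fin n → ℝ) → ℕ → (Fin n → ℕ) → ℝ) : Prop :=
  ∀ (v : Fin n → ℝ) (h : ℕ), (∀ i, 0 ≤ v i) → 0 < ∑ j, v j →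
    ∀ α : Fin n → ℕ, (∑ i, α i = h) →
      (∀ i, α i = ⌊stdQuota v h i⌋₊ ∨ α i = ⌈stdQuota v h i⌉₊) → 0 < a v h α

/-! ### Auxiliary machinery for the impossibility proof -/

/-- The common support structure of all vote vectors used in the proof:
floors `(11, 0, 1, 1)`, each party at its floor or ceiling, total `15`. -/
private def Supp (α : Fin 4 → ℕ) : Prop :=
  (α 0 = 11 ∨ α 0 = 12) ∧ (α 1 = 0 ∨ α 1 = 1) ∧ (α 2 = 1 ∨ α 2 = 2) ∧
  (α 3 = 1 ∨ α 3 = 2) ∧ α 0 + α 1 + α 2 + α 3 = 15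

private lemma summable_aux (e f : (Fin 4 → ℕ) → ℝ)
    (hsupp : ∀ α, e α ≠ 0 → Supp α) (hf : ∀ α, e α = 0 → f α = 0) :
    Summable f := by
  apply summable_of_ne_finset_zero
    (s := Fintype.piFinset (fun _ : Fin 4 => Finset.range 16))
  intro α hα
  rcases eq_or_ne (e α) 0 with h | h
  · exact hf α h
  · exfalso
    apply hα
    rw [Fintype.mem_piFinset]
    obtain ⟨h0, hb1, hb2, hb3, hb4⟩ := hsupp α h
    intro i
    rw [Finset.mem_range]
    fin_cases i <;> simp_all <;> omega

private lemma extract (e : (Fin 4 → ℕ) → ℝ) (c : ℝ)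
    (hsupp : ∀ α, e α ≠ 0 → Supp α)
    (htotal : ∑' α, e α = 1)
    (hmarg : ∑' α, e α * (α 0 : ℝ) = c) :
    ∑' α, (if α 0 = 12 then e α else 0) = c - 11 := by
  have hse : Summable e := summable_aux e e hsupp (fun α h => h)
  have hsi : Summable (fun α => if α 0 = 12 then e α else 0) :=
    summable_aux e _ hsupp (fun α h => by simp [h])
  have hpt : ∀ α, e α * (α 0 : ℝ) =
      11 * e α + (if α 0 = 12 then e α else 0) := by
    intro α
    rcases eq_or_ne (e α) 0 with h | h
    · simp [h]
    · obtain ⟨h0, -, -, -, -⟩ := hsupp α h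
      rcases h0 with h0 | h0 <;> rw [h0] <;> norm_num <;> ring
  have h2 : ∑' α, (11 * e α + (if α 0 = 12 then e α else 0)) = c := by
    rw [← tsum_congr hpt]; exact hmarg
  rw [Summable.tsum_add (hse.mul_left 11) hsi, tsum_mul_left, htotal] at h2
  linarith

private lemma complement_tsum (e : (Fin 4 → ℕ) → ℝ)
    (c1 c2 : (Fin 4 → ℕ) → Prop) [∀ α, Decidable (c1 α)] [∀ α, Decidable (c2 α)]
    (hsupp : ∀ α, e α ≠ 0 → Supp α) (htotal : ∑' α, e α = 1)
    (hiff : ∀ α, Supp α → (c2 α ↔ ¬ c1 α)) :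
    ∑' α, (if c2 α then e α else 0) = 1 - ∑' α, (if c1 α then e α else 0) := by
  have hs1 : Summable (fun α => if c1 α then e α else 0) :=
    summable_aux e _ hsupp (fun α h => by simp [h])
  have hs2 : Summable (fun α => if c2 α then e α else 0) :=
    summable_aux e _ hsupp (fun α h => by simp [h])
  have hpt : ∀ α, ((if c2 α then e α else 0) + (if c1 α then e α else 0)) = e α := by
    intro α
    rcases eq_or_ne (e α) 0 with h | h
    · simp [h]
    · have hif := hiff α (hsupp α h)
      by_cases hc : c1 α
      · simp [hc, hif]
      · simp [hc, hif]
  have h2 : ∑' α, ((if c2 α then e α else 0) + (if c1 α then e α else 0)) = 1 := by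
    rw [tsum_congr hpt]; exact htotal
  rw [Summable.tsum_add hs2 hs1] at h2
  linarith

/-- Package the consequences of the axioms for one of our vote vectors. -/
private lemma world_facts
    (a : (Fin 4 → ℝ) → ℕ → (Fin 4 → ℕ) → ℝ)
    (h1 : IsApportionment 4 a) (h2 : SatisfiesQuota 4 a) (h3 : ExAnteProportional 4 a)
    (v : Fin 4 → ℝ) (hv0 : ∀ i, 0 ≤ v i) (hvs : 0 < ∑ j, v j)
    (q0 q1 q2 q3 : ℝ)
    (hsq0 : stdQuota v 15 0 = q0) (hsq1 : stdQuota v 15 1 = q1)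
    (hsq2 : stdQuota v 15 2 = q2) (hsq3 : stdQuota v 15 3 = q3)
    (hb0 : ⌊q0⌋₊ = 11 ∧ ⌈q0⌉₊ = 12) (hb1 : ⌊q1⌋₊ = 0 ∧ ⌈q1⌉₊ = 1)
    (hb2 : ⌊q2⌋₊ = 1 ∧ ⌈q2⌉₊ = 2) (hb3 : ⌊q3⌋₊ = 1 ∧ ⌈q3⌉₊ = 2) :
    (∀ α, a v 15 α ≠ 0 → Supp α) ∧ (∀ α, 0 ≤ a v 15 α) ∧ (∑' α, a v 15 α = 1) ∧
    (∑' α, (if α 0 = 12 then a v 15 α else 0) = q0 - 11) := by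
  obtain ⟨hpos, htot, hsum⟩ := h1 v 15 hv0 hvs
  have hsupp : ∀ α, a v 15 α ≠ 0 → Supp α := by
    intro α hα
    have hq := h2 v 15 hv0 hvs α hα
    have h15 : ∑ i, α i = 15 := hsum α hα
    have e0 := hq 0; rw [hsq0, hb0.1, hb0.2] at e0
    have e1 := hq 1; rw [hsq1, hb1.1, hb1.2] at e1
    have e2 := hq 2; rw [hsq2, hb2.1, hb2.2] at e2
    have e3 := hq 3; rw [hsq3, hb3.1, hb3.2] at e3
    rw [Fin.sum_univ_four] at h15
    exact ⟨e0, e1, e2, e3, h15⟩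
  have hmarg := h3 v 15 hv0 hvs 0
  rw [hsq0] at hmarg
  exact ⟨hsupp, hpos, htot, extract _ _ hsupp htot hmarg⟩

/-! Vote vectors used in the proof.  `wv` has standard quotas
`(11.5, 0.5, 1.5, 1.5)` for house size `15`; the `uv j` have quotas
`(11.15, …)` obtained by rescaling suitable quota vectors by `129/125`. -/

private noncomputable def wv : Fin 4 → ℝ := ![23/2, 1/2, 3/2, 3/2]
private noncomputable def uv1 : Fin 4 → ℝ := ![28767/2500, 2451/2500, 3741/2500, 3741/2500]
private noncomputable def uv2 : Fin 4 → ℝ := ![28767/2500, 1161/2500, 5031/2500, 3741/2500]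
private noncomputable def uv3 : Fin 4 → ℝ := ![28767/2500, 1161/2500, 3741/2500, 5031/2500]

/-- The final step: given the two worlds' distributions and the relevant
pointwise facts, produce the two strict threshold inequalities. -/
private lemma final_pair (ew eu : (Fin 4 → ℕ) → ℝ)
    (wsupp : ∀ α, ew α ≠ 0 → Supp α) (wtot : ∑' α, ew α = 1)
    (usupp : ∀ α, eu α ≠ 0 → Supp α) (upos : ∀ α, 0 ≤ eu α) (utot : ∑' α, eu α = 1)
    (uX : ∑' α, (if α 0 = 12 then eu α else 0) = 3/20)
    (c1 c2 : (Fin 4 → ℕ) → ℕ) (θ₁ θ₂ : ℕ)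
    (himp : ∀ α, Supp α → θ₁ ≤ c1 α → α 0 = 12)
    (hcompl : ∀ α, Supp α → (θ₂ ≤ c2 α ↔ ¬ θ₁ ≤ c1 α))
    (hwY : 1/6 ≤ ∑' α, (if θ₁ ≤ c1 α then ew α else 0)) :
    (∑' α, (if θ₁ ≤ c1 α then eu α else 0)) <
      (∑' α, (if θ₁ ≤ c1 α then ew α else 0)) ∧
    (∑' α, (if θ₂ ≤ c2 α then ew α else 0)) <
      (∑' α, (if θ₂ ≤ c2 α then eu α else 0)) := by
  have hsYu : Summable (fun α => if θ₁ ≤ c1 α then eu α else 0) :=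
    summable_aux eu _ usupp (fun α h => by simp [h])
  have hsXu : Summable (fun α => if α 0 = 12 then eu α else 0) :=
    summable_aux eu _ usupp (fun α h => by simp [h])
  have hle : (∑' α, (if θ₁ ≤ c1 α then eu α else 0)) ≤ 3/20 := by
    rw [← uX]
    refine Summable.tsum_le_tsum (fun α => ?_) hsYu hsXu
    rcases eq_or_ne (eu α) 0 with h | h
    · simp [h]
    · have hS := usupp α h
      split_ifs with hA hB hB
      · exact le_refl _
      · exact absurd (himp α hS hA) hB
      · exact upos α
      · exact le_refl _
  have hwZ := complement_tsum ew (fun α => θ₁ ≤ c1 α) (fun α => θ₂ ≤ c2 α)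
    wsupp wtot hcompl
  have huZ := complement_tsum eu (fun α => θ₁ ≤ c1 α) (fun α => θ₂ ≤ c2 α)
    usupp utot hcompl
  have h₁ : (∑' α, (if θ₁ ≤ c1 α then eu α else 0)) <
      (∑' α, (if θ₁ ≤ c1 α then ew α else 0)) := by
    calc (∑' α, (if θ₁ ≤ c1 α then eu α else 0)) ≤ 3/20 := hle
    _ < 1/6 := by norm_num
    _ ≤ _ := hwY
  refine ⟨h₁, ?_⟩
  rw [hwZ, huZ]
  linarith

/-- No apportionment method (for 4 parties) satisfying quota and ex-ante
proportionality satisfies vote-count threshold monotonicity or its pairwise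
variant: there is a pair of vote vectors, with votes weakly increasing on a
coalition `T₁` and weakly decreasing elsewhere (in particular on a disjoint
coalition `T₂`), for which `T₁`'s threshold probability strictly decreases
while `T₂`'s strictly increases. -/
theorem no_vote_count_threshold_monotone
    (a : (Fin 4 → ℝ) → ℕ → (Fin 4 → ℕ) → ℝ)
    (h1 : IsApportionment 4 a) (h2 : SatisfiesQuota 4 a)
    (h3 : ExAnteProportional 4 a) :
    ∃ (v v' : Fin 4 → ℝ) (h : ℕ) (T₁ T₂ : Finset (Fin 4)) (θ₁ θ₂ : ℕ),
      (∀ i, 0 ≤ v i) ∧ 0 < ∑ j, v j ∧ (∀ i, 0 ≤ v' i) ∧ 0 < ∑ j, v' j ∧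
      Disjoint T₁ T₂ ∧
      (∀ i ∈ T₁, v i ≤ v' i) ∧
      (∀ i ∉ T₁, v' i ≤ v i) ∧
      (∑' α : Fin 4 → ℕ, if θ₁ ≤ ∑ i ∈ T₁, α i then a v' h α else 0) <
        (∑' α : Fin 4 → ℕ, if θ₁ ≤ ∑ i ∈ T₁, α i then a v h α else 0) ∧
      (∑' α : Fin 4 → ℕ, if θ₂ ≤ ∑ i ∈ T₂, α i then a v h α else 0) <
        (∑' α : Fin 4 → ℕ, if θ₂ ≤ ∑ i ∈ T₂, α i then a v' h α else 0) := by
  -- basic numeric facts about the four vote vectors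
  have hw0 : ∀ i, 0 ≤ wv i := by intro i; fin_cases i <;> norm_num [wv]
  have hwsum : ∑ j, wv j = 15 := by simp [wv, Fin.sum_univ_four]; norm_num
  have hws : 0 < ∑ j, wv j := by rw [hwsum]; norm_num
  have hu10 : ∀ i, 0 ≤ uv1 i := by intro i; fin_cases i <;> norm_num [uv1]
  have hu1sum : ∑ j, uv1 j = 387/25 := by simp [uv1, Fin.sum_univ_four]; norm_num
  have hu1s : 0 < ∑ j, uv1 j := by rw [hu1sum]; norm_num
  have hu20 : ∀ i, 0 ≤ uv2 i := by intro i; fin_cases i <;> norm_num [uv2]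
  have hu2sum : ∑ j, uv2 j = 387/25 := by simp [uv2, Fin.sum_univ_four]; norm_num
  have hu2s : 0 < ∑ j, uv2 j := by rw [hu2sum]; norm_num
  have hu30 : ∀ i, 0 ≤ uv3 i := by intro i; fin_cases i <;> norm_num [uv3]
  have hu3sum : ∑ j, uv3 j = 387/25 := by simp [uv3, Fin.sum_univ_four]; norm_num
  have hu3s : 0 < ∑ j, uv3 j := by rw [hu3sum]; norm_num
  -- floor/ceiling facts for the quota values that occur
  have fcA : ⌊(23/2 : ℝ)⌋₊ = 11 ∧ ⌈(23/2 : ℝ)⌉₊ = 12 := by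
    constructor
    · rw [Nat.floor_eq_iff (by norm_num)]; norm_num
    · rw [Nat.ceil_eq_iff (by norm_num)]; norm_num
  have fcA' : ⌊(223/20 : ℝ)⌋₊ = 11 ∧ ⌈(223/20 : ℝ)⌉₊ = 12 := by
    constructor
    · rw [Nat.floor_eq_iff (by norm_num)]; norm_num
    · rw [Nat.ceil_eq_iff (by norm_num)]; norm_num
  have fcB : ⌊(1/2 : ℝ)⌋₊ = 0 ∧ ⌈(1/2 : ℝ)⌉₊ = 1 := by
    constructor
    · rw [Nat.floor_eq_iff (by norm_num)]; norm_num
    · rw [Nat.ceil_eq_iff (by norm_num)]; norm_num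
  have fcB' : ⌊(19/20 : ℝ)⌋₊ = 0 ∧ ⌈(19/20 : ℝ)⌉₊ = 1 := by
    constructor
    · rw [Nat.floor_eq_iff (by norm_num)]; norm_num
    · rw [Nat.ceil_eq_iff (by norm_num)]; norm_num
  have fcB'' : ⌊(9/20 : ℝ)⌋₊ = 0 ∧ ⌈(9/20 : ℝ)⌉₊ = 1 := by
    constructor
    · rw [Nat.floor_eq_iff (by norm_num)]; norm_num
    · rw [Nat.ceil_eq_iff (by norm_num)]; norm_num
  have fcC : ⌊(3/2 : ℝ)⌋₊ = 1 ∧ ⌈(3/2 : ℝ)⌉₊ = 2 := by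
    constructor
    · rw [Nat.floor_eq_iff (by norm_num)]; norm_num
    · rw [Nat.ceil_eq_iff (by norm_num)]; norm_num
  have fcC' : ⌊(29/20 : ℝ)⌋₊ = 1 ∧ ⌈(29/20 : ℝ)⌉₊ = 2 := by
    constructor
    · rw [Nat.floor_eq_iff (by norm_num)]; norm_num
    · rw [Nat.ceil_eq_iff (by norm_num)]; norm_num
  have fcC'' : ⌊(39/20 : ℝ)⌋₊ = 1 ∧ ⌈(39/20 : ℝ)⌉₊ = 2 := by
    constructor
    · rw [Nat.floor_eq_iff (by norm_num)]; norm_num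
    · rw [Nat.ceil_eq_iff (by norm_num)]; norm_num
  -- standard quotas of the four worlds
  have wq0 : stdQuota wv 15 0 = 23/2 := by
    simp only [stdQuota, hwsum]; norm_num [wv]
  have wq1 : stdQuota wv 15 1 = 1/2 := by
    simp only [stdQuota, hwsum]; norm_num [wv]
  have wq2 : stdQuota wv 15 2 = 3/2 := by
    simp only [stdQuota, hwsum]; simp [wv] <;> norm_num
  have wq3 : stdQuota wv 15 3 = 3/2 := by
    simp only [stdQuota, hwsum]; simp [wv] <;> norm_num
  have u1q0 : stdQuota uv1 15 0 = 223/20 := by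
    simp only [stdQuota, hu1sum]; norm_num [uv1]
  have u1q1 : stdQuota uv1 15 1 = 19/20 := by
    simp only [stdQuota, hu1sum]; norm_num [uv1]
  have u1q2 : stdQuota uv1 15 2 = 29/20 := by
    simp only [stdQuota, hu1sum]; simp [uv1] <;> norm_num
  have u1q3 : stdQuota uv1 15 3 = 29/20 := by
    simp only [stdQuota, hu1sum]; simp [uv1] <;> norm_num
  have u2q0 : stdQuota uv2 15 0 = 223/20 := by
    simp only [stdQuota, hu2sum]; norm_num [uv2]
  have u2q1 : stdQuota uv2 15 1 = 9/20 := by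
    simp only [stdQuota, hu2sum]; norm_num [uv2]
  have u2q2 : stdQuota uv2 15 2 = 39/20 := by
    simp only [stdQuota, hu2sum]; simp [uv2] <;> norm_num
  have u2q3 : stdQuota uv2 15 3 = 29/20 := by
    simp only [stdQuota, hu2sum]; simp [uv2] <;> norm_num
  have u3q0 : stdQuota uv3 15 0 = 223/20 := by
    simp only [stdQuota, hu3sum]; norm_num [uv3]
  have u3q1 : stdQuota uv3 15 1 = 9/20 := by
    simp only [stdQuota, hu3sum]; norm_num [uv3]
  have u3q2 : stdQuota uv3 15 2 = 29/20 := by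
    simp only [stdQuota, hu3sum]; simp [uv3] <;> norm_num
  have u3q3 : stdQuota uv3 15 3 = 39/20 := by
    simp only [stdQuota, hu3sum]; simp [uv3] <;> norm_num
  -- the structural facts in each world
  obtain ⟨wsupp, wpos, wtot, wX⟩ :=
    world_facts a h1 h2 h3 wv hw0 hws _ _ _ _ wq0 wq1 wq2 wq3 fcA fcB fcC fcC
  obtain ⟨u1supp, u1pos, u1tot, u1X⟩ :=
    world_facts a h1 h2 h3 uv1 hu10 hu1s _ _ _ _ u1q0 u1q1 u1q2 u1q3 fcA' fcB' fcC' fcC'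
  obtain ⟨u2supp, u2pos, u2tot, u2X⟩ :=
    world_facts a h1 h2 h3 uv2 hu20 hu2s _ _ _ _ u2q0 u2q1 u2q2 u2q3 fcA' fcB'' fcC'' fcC'
  obtain ⟨u3supp, u3pos, u3tot, u3X⟩ :=
    world_facts a h1 h2 h3 uv3 hu30 hu3s _ _ _ _ u3q0 u3q1 u3q2 u3q3 fcA' fcB'' fcC' fcC''
  have wX' : ∑' α, (if α 0 = 12 then a wv 15 α else 0) = 1/2 := by
    rw [wX]; norm_num
  have u1X' : ∑' α, (if α 0 = 12 then a uv1 15 α else 0) = 3/20 := by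
    rw [u1X]; norm_num
  have u2X' : ∑' α, (if α 0 = 12 then a uv2 15 α else 0) = 3/20 := by
    rw [u2X]; norm_num
  have u3X' : ∑' α, (if α 0 = 12 then a uv3 15 α else 0) = 3/20 := by
    rw [u3X]; norm_num
  -- splitting the event `α 0 = 12` in the `wv`-world
  have hsY1 : Summable (fun α : Fin 4 → ℕ => if 13 ≤ α 0 + α 1 then a wv 15 α else 0) :=
    summable_aux _ _ wsupp (fun α h => by simp [h])
  have hsY2 : Summable (fun α : Fin 4 → ℕ => if 14 ≤ α 0 + α 2 then a wv 15 α else 0) :=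
    summable_aux _ _ wsupp (fun α h => by simp [h])
  have hsY3 : Summable (fun α : Fin 4 → ℕ => if 14 ≤ α 0 + α 3 then a wv 15 α else 0) :=
    summable_aux _ _ wsupp (fun α h => by simp [h])
  have hdec : ∀ α : Fin 4 → ℕ, (if α 0 = 12 then a wv 15 α else 0) =
      (if 13 ≤ α 0 + α 1 then a wv 15 α else 0) +
      (if 14 ≤ α 0 + α 2 then a wv 15 α else 0) +
      (if 14 ≤ α 0 + α 3 then a wv 15 α else 0) := by
    intro α
    rcases eq_or_ne (a wv 15 α) 0 with h | h
    · simp [h]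
    · obtain ⟨s0, s1, s2, s3, s4⟩ := wsupp α h
      split_ifs <;> first | (exfalso; omega) | ring1
  have hsplit : (∑' α, (if 13 ≤ α 0 + α 1 then a wv 15 α else 0)) +
      (∑' α, (if 14 ≤ α 0 + α 2 then a wv 15 α else 0)) +
      (∑' α, (if 14 ≤ α 0 + α 3 then a wv 15 α else 0)) = 1/2 := by
    have hT : ∑' α, (if α 0 = 12 then a wv 15 α else 0) =
        ∑' α, ((if 13 ≤ α 0 + α 1 then a wv 15 α else 0) +
          (if 14 ≤ α 0 + α 2 then a wv 15 α else 0) +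
          (if 14 ≤ α 0 + α 3 then a wv 15 α else 0)) := tsum_congr hdec
    rw [wX'] at hT
    rw [Summable.tsum_add (hsY1.add hsY2) hsY3, Summable.tsum_add hsY1 hsY2] at hT
    linarith
  -- one of the three events has probability at least 1/6
  have hcase : (1/6 : ℝ) ≤ (∑' α, (if 13 ≤ α 0 + α 1 then a wv 15 α else 0)) ∨
      (1/6 : ℝ) ≤ (∑' α, (if 14 ≤ α 0 + α 2 then a wv 15 α else 0)) ∨
      (1/6 : ℝ) ≤ (∑' α, (if 14 ≤ α 0 + α 3 then a wv 15 α else 0)) := by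
    by_contra hc
    push_neg at hc
    obtain ⟨hc1, hc2, hc3⟩ := hc
    linarith
  rcases hcase with hY | hY | hY
  · -- coalition {0,1} against {2,3}
    have hp1 : ∀ α : Fin 4 → ℕ, ∑ i ∈ ({0, 1} : Finset (Fin 4)), α i = α 0 + α 1 :=
      fun α => Finset.sum_pair (by decide)
    have hp2 : ∀ α : Fin 4 → ℕ, ∑ i ∈ ({2, 3} : Finset (Fin 4)), α i = α 2 + α 3 :=
      fun α => Finset.sum_pair (by decide)
    have key := final_pair (a wv 15) (a uv1 15) wsupp wtot u1supp u1pos u1tot u1X'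
      (fun α => α 0 + α 1) (fun α => α 2 + α 3) 13 3
      (by intro α hS hle; obtain ⟨s0, s1, s2, s3, s4⟩ := hS; omega)
      (by intro α hS; obtain ⟨s0, s1, s2, s3, s4⟩ := hS; omega)
      hY
    refine ⟨wv, uv1, 15, {0, 1}, {2, 3}, 13, 3, hw0, hws, hu10, hu1s, by decide,
      ?_, ?_, ?_, ?_⟩
    · intro i hi; fin_cases hi <;> norm_num [wv, uv1]
    · intro i hi
      fin_cases i <;>
        first
          | exact absurd (by decide) hi
          | norm_num [wv, uv1]
    · simp only [hp1]; exact key.1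
    · simp only [hp2]; exact key.2
  · -- coalition {0,2} against {1,3}
    have hp1 : ∀ α : Fin 4 → ℕ, ∑ i ∈ ({0, 2} : Finset (Fin 4)), α i = α 0 + α 2 :=
      fun α => Finset.sum_pair (by decide)
    have hp2 : ∀ α : Fin 4 → ℕ, ∑ i ∈ ({1, 3} : Finset (Fin 4)), α i = α 1 + α 3 :=
      fun α => Finset.sum_pair (by decide)
    have key := final_pair (a wv 15) (a uv2 15) wsupp wtot u2supp u2pos u2tot u2X'
      (fun α => α 0 + α 2) (fun α => α 1 + α 3) 14 2
      (by intro α hS hle; obtain ⟨s0, s1, s2, s3, s4⟩ := hS; omega)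
      (by intro α hS; obtain ⟨s0, s1, s2, s3, s4⟩ := hS; omega)
      hY
    refine ⟨wv, uv2, 15, {0, 2}, {1, 3}, 14, 2, hw0, hws, hu20, hu2s, by decide,
      ?_, ?_, ?_, ?_⟩
    · intro i hi; fin_cases hi <;> simp [wv, uv2] <;> norm_num
    · intro i hi
      fin_cases i <;>
        first
          | exact absurd (by decide) hi
          | norm_num [wv, uv2]
    · simp only [hp1]; exact key.1
    · simp only [hp2]; exact key.2
  · -- coalition {0,3} against {1,2}
    have hp1 : ∀ α : Fin 4 → ℕ, ∑ i ∈ ({0, 3} : Finset (Fin 4)), α i = α 0 + α 3 :=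
      fun α => Finset.sum_pair (by decide)
    have hp2 : ∀ α : Fin 4 → ℕ, ∑ i ∈ ({1, 2} : Finset (Fin 4)), α i = α 1 + α 2 :=
      fun α => Finset.sum_pair (by decide)
    have key := final_pair (a wv 15) (a uv3 15) wsupp wtot u3supp u3pos u3tot u3X'
      (fun α => α 0 + α 3) (fun α => α 1 + α 2) 14 2
      (by intro α hS hle; obtain ⟨s0, s1, s2, s3, s4⟩ := hS; omega)
      (by intro α hS; obtain ⟨s0, s1, s2, s3, s4⟩ := hS; omega)
      hY
    refine ⟨wv, uv3, 15, {0, 3}, {1, 2}, 14, 2, hw0, hws, hu30, hu3s, by decide,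
      ?_, ?_, ?_, ?_⟩
    · intro i hi; fin_cases hi <;> simp [wv, uv3] <;> norm_num
    · intro i hi
      fin_cases i <;>
        first
          | exact absurd (by decide) hi
          | norm_num [wv, uv3]
    · simp only [hp1]; exact key.1
    · simp only [hp2]; exact key.2
end

section
/- Let r be a neutral rounding rule for n parties. Suppose that for every integer k with 1 ≤ k ≤ n−1 and all residue vectors p, p' ∈ [0,1)^n each summing to k such that p'_1 ≥ p_1, p'_n ≤ p_n, and p'_i = p_i for all 1 < i < n, it holds that P[r(p') = {1,…,k}] ≥ P[r(p) = {1,…,k}]. Then r satisfies selection monotonicity. -/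
open Finset

/-- Neutrality: permuting the parties permutes the distribution accordingly. -/
def NeutralRule (n : ℕ) (r : (Fin n → ℝ) → Finset (Fin n) → ℝ) : Prop :=
  ∀ (σ : Equiv.Perm (Fin n)) (p : Fin n → ℝ) (k : ℕ),
    (∀ i, 0 ≤ p i ∧ p i < 1) → (∑ i, p i = (k : ℝ)) →
    ∀ A : Finset (Fin n), r (fun j => p (σ.symm j)) (A.image σ) = r p A

lemma aux_filter_card {n k : ℕ} (hkn : k ≤ n) :
    (univ.filter fun i : Fin n => i.val < k).card = k := by
  have : (univ.filter fun i : Fin n => i.val < k)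
      = Finset.map (Fin.castLEEmb hkn) univ := by
    ext i
    simp only [mem_filter, mem_univ, true_and, Finset.mem_map]
    constructor
    · intro h
      exact ⟨⟨i.val, h⟩, by simp [Fin.castLEEmb, Fin.castLE, Fin.ext_iff]⟩
    · rintro ⟨a, -, rfl⟩
      simp [Fin.castLEEmb, Fin.castLE]
  rw [this, card_map, card_univ, Fintype.card_fin]

lemma aux_app {α : Type*} [DecidableEq α] {T T' : Finset α}
    (e : {x // x ∈ T} ≃ {x // x ∈ T'}) (f : {x // x ∉ T} ≃ {x // x ∉ T'}) (x : α) :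
    Equiv.subtypeCongr e f x = if h : x ∈ T then (e ⟨x, h⟩ : α) else (f ⟨x, h⟩ : α) := by
  by_cases h : x ∈ T <;> simp [Equiv.subtypeCongr, h]

lemma single_step {n : ℕ} (r : (Fin n → ℝ) → Finset (Fin n) → ℝ)
    (hneutral : NeutralRule n r)
    (hcond : ∀ (k : ℕ) (hk1 : 1 ≤ k) (hkn : k ≤ n - 1) (p p' : Fin n → ℝ),
      (∀ i, 0 ≤ p i ∧ p i < 1) → (∀ i, 0 ≤ p' i ∧ p' i < 1) →
      (∑ i, p i = (k : ℝ)) → (∑ i, p' i = (k : ℝ)) →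
      p ⟨0, Nat.lt_of_lt_of_le hk1 (hkn.trans (Nat.sub_le n 1))⟩ ≤ p' ⟨0, Nat.lt_of_lt_of_le hk1 (hkn.trans (Nat.sub_le n 1))⟩ →
      p' ⟨n - 1, Nat.sub_lt (Nat.lt_of_lt_of_le hk1 (hkn.trans (Nat.sub_le n 1))) Nat.one_pos⟩ ≤ p ⟨n - 1, Nat.sub_lt (Nat.lt_of_lt_of_le hk1 (hkn.trans (Nat.sub_le n 1))) Nat.one_pos⟩ →
      (∀ i : Fin n, 0 < i.val → i.val < n - 1 → p' i = p i) →
      r p (univ.filter fun i : Fin n => i.val < k) ≤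
        r p' (univ.filter fun i : Fin n => i.val < k))
    (k : ℕ) (p q : Fin n → ℝ)
    (hp : ∀ i, 0 ≤ p i ∧ p i < 1) (hq : ∀ i, 0 ≤ q i ∧ q i < 1)
    (hsp : ∑ i, p i = (k : ℝ)) (hsq : ∑ i, q i = (k : ℝ))
    (T : Finset (Fin n)) (hT : T.card = k) (i j : Fin n)
    (hi : i ∈ T) (hj : j ∉ T) (hij1 : p i ≤ q i) (hij2 : q j ≤ p j)
    (hrest : ∀ l, l ≠ i → l ≠ j → q l = p l) :
    r p T ≤ r q T := by
  have hk1 : 1 ≤ k := by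
    rw [← hT]; exact card_pos.2 ⟨i, hi⟩
  have hkn : k ≤ n - 1 := by
    have hsub : T ⊆ univ.erase j := fun x hx =>
      mem_erase.2 ⟨fun h => hj (h ▸ hx), mem_univ x⟩
    have := card_le_card hsub
    rwa [hT, card_erase_of_mem (mem_univ j), card_univ, Fintype.card_fin] at this
  have hn2 : 2 ≤ n := by omega
  set z : Fin n := ⟨0, by omega⟩ with hz_def
  set w : Fin n := ⟨n - 1, by omega⟩ with hw_def
  set T' : Finset (Fin n) := univ.filter fun l : Fin n => l.val < k with hT'_def
  have hT' : T'.card = k := aux_filter_card (by omega)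
  have hz : z ∈ T' := by simp [hT'_def, hz_def]; omega
  have hw : w ∉ T' := by simp [hT'_def, hw_def]; omega
  have c1 : Fintype.card {x : Fin n // x ∈ T} = k := by
    simpa using (Fintype.card_coe T).trans hT
  have c1' : Fintype.card {x : Fin n // x ∈ T'} = k := by
    simpa using (Fintype.card_coe T').trans hT'
  have c2 : Fintype.card {x : Fin n // x ∉ T} = n - k := by
    simp [Fintype.card_subtype_compl, c1]
  have c2' : Fintype.card {x : Fin n // x ∉ T'} = n - k := by
    simp [Fintype.card_subtype_compl, c1']
  let e0 : {x : Fin n // x ∈ T} ≃ {x : Fin n // x ∈ T'} :=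
    Fintype.equivOfCardEq (c1.trans c1'.symm)
  let e := e0.trans (Equiv.swap (e0 ⟨i, hi⟩) ⟨z, hz⟩)
  let f0 : {x : Fin n // x ∉ T} ≃ {x : Fin n // x ∉ T'} :=
    Fintype.equivOfCardEq (c2.trans c2'.symm)
  let f := f0.trans (Equiv.swap (f0 ⟨j, hj⟩) ⟨w, hw⟩)
  let σ : Equiv.Perm (Fin n) := Equiv.subtypeCongr e f
  have happ : ∀ x, σ x = if h : x ∈ T then (e ⟨x, h⟩ : Fin n) else (f ⟨x, h⟩ : Fin n) :=
    fun x => aux_app e f x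
  have hσi : σ i = z := by
    rw [happ, dif_pos hi]
    simp [e, Equiv.swap_apply_left]
  have hσj : σ j = w := by
    rw [happ, dif_neg hj]
    simp [f, Equiv.swap_apply_left]
  have hmemT' : ∀ x (hx : x ∈ T), σ x ∈ T' := by
    intro x hx
    rw [happ, dif_pos hx]
    exact (e ⟨x, hx⟩).2
  have himg : T.image σ = T' := by
    apply eq_of_subset_of_card_le
    · intro x hx
      obtain ⟨y, hy, rfl⟩ := mem_image.1 hx
      exact hmemT' y hy
    · rw [card_image_of_injective _ σ.injective, hT, hT']
  have hsymz : σ.symm z = i := by rw [Equiv.symm_apply_eq]; exact hσi.symm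
  have hsymw : σ.symm w = j := by rw [Equiv.symm_apply_eq]; exact hσj.symm
  have hneup := hneutral σ p k hp hsp T
  have hneuq := hneutral σ q k hq hsq T
  rw [himg] at hneup hneuq
  rw [← hneup, ← hneuq]
  refine hcond k hk1 hkn _ _ (fun l => hp _) (fun l => hq _) ?_ ?_ ?_ ?_ ?_
  · rw [Equiv.sum_comp σ.symm p]; exact hsp
  · rw [Equiv.sum_comp σ.symm q]; exact hsq
  · show p (σ.symm z) ≤ q (σ.symm z)
    rw [hsymz]; exact hij1
  · show q (σ.symm w) ≤ p (σ.symm w)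
    rw [hsymw]; exact hij2
  · intro l hl0 hln
    show q (σ.symm l) = p (σ.symm l)
    apply hrest
    · intro h
      have : l = z := by rw [← hsymz] at h; exact σ.symm.injective h
      rw [this] at hl0; simp [hz_def] at hl0
    · intro h
      have : l = w := by rw [← hsymw] at h; exact σ.symm.injective h
      rw [this] at hln; simp [hw_def] at hln

lemma transfer_chain {n : ℕ} (r : (Fin n → ℝ) → Finset (Fin n) → ℝ)
    (T : Finset (Fin n)) (k : ℕ) (hT : T.card = k)
    (single : ∀ (p q : Fin n → ℝ),
      (∀ i, 0 ≤ p i ∧ p i < 1) → (∀ i, 0 ≤ q i ∧ q i < 1) →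
      (∑ i, p i = (k : ℝ)) → (∑ i, q i = (k : ℝ)) →
      ∀ i j : Fin n, i ∈ T → j ∉ T → p i ≤ q i → q j ≤ p j →
      (∀ l, l ≠ i → l ≠ j → q l = p l) → r p T ≤ r q T) :
    ∀ (m : ℕ) (p p' : Fin n → ℝ),
      (∀ i, 0 ≤ p i ∧ p i < 1) → (∀ i, 0 ≤ p' i ∧ p' i < 1) →
      (∑ i, p i = (k : ℝ)) → (∑ i, p' i = (k : ℝ)) →
      (∀ i ∈ T, p i ≤ p' i) → (∀ i ∉ T, p' i ≤ p i) →
      (univ.filter fun l => p l ≠ p' l).card ≤ m → r p T ≤ r p' T := by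
  intro m
  induction m with
  | zero =>
    intro p p' hp hp' hs hs' hle hge hcard
    have hfe : p = p' := by
      funext l
      by_contra h
      have : l ∈ univ.filter fun l => p l ≠ p' l := by simp [h]
      have := card_pos.2 ⟨l, this⟩
      omega
    rw [hfe]
  | succ m ih =>
    intro p p' hp hp' hs hs' hle hge hcard
    by_cases hS : (univ.filter fun l => p l ≠ p' l) = ∅
    · have hfe : p = p' := by
        funext l
        by_contra h
        have : l ∈ univ.filter fun l => p l ≠ p' l := by simp [h]
        rw [hS] at this; exact absurd this (notMem_empty l)
      rw [hfe]
    · obtain ⟨l0, hl0⟩ := nonempty_of_ne_empty hS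
      rw [mem_filter] at hl0
      -- total difference is zero
      have hzero : ∑ l ∈ T, (p' l - p l) + ∑ l ∈ Tᶜ, (p' l - p l) = 0 := by
        rw [Finset.sum_add_sum_compl, Finset.sum_sub_distrib, hs, hs']; ring
      have hTpos : 0 < ∑ l ∈ T, (p' l - p l) := by
        rcases lt_or_eq_of_le (Finset.sum_nonneg fun l hl => sub_nonneg.2 (hle l hl)) with h | h
        · exact h
        · exfalso
          have hTz : ∀ l ∈ T, p' l - p l = 0 := by
            intro l hl
            have := (Finset.sum_eq_zero_iff_of_nonneg
              (fun l hl => sub_nonneg.2 (hle l hl))).1 h.symm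
            exact this l hl
          have hCz : ∀ l ∈ Tᶜ, p' l - p l = 0 := by
            have hc : ∑ l ∈ Tᶜ, (p l - p' l) = 0 := by
              have h2 : ∑ l ∈ Tᶜ, (p' l - p l) = 0 := by linarith
              rw [Finset.sum_sub_distrib] at h2 ⊢
              linarith
            intro l hl
            have := (Finset.sum_eq_zero_iff_of_nonneg
              (fun l hl => sub_nonneg.2 (hge l (by simpa using hl)))).1 hc l hl
            linarith
          by_cases hmem : l0 ∈ T
          · exact hl0.2 (by linarith [hTz l0 hmem])
          · exact hl0.2 (by linarith [hCz l0 (mem_compl.2 hmem)])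
      have hCneg : ∑ l ∈ Tᶜ, (p' l - p l) < 0 := by linarith
      obtain ⟨i, hiT, hilt⟩ : ∃ i ∈ T, 0 < p' i - p i := by
        by_contra h
        push_neg at h
        have : ∑ l ∈ T, (p' l - p l) ≤ 0 := Finset.sum_nonpos h
        linarith
      obtain ⟨j, hjC, hjlt⟩ : ∃ j ∈ Tᶜ, p' j - p j < 0 := by
        by_contra h
        push_neg at h
        have : 0 ≤ ∑ l ∈ Tᶜ, (p' l - p l) := Finset.sum_nonneg h
        linarith
      have hjT : j ∉ T := by simpa using hjC
      have hij : i ≠ j := fun h => hjT (h ▸ hiT)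
      set δ : ℝ := min (p' i - p i) (p j - p' j) with hδ_def
      have hδpos : 0 < δ := lt_min hilt (by linarith)
      have hδi : δ ≤ p' i - p i := min_le_left _ _
      have hδj : δ ≤ p j - p' j := min_le_right _ _
      set q : Fin n → ℝ :=
        fun l => p l + (if l = i then δ else 0) - (if l = j then δ else 0) with hq_def
      have hqi : q i = p i + δ := by simp [hq_def, hij]
      have hqj : q j = p j - δ := by simp [hq_def, hij.symm]
      have hqo : ∀ l, l ≠ i → l ≠ j → q l = p l := by
        intro l h1 h2; simp [hq_def, h1, h2]
      have hqb : ∀ l, 0 ≤ q l ∧ q l < 1 := by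
        intro l
        by_cases h1 : l = i
        · subst h1
          rw [hqi]
          constructor
          · linarith [(hp l).1]
          · linarith [(hp' l).2]
        by_cases h2 : l = j
        · subst h2
          rw [hqj]
          constructor
          · linarith [(hp' l).1]
          · linarith [(hp l).2]
        · rw [hqo l h1 h2]; exact hp l
      have hqs : ∑ l, q l = (k : ℝ) := by
        rw [hq_def]
        rw [Finset.sum_sub_distrib, Finset.sum_add_distrib]
        rw [Finset.sum_ite_eq' univ i fun _ => δ, Finset.sum_ite_eq' univ j fun _ => δ]
        simp [hs]
      have step1 : r p T ≤ r q T := by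
        refine single p q hp hqb hs hqs i j hiT hjT ?_ ?_ hqo
        · rw [hqi]; linarith
        · rw [hqj]; linarith
      have hsub : (univ.filter fun l => q l ≠ p' l) ⊆ univ.filter fun l => p l ≠ p' l := by
        intro l hl
        rw [mem_filter] at hl ⊢
        refine ⟨mem_univ _, ?_⟩
        by_cases h1 : l = i
        · subst h1; intro h; exact absurd h (by linarith)
        by_cases h2 : l = j
        · subst h2; intro h; exact absurd h (by linarith)
        · rw [hqo l h1 h2] at hl; exact hl.2
      have hstrict : (univ.filter fun l => q l ≠ p' l) ⊂ univ.filter fun l => p l ≠ p' l := by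
        refine ⟨hsub, ?_⟩
        intro hback
        rcases le_total (p' i - p i) (p j - p' j) with h | h
        · have hqi' : q i = p' i := by rw [hqi, hδ_def, min_eq_left h]; ring
          have : i ∈ univ.filter fun l => p l ≠ p' l := by
            simp only [mem_filter, mem_univ, true_and]; intro hc; linarith
          have := hback this
          rw [mem_filter] at this
          exact this.2 hqi'
        · have hqj' : q j = p' j := by rw [hqj, hδ_def, min_eq_right h]; ring
          have : j ∈ univ.filter fun l => p l ≠ p' l := by
            simp only [mem_filter, mem_univ, true_and]; intro hc; linarith
          have := hback this
          rw [mem_filter] at this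
          exact this.2 hqj'
      have hcard' : (univ.filter fun l => q l ≠ p' l).card ≤ m := by
        have := card_lt_card hstrict
        omega
      have hle' : ∀ l ∈ T, q l ≤ p' l := by
        intro l hl
        by_cases h1 : l = i
        · subst h1; rw [hqi]; linarith
        by_cases h2 : l = j
        · exact absurd (h2 ▸ hl) hjT
        · rw [hqo l h1 h2]; exact hle l hl
      have hge' : ∀ l ∉ T, p' l ≤ q l := by
        intro l hl
        by_cases h1 : l = i
        · exact absurd hiT (h1 ▸ hl)
        by_cases h2 : l = j
        · subst h2; rw [hqj]; linarith
        · rw [hqo l h1 h2]; exact hge l hl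
      exact le_trans step1 (ih q p' hqb hp' hqs hs' hle' hge' hcard')

/-- For a neutral rounding rule, monotonicity under transfers between the first
and last party (with respect to selecting `{1,…,k}`) implies full selection
monotonicity. -/
theorem neutral_two_point_implies_selection_monotone {n : ℕ}
    (r : (Fin n → ℝ) → Finset (Fin n) → ℝ)
    (hr : IsRoundingRule n r) (hneutral : NeutralRule n r)
    (hcond : ∀ (k : ℕ) (hk1 : 1 ≤ k) (hkn : k ≤ n - 1) (p p' : Fin n → ℝ),
      (∀ i, 0 ≤ p i ∧ p i < 1) → (∀ i, 0 ≤ p' i ∧ p' i < 1) →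
      (∑ i, p i = (k : ℝ)) → (∑ i, p' i = (k : ℝ)) →
      p ⟨0, by omega⟩ ≤ p' ⟨0, by omega⟩ →
      p' ⟨n - 1, by omega⟩ ≤ p ⟨n - 1, by omega⟩ →
      (∀ i : Fin n, 0 < i.val → i.val < n - 1 → p' i = p i) →
      r p (univ.filter fun i : Fin n => i.val < k) ≤
        r p' (univ.filter fun i : Fin n => i.val < k)) :
    SelectionMonotone n r := by
  intro k p p' hp hp' hs hs' T hT hle hge
  have single := fun p q hpb hqb hsp hsq i j hi hj h1 h2 hrest =>
    single_step r hneutral hcond k p q hpb hqb hsp hsq T hT i j hi hj h1 h2 hrest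
  exact transfer_chain r T k hT single _ p p' hp hp' hs hs' hle hge le_rfl
end

section
/- No rounding rule for n = 4 parties satisfies the following strengthened monotonicity axiom: for all residue vectors p, p' ∈ [0,1)^4 summing to the same integer k and every k-element subset T of {1,2,3,4} such that p'_i ≥ p_i for all i ∈ T (with no condition on the residues of parties outside T), it holds that P[r(p') = T] ≥ P[r(p) = T]. -/
open Finset

lemma filter_sum_mem (f : Finset (Fin 4) → ℝ) (hs : ∀ A : Finset (Fin 4), f A ≠ 0 → A.card = 2)
    (i : Fin 4) (A1 A2 A3 : Finset (Fin 4))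
    (hch : ∀ A : Finset (Fin 4), i ∈ A → A.card = 2 → A = A1 ∨ A = A2 ∨ A = A3)
    (hsub : ({A1, A2, A3} : Finset (Finset (Fin 4))) ⊆
      (univ : Finset (Finset (Fin 4))).filter (fun A => i ∈ A))
    (h12 : A1 ≠ A2) (h13 : A1 ≠ A3) (h23 : A2 ≠ A3) :
    ∑ A ∈ (univ : Finset (Finset (Fin 4))).filter (fun A => i ∈ A), f A
      = f A1 + f A2 + f A3 := by
  rw [← Finset.sum_subset hsub]
  · rw [show ({A1,A2,A3} : Finset (Finset (Fin 4))) = insert A1 (insert A2 {A3}) from rfl,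
      Finset.sum_insert (by simp [h12, h13]), Finset.sum_insert (by simp [h23]),
      Finset.sum_singleton, add_assoc]
  · intro A hA hA'
    by_contra h
    have hcard := hs A h
    have hi : i ∈ A := (Finset.mem_filter.mp hA).2
    rcases hch A hi hcard with h'|h'|h' <;> subst h' <;> simp at hA'

/-- No rounding rule for 4 parties satisfies the strengthened monotonicity
axiom in which only the residues inside `T` are required to increase. -/
theorem no_strengthened_selection_monotone
    (r : (Fin 4 → ℝ) → Finset (Fin 4) → ℝ) (hr : IsRoundingRule 4 r) :
    ¬ (∀ (k : ℕ) (p p' : Fin 4 → ℝ),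
        (∀ i, 0 ≤ p i ∧ p i < 1) → (∀ i, 0 ≤ p' i ∧ p' i < 1) →
        (∑ i, p i = (k : ℝ)) → (∑ i, p' i = (k : ℝ)) →
        ∀ T : Finset (Fin 4), T.card = k →
          (∀ i ∈ T, p i ≤ p' i) → r p T ≤ r p' T) := by
  intro hmono
  set v1 : Fin 4 → ℝ := ![3/4, 1/2, 1/4, 1/2] with hv1def
  set v2 : Fin 4 → ℝ := ![3/4, 1/2, 1/2, 1/4] with hv2def
  set v3 : Fin 4 → ℝ := ![3/4, 1/2, 3/4, 0] with hv3def
  set v4 : Fin 4 → ℝ := ![3/4, 3/4, 0, 1/2] with hv4def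
  set v5 : Fin 4 → ℝ := ![3/4, 3/4, 1/4, 1/4] with hv5def
  set v6 : Fin 4 → ℝ := ![3/4, 3/4, 1/2, 0] with hv6def
  have hb1 : ∀ i, 0 ≤ v1 i ∧ v1 i < 1 := by intro i; fin_cases i <;> norm_num [hv1def]
  have hb2 : ∀ i, 0 ≤ v2 i ∧ v2 i < 1 := by intro i; fin_cases i <;> norm_num [hv2def]
  have hb3 : ∀ i, 0 ≤ v3 i ∧ v3 i < 1 := by intro i; fin_cases i <;> norm_num [hv3def]
  have hb4 : ∀ i, 0 ≤ v4 i ∧ v4 i < 1 := by intro i; fin_cases i <;> norm_num [hv4def]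
  have hb5 : ∀ i, 0 ≤ v5 i ∧ v5 i < 1 := by intro i; fin_cases i <;> norm_num [hv5def]
  have hb6 : ∀ i, 0 ≤ v6 i ∧ v6 i < 1 := by intro i; fin_cases i <;> norm_num [hv6def]
  have hS1 : ∑ i, v1 i = ((2:ℕ) : ℝ) := by rw [Fin.sum_univ_four]; norm_num [hv1def, Matrix.cons_val_two, Matrix.cons_val_three, Matrix.vecHead, Matrix.vecTail]
  have hS2 : ∑ i, v2 i = ((2:ℕ) : ℝ) := by rw [Fin.sum_univ_four]; norm_num [hv2def, Matrix.cons_val_two, Matrix.cons_val_three, Matrix.vecHead, Matrix.vecTail]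
  have hS3 : ∑ i, v3 i = ((2:ℕ) : ℝ) := by rw [Fin.sum_univ_four]; norm_num [hv3def, Matrix.cons_val_two, Matrix.cons_val_three, Matrix.vecHead, Matrix.vecTail]
  have hS4 : ∑ i, v4 i = ((2:ℕ) : ℝ) := by rw [Fin.sum_univ_four]; norm_num [hv4def, Matrix.cons_val_two, Matrix.cons_val_three, Matrix.vecHead, Matrix.vecTail]
  have hS5 : ∑ i, v5 i = ((2:ℕ) : ℝ) := by rw [Fin.sum_univ_four]; norm_num [hv5def, Matrix.cons_val_two, Matrix.cons_val_three, Matrix.vecHead, Matrix.vecTail]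
  have hS6 : ∑ i, v6 i = ((2:ℕ) : ℝ) := by rw [Fin.sum_univ_four]; norm_num [hv6def, Matrix.cons_val_two, Matrix.cons_val_three, Matrix.vecHead, Matrix.vecTail]
  obtain ⟨hn1, -, hc1, hm1⟩ := hr v1 2 hb1 hS1
  obtain ⟨hn2, -, hc2, hm2⟩ := hr v2 2 hb2 hS2
  obtain ⟨hn3, -, hc3, hm3⟩ := hr v3 2 hb3 hS3
  obtain ⟨hn4, -, hc4, hm4⟩ := hr v4 2 hb4 hS4
  obtain ⟨hn5, -, hc5, hm5⟩ := hr v5 2 hb5 hS5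
  obtain ⟨hn6, -, hc6, hm6⟩ := hr v6 2 hb6 hS6
  -- pair-marginal equations
  have e1_0 : r v1 {0,1} + r v1 {0,2} + r v1 {0,3} = 3/4 := by
    have h := hm1 0
    rwa [filter_sum_mem _ hc1 0 {0,1} {0,2} {0,3} (by decide) (by decide) (by decide)
      (by decide) (by decide), show v1 0 = 3/4 by norm_num [hv1def]] at h
  have e2_0 : r v2 {0,1} + r v2 {0,2} + r v2 {0,3} = 3/4 := by
    have h := hm2 0
    rwa [filter_sum_mem _ hc2 0 {0,1} {0,2} {0,3} (by decide) (by decide) (by decide)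
      (by decide) (by decide), show v2 0 = 3/4 by norm_num [hv2def]] at h
  have e3_0 : r v3 {0,1} + r v3 {0,2} + r v3 {0,3} = 3/4 := by
    have h := hm3 0
    rwa [filter_sum_mem _ hc3 0 {0,1} {0,2} {0,3} (by decide) (by decide) (by decide)
      (by decide) (by decide), show v3 0 = 3/4 by norm_num [hv3def]] at h
  have e3_1 : r v3 {0,1} + r v3 {1,2} + r v3 {1,3} = 1/2 := by
    have h := hm3 1
    rwa [filter_sum_mem _ hc3 1 {0,1} {1,2} {1,3} (by decide) (by decide) (by decide)
      (by decide) (by decide), show v3 1 = 1/2 by norm_num [hv3def]] at h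
  have e3_2 : r v3 {0,2} + r v3 {1,2} + r v3 {2,3} = 3/4 := by
    have h := hm3 2
    rwa [filter_sum_mem _ hc3 2 {0,2} {1,2} {2,3} (by decide) (by decide) (by decide)
      (by decide) (by decide), show v3 2 = 3/4 by norm_num [hv3def, Matrix.cons_val_two, Matrix.cons_val_three, Matrix.vecHead, Matrix.vecTail]] at h
  have e3_3 : r v3 {0,3} + r v3 {1,3} + r v3 {2,3} = 0 := by
    have h := hm3 3
    rwa [filter_sum_mem _ hc3 3 {0,3} {1,3} {2,3} (by decide) (by decide) (by decide)
      (by decide) (by decide), show v3 3 = 0 by norm_num [hv3def, Matrix.cons_val_two, Matrix.cons_val_three, Matrix.vecHead, Matrix.vecTail]] at h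
  have e4_1 : r v4 {0,1} + r v4 {1,2} + r v4 {1,3} = 3/4 := by
    have h := hm4 1
    rwa [filter_sum_mem _ hc4 1 {0,1} {1,2} {1,3} (by decide) (by decide) (by decide)
      (by decide) (by decide), show v4 1 = 3/4 by norm_num [hv4def]] at h
  have e4_2 : r v4 {0,2} + r v4 {1,2} + r v4 {2,3} = 0 := by
    have h := hm4 2
    rwa [filter_sum_mem _ hc4 2 {0,2} {1,2} {2,3} (by decide) (by decide) (by decide)
      (by decide) (by decide), show v4 2 = 0 by norm_num [hv4def, Matrix.cons_val_two, Matrix.cons_val_three, Matrix.vecHead, Matrix.vecTail]] at h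
  have e4_3 : r v4 {0,3} + r v4 {1,3} + r v4 {2,3} = 1/2 := by
    have h := hm4 3
    rwa [filter_sum_mem _ hc4 3 {0,3} {1,3} {2,3} (by decide) (by decide) (by decide)
      (by decide) (by decide), show v4 3 = 1/2 by norm_num [hv4def, Matrix.cons_val_two, Matrix.cons_val_three, Matrix.vecHead, Matrix.vecTail]] at h
  have e5_0 : r v5 {0,1} + r v5 {0,2} + r v5 {0,3} = 3/4 := by
    have h := hm5 0
    rwa [filter_sum_mem _ hc5 0 {0,1} {0,2} {0,3} (by decide) (by decide) (by decide)
      (by decide) (by decide), show v5 0 = 3/4 by norm_num [hv5def]] at h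
  have e6_0 : r v6 {0,1} + r v6 {0,2} + r v6 {0,3} = 3/4 := by
    have h := hm6 0
    rwa [filter_sum_mem _ hc6 0 {0,1} {0,2} {0,3} (by decide) (by decide) (by decide)
      (by decide) (by decide), show v6 0 = 3/4 by norm_num [hv6def]] at h
  have e6_1 : r v6 {0,1} + r v6 {1,2} + r v6 {1,3} = 3/4 := by
    have h := hm6 1
    rwa [filter_sum_mem _ hc6 1 {0,1} {1,2} {1,3} (by decide) (by decide) (by decide)
      (by decide) (by decide), show v6 1 = 3/4 by norm_num [hv6def]] at h
  have e6_2 : r v6 {0,2} + r v6 {1,2} + r v6 {2,3} = 1/2 := by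
    have h := hm6 2
    rwa [filter_sum_mem _ hc6 2 {0,2} {1,2} {2,3} (by decide) (by decide) (by decide)
      (by decide) (by decide), show v6 2 = 1/2 by norm_num [hv6def, Matrix.cons_val_two, Matrix.cons_val_three, Matrix.vecHead, Matrix.vecTail]] at h
  have e6_3 : r v6 {0,3} + r v6 {1,3} + r v6 {2,3} = 0 := by
    have h := hm6 3
    rwa [filter_sum_mem _ hc6 3 {0,3} {1,3} {2,3} (by decide) (by decide) (by decide)
      (by decide) (by decide), show v6 3 = 0 by norm_num [hv6def, Matrix.cons_val_two, Matrix.cons_val_three, Matrix.vecHead, Matrix.vecTail]] at h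
  -- r p T depends only on p restricted to T
  have ideq : ∀ (p q : Fin 4 → ℝ), (∀ i, 0 ≤ p i ∧ p i < 1) → (∀ i, 0 ≤ q i ∧ q i < 1) →
      (∑ i, p i = ((2:ℕ):ℝ)) → (∑ i, q i = ((2:ℕ):ℝ)) → ∀ T : Finset (Fin 4), T.card = 2 →
      (∀ i ∈ T, p i = q i) → r p T = r q T := by
    intro p q hp hq hsp hsq T hT h
    exact le_antisymm (hmono 2 p q hp hq hsp hsq T hT fun i hi => (h i hi).le)
      (hmono 2 q p hq hp hsq hsp T hT fun i hi => (h i hi).ge)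
  have id1 : r v1 {0,1} = r v3 {0,1} := ideq v1 v3 hb1 hb3 hS1 hS3 {0,1} (by decide)
    (by intro i hi; fin_cases hi <;> norm_num [hv1def, hv3def])
  have id2 : r v2 {0,1} = r v3 {0,1} := ideq v2 v3 hb2 hb3 hS2 hS3 {0,1} (by decide)
    (by intro i hi; fin_cases hi <;> norm_num [hv2def, hv3def])
  have id3 : r v1 {0,2} = r v5 {0,2} := ideq v1 v5 hb1 hb5 hS1 hS5 {0,2} (by decide)
    (by intro i hi; fin_cases hi <;> norm_num [hv1def, hv5def, Matrix.cons_val_two, Matrix.cons_val_three, Matrix.vecHead, Matrix.vecTail])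
  have id4 : r v1 {0,3} = r v4 {0,3} := ideq v1 v4 hb1 hb4 hS1 hS4 {0,3} (by decide)
    (by intro i hi; fin_cases hi <;> norm_num [hv1def, hv4def, Matrix.cons_val_two, Matrix.cons_val_three, Matrix.vecHead, Matrix.vecTail])
  have id5 : r v2 {0,2} = r v6 {0,2} := ideq v2 v6 hb2 hb6 hS2 hS6 {0,2} (by decide)
    (by intro i hi; fin_cases hi <;> norm_num [hv2def, hv6def, Matrix.cons_val_two, Matrix.cons_val_three, Matrix.vecHead, Matrix.vecTail])
  have id6 : r v2 {0,3} = r v5 {0,3} := ideq v2 v5 hb2 hb5 hS2 hS5 {0,3} (by decide)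
    (by intro i hi; fin_cases hi <;> norm_num [hv2def, hv5def, Matrix.cons_val_two, Matrix.cons_val_three, Matrix.vecHead, Matrix.vecTail])
  have id7 : r v3 {0,3} = r v6 {0,3} := ideq v3 v6 hb3 hb6 hS3 hS6 {0,3} (by decide)
    (by intro i hi; fin_cases hi <;> norm_num [hv3def, hv6def, Matrix.cons_val_two, Matrix.cons_val_three, Matrix.vecHead, Matrix.vecTail])
  have id8 : r v4 {0,1} = r v6 {0,1} := ideq v4 v6 hb4 hb6 hS4 hS6 {0,1} (by decide)
    (by intro i hi; fin_cases hi <;> norm_num [hv4def, hv6def])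
  have id9 : r v5 {0,1} = r v6 {0,1} := ideq v5 v6 hb5 hb6 hS5 hS6 {0,1} (by decide)
    (by intro i hi; fin_cases hi <;> norm_num [hv5def, hv6def])
  -- nonnegativity facts
  have n3a := hn3 {0,3}; have n3b := hn3 {1,3}; have n3c := hn3 {2,3}
  have n4a := hn4 {0,2}; have n4b := hn4 {1,2}; have n4c := hn4 {2,3}
  have n6a := hn6 {0,3}; have n6b := hn6 {1,3}; have n6c := hn6 {2,3}
  linarith [e1_0, e2_0, e3_0, e3_1, e3_2, e3_3, e4_1, e4_2, e4_3, e5_0, e6_0, e6_1, e6_2, e6_3]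
end

section
/- Let p := (1/10, 7/10, 1/10, 6/10, 7/10, 8/10) and p' := (1/10, 9/10, 1/10, 9/10, 1/10, 9/10), both vectors in [0,1)^6 summing to k = 3, and let T := {1, 3, 5}. Then: (a) for every permutation σ of {1,…,6}, the Lebesgue measure of the set of shifts u ∈ [0,1) for which all three of parties 1, 3, and 5 are selected by systematic rounding with residues p and order σ equals 0; and (b) for the identity order, the Lebesgue measure of the set of shifts u ∈ [0,1) for which all three of parties 1, 3, and 5 are selected by systematic rounding with residues p' equals 1/10. Since p_i ≥ p'_i for all i ∈ T and p_i ≤ p'_i for all i ∉ T, this shows that systematic rounding—with any fixed order of the parties, and also with a uniformly random order—violates selection monotonicity. -/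
open Finset

/-- Systematic rounding with order `σ`, residues `p`, and shift `u` selects
party `i` iff the half-open interval of length `p i` at position `σ.symm i`
(after all intervals are shifted by `u`) contains an integer. -/
def sysSelected {n : ℕ} (σ : Equiv.Perm (Fin n)) (p : Fin n → ℝ) (u : ℝ)
    (i : Fin n) : Prop :=
  ∃ z : ℤ,
    u + ∑ m ∈ univ.filter (fun m : Fin n => m < σ.symm i), p (σ m) ≤ (z : ℝ) ∧
    (z : ℝ) < u + ∑ m ∈ univ.filter (fun m : Fin n => m ≤ σ.symm i), p (σ m)

private lemma keyReal (u : ℝ) (a b : ℕ) (za zb : ℤ)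
    (ha1 : u + (a:ℝ)/10 ≤ za) (ha2 : (za:ℝ) < u + (a:ℝ)/10 + 1/10)
    (hb1 : u + (b:ℝ)/10 ≤ zb) (hb2 : (zb:ℝ) < u + (b:ℝ)/10 + 1/10) :
    a % 10 = b % 10 := by
  have h1 : ((10*(za - zb) - ((a:ℤ) - b) : ℤ) : ℝ) < 1 := by push_cast; linarith
  have h2 : (-1 : ℝ) < ((10*(za - zb) - ((a:ℤ) - b) : ℤ) : ℝ) := by push_cast; linarith
  have h3 : (10*(za - zb) - ((a:ℤ) - b) : ℤ) = 0 := by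
    have := (by exact_mod_cast h1 : (10*(za - zb) - ((a:ℤ) - b) : ℤ) < 1)
    have := (by exact_mod_cast h2 : (-1:ℤ) < (10*(za - zb) - ((a:ℤ) - b) : ℤ))
    omega
  omega

private def wvec : Fin 6 → ℕ := ![1,7,1,6,7,8]

private def Nval (σ : Equiv.Perm (Fin 6)) (i : Fin 6) : ℕ :=
  ∑ m ∈ univ.filter (fun m => m < σ.symm i), wvec (σ m)

set_option maxRecDepth 100000 in
private lemma keyfact : ∀ σ : Equiv.Perm (Fin 6),
    Nval σ 0 % 10 ≠ Nval σ 2 % 10 := by decide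

private lemma pw : ∀ j : Fin 6,
    (![1/10, 7/10, 1/10, 6/10, 7/10, 8/10] : Fin 6 → ℝ) j = (wvec j : ℝ)/10 := by
  intro j; fin_cases j <;> norm_num [wvec]

private lemma filter_le_eq (k : Fin 6) :
    univ.filter (fun m : Fin 6 => m ≤ k) = insert k (univ.filter (fun m : Fin 6 => m < k)) := by
  ext m; simp [le_iff_lt_or_eq, or_comm]

private lemma sum_lt_eq (σ : Equiv.Perm (Fin 6)) (k : Fin 6) :
    ∑ m ∈ univ.filter (fun m : Fin 6 => m < k),
        (![1/10, 7/10, 1/10, 6/10, 7/10, 8/10] : Fin 6 → ℝ) (σ m)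
      = ((∑ m ∈ univ.filter (fun m : Fin 6 => m < k), wvec (σ m) : ℕ) : ℝ)/10 := by
  rw [Nat.cast_sum, Finset.sum_div]
  exact Finset.sum_congr rfl fun m _ => pw (σ m)

private lemma sel_bound (σ : Equiv.Perm (Fin 6)) (u : ℝ) (i : Fin 6)
    (hpi : (![1/10, 7/10, 1/10, 6/10, 7/10, 8/10] : Fin 6 → ℝ) i = 1/10)
    (h : sysSelected σ ![1/10, 7/10, 1/10, 6/10, 7/10, 8/10] u i) :
    ∃ z : ℤ, u + (Nval σ i : ℝ)/10 ≤ z ∧ (z:ℝ) < u + (Nval σ i : ℝ)/10 + 1/10 := by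
  obtain ⟨z, h1, h2⟩ := h
  refine ⟨z, ?_, ?_⟩
  · rw [Nval]; rw [sum_lt_eq] at h1; exact h1
  · rw [Nval]
    rw [filter_le_eq, Finset.sum_insert (by simp), Equiv.apply_symm_apply, hpi,
      sum_lt_eq] at h2
    linarith

private lemma sel0 (u : ℝ) : sysSelected 1 ![1/10, 9/10, 1/10, 9/10, 1/10, 9/10] u 0 ↔
    ∃ z : ℤ, u ≤ z ∧ (z:ℝ) < u + 1/10 := by
  simp [sysSelected, Finset.sum_filter, Fin.sum_univ_six, Equiv.Perm.one_symm]

private lemma sel2 (u : ℝ) : sysSelected 1 ![1/10, 9/10, 1/10, 9/10, 1/10, 9/10] u 2 ↔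
    ∃ z : ℤ, u + 1 ≤ z ∧ (z:ℝ) < u + 11/10 := by
  unfold sysSelected
  rw [Finset.sum_filter, Finset.sum_filter]
  simp [sysSelected, Finset.sum_filter, Fin.sum_univ_six, Equiv.Perm.one_symm]
  norm_num

private lemma sel4 (u : ℝ) : sysSelected 1 ![1/10, 9/10, 1/10, 9/10, 1/10, 9/10] u 4 ↔
    ∃ z : ℤ, u + 2 ≤ z ∧ (z:ℝ) < u + 21/10 := by
  unfold sysSelected
  rw [Finset.sum_filter, Finset.sum_filter]
  simp [sysSelected, Finset.sum_filter, Fin.sum_univ_six, Equiv.Perm.one_symm]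
  norm_num

/-- With residues `p = (0.1, 0.7, 0.1, 0.6, 0.7, 0.8)` (summing to `k = 3`) the
coalition `T = {1, 3, 5}` is selected with probability `0` under systematic
rounding for every order of the parties, whereas with residues
`p' = (0.1, 0.9, 0.1, 0.9, 0.1, 0.9)` (also summing to `3`) it is selected with
probability `1/10` under the identity order. Since `p i ≥ p' i` for `i ∈ T` and
`p i ≤ p' i` for `i ∉ T`, systematic rounding (with any fixed order, and with a
uniformly random order) violates selection monotonicity. -/
theorem systematic_rounding_counterexample :
    (∀ σ : Equiv.Perm (Fin 6),
      MeasureTheory.volume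
          {u : ℝ | u ∈ Set.Ico (0 : ℝ) 1 ∧
            ∀ i ∈ ({0, 2, 4} : Finset (Fin 6)),
              sysSelected σ ![1/10, 7/10, 1/10, 6/10, 7/10, 8/10] u i} = 0) ∧
    MeasureTheory.volume
        {u : ℝ | u ∈ Set.Ico (0 : ℝ) 1 ∧
          ∀ i ∈ ({0, 2, 4} : Finset (Fin 6)),
            sysSelected 1 ![1/10, 9/10, 1/10, 9/10, 1/10, 9/10] u i} = 1/10 := by
  constructor
  · intro σ
    have hempty : {u : ℝ | u ∈ Set.Ico (0 : ℝ) 1 ∧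
        ∀ i ∈ ({0, 2, 4} : Finset (Fin 6)),
          sysSelected σ ![1/10, 7/10, 1/10, 6/10, 7/10, 8/10] u i} = ∅ := by
      refine Set.eq_empty_iff_forall_notMem.mpr fun u hu => ?_
      obtain ⟨-, hsel⟩ := hu
      obtain ⟨z0, h00, h01⟩ := sel_bound σ u 0 rfl (hsel 0 (by decide))
      obtain ⟨z2, h20, h21⟩ := sel_bound σ u 2 rfl (hsel 2 (by decide))
      exact keyfact σ (keyReal u _ _ z0 z2 h00 h01 h20 h21)
    rw [hempty]; exact MeasureTheory.measure_empty
  · have hset : {u : ℝ | u ∈ Set.Ico (0 : ℝ) 1 ∧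
        ∀ i ∈ ({0, 2, 4} : Finset (Fin 6)),
          sysSelected 1 ![1/10, 9/10, 1/10, 9/10, 1/10, 9/10] u i}
        = {0} ∪ Set.Ioo (9/10 : ℝ) 1 := by
      ext u
      simp only [Set.mem_setOf_eq, Set.mem_Ico, Set.mem_union, Set.mem_singleton_iff,
        Set.mem_Ioo]
      constructor
      · rintro ⟨⟨hu0, hu1⟩, hsel⟩
        obtain ⟨z, hz1, hz2⟩ := (sel0 u).mp (hsel 0 (by decide))
        have hz0 : (0:ℤ) ≤ z := by exact_mod_cast le_trans hu0 hz1
        have hz3 : z < 2 := by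
          have : (z:ℝ) < 2 := by linarith
          exact_mod_cast this
        interval_cases z
        · left
          have : u ≤ (0:ℝ) := by exact_mod_cast hz1
          linarith
        · right
          refine ⟨?_, hu1⟩
          have : (1:ℝ) < u + 1/10 := by exact_mod_cast hz2
          linarith
      · intro h
        have hmem : u ∈ Set.Ico (0:ℝ) 1 := by
          rcases h with h | ⟨h1, h2⟩
          · simp [h]
          · exact ⟨by linarith, h2⟩
        refine ⟨hmem, ?_⟩
        intro i hi
        fin_cases hi
        · rw [sel0]
          rcases h with h | ⟨h1, h2⟩
          · exact ⟨0, by norm_num [h]⟩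
          · exact ⟨1, by push_cast; constructor <;> linarith⟩
        · rw [sel2]
          rcases h with h | ⟨h1, h2⟩
          · exact ⟨1, by norm_num [h]⟩
          · exact ⟨2, by push_cast; constructor <;> linarith⟩
        · rw [sel4]
          rcases h with h | ⟨h1, h2⟩
          · exact ⟨2, by norm_num [h]⟩
          · exact ⟨3, by push_cast; constructor <;> linarith⟩
    rw [hset,
      MeasureTheory.measure_union₀ measurableSet_Ioo.nullMeasurableSet
        (Disjoint.aedisjoint (by simp [Set.disjoint_singleton_left]; norm_num)),
      MeasureTheory.measure_singleton, zero_add, Real.volume_Ioo,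
      show (1:ℝ) - 9/10 = 1/10 by norm_num, ENNReal.ofReal_div_of_pos (by norm_num)]
    norm_num
end
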